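/- arXiv:2507.10600 — 7 statements merged into one kernel-verified Lean document; each statement's English description precedes it below -/
import Mathlib

section
/- If a ∈ A satisfies ax^2 = x and lim_{n→∞} ‖a^n − a x a^n‖^{1/n} = 0, then ax is an idempotent: (ax)^2 = ax. -/
theorem ax_idempotent {A : Type*} [NormedRing A] [NormedAlgebra ℂ A] [CompleteSpace A]
    (a x : A) (h1 : x = a * x ^ 2)
    (h2 : Filter.Tendsto (fun n : ℕ => ‖a ^ n - a * x * a ^ n‖ ^ ((1 : ℝ) / n))
      Filter.atTop (nhds 0)) :
    (a * x) ^ 2 = a * x := by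
  -- Step 1: x = a^n * x^(n+1)
  have key : ∀ n : ℕ, a ^ n * x ^ (n + 1) = x := by
    intro n
    induction n with
    | zero => simp
    | succ n ih =>
      have : a ^ (n + 1) * x ^ (n + 2) = a * (a ^ n * x ^ (n + 1)) * x := by
        rw [pow_succ' a, pow_succ x (n + 1)]
        noncomm_ring
      rw [this, ih]
      rw [show a * x * x = a * x ^ 2 by noncomm_ring, ← h1]
  have key2 : ∀ n : ℕ, a * x = a ^ (n + 1) * x ^ (n + 1) := by
    intro n
    conv_lhs => rw [← key n]
    rw [pow_succ' a]
    noncomm_ring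
  -- Step 2: the difference identity
  have diff : ∀ n : ℕ, (a * x) ^ 2 - a * x
      = -((a ^ (n + 1) - a * x * a ^ (n + 1)) * x ^ (n + 1)) := by
    intro n
    have h := key2 n
    calc (a * x) ^ 2 - a * x = (a * x - 1) * (a * x) := by noncomm_ring
    _ = (a * x - 1) * (a ^ (n + 1) * x ^ (n + 1)) := by rw [← h]
    _ = -((a ^ (n + 1) - a * x * a ^ (n + 1)) * x ^ (n + 1)) := by noncomm_ring
  -- Step 3: norm bound
  set C := (a * x) ^ 2 - a * x with hC
  set ε : ℝ := (2 * (‖x‖ + 1))⁻¹ with hε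
  have hx1 : (0 : ℝ) < ‖x‖ + 1 := by positivity
  have hεpos : 0 < ε := by positivity
  have hev : ∀ᶠ n : ℕ in Filter.atTop,
      ‖a ^ n - a * x * a ^ n‖ ^ ((1 : ℝ) / n) < ε := by
    have := h2.eventually (gt_mem_nhds hεpos)
    exact this
  have hbound : ∀ᶠ n : ℕ in Filter.atTop, ‖C‖ ≤ (1 / 2 : ℝ) ^ n := by
    filter_upwards [hev, Filter.eventually_ge_atTop 1] with n hn hn1
    obtain ⟨m, rfl⟩ : ∃ m, n = m + 1 := ⟨n - 1, by omega⟩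
    have hr : (0 : ℝ) ≤ ‖a ^ (m + 1) - a * x * a ^ (m + 1)‖ := norm_nonneg _
    have hpow : ‖a ^ (m + 1) - a * x * a ^ (m + 1)‖ < ε ^ (m + 1) := by
      have h1' : (‖a ^ (m + 1) - a * x * a ^ (m + 1)‖ ^ ((1 : ℝ) / (m + 1 : ℕ))) ^ (m + 1)
          < ε ^ (m + 1) := by
        apply pow_lt_pow_left₀ hn _ (by omega)
        positivity
      rwa [← Real.rpow_natCast (‖a ^ (m + 1) - a * x * a ^ (m + 1)‖ ^ ((1 : ℝ) / (m + 1 : ℕ))),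
        ← Real.rpow_mul hr, one_div, Nat.cast_add, Nat.cast_one,
        inv_mul_cancel₀ (by positivity), Real.rpow_one] at h1'
    have hCle : ‖C‖ ≤ ‖a ^ (m + 1) - a * x * a ^ (m + 1)‖ * ‖x‖ ^ (m + 1) := by
      rw [hC] at diff ⊢
      rw [diff m, norm_neg]
      calc ‖(a ^ (m + 1) - a * x * a ^ (m + 1)) * x ^ (m + 1)‖
          ≤ ‖a ^ (m + 1) - a * x * a ^ (m + 1)‖ * ‖x ^ (m + 1)‖ := norm_mul_le _ _
        _ ≤ ‖a ^ (m + 1) - a * x * a ^ (m + 1)‖ * ‖x‖ ^ (m + 1) := by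
            gcongr; exact norm_pow_le' x (by omega)
    have : ‖C‖ ≤ ε ^ (m + 1) * (‖x‖ + 1) ^ (m + 1) := by
      refine hCle.trans ?_
      have hxle : ‖x‖ ^ (m + 1) ≤ (‖x‖ + 1) ^ (m + 1) :=
        pow_le_pow_left₀ (norm_nonneg x) (by linarith) _
      calc ‖a ^ (m + 1) - a * x * a ^ (m + 1)‖ * ‖x‖ ^ (m + 1)
          ≤ ε ^ (m + 1) * ‖x‖ ^ (m + 1) := by gcongr
        _ ≤ ε ^ (m + 1) * (‖x‖ + 1) ^ (m + 1) := by gcongr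
    refine this.trans ?_
    rw [← mul_pow]
    have : ε * (‖x‖ + 1) = 1 / 2 := by
      rw [hε, mul_inv, mul_assoc, inv_mul_cancel₀ hx1.ne', mul_one, one_div]
    rw [this]
  have htend : Filter.Tendsto (fun n : ℕ => (1 / 2 : ℝ) ^ n) Filter.atTop (nhds 0) :=
    tendsto_pow_atTop_nhds_zero_of_lt_one (by norm_num) (by norm_num)
  have hle : ‖C‖ ≤ 0 := ge_of_tendsto htend hbound
  have : C = 0 := norm_le_zero_iff.mp hle
  exact sub_eq_zero.mp this
end

section
/- If a ∈ A satisfies x = ax^2 and lim_{n→∞} ‖a^n − a x a^n‖^{1/n} = 0, then a − axa is quasinilpotent, i.e. lim_{n→∞} ‖(a − axa)^n‖^{1/n} = 0. -/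
section Alg
variable {A : Type*} [Ring A]

lemma ax_pow (a x : A) (h1 : x = a * x ^ 2) :
    ∀ k : ℕ, a * x = a ^ (k+1) * x ^ (k+1) := by
  intro k
  induction k with
  | zero => simp
  | succ n ih =>
    calc a * x = a * (a * x ^ 2) := by rw [← h1]
      _ = a * ((a * x) * x) := by simp only [pow_two, mul_assoc]
      _ = a * ((a ^ (n+1) * x ^ (n+1)) * x) := by rw [← ih]
      _ = a ^ (n+2) * x ^ (n+2) := by
          rw [pow_succ' a (n+1), pow_succ x (n+1)]; simp only [mul_assoc]

lemma qp_small (a x : A) (h1 : x = a * x ^ 2) (k : ℕ) :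
    (a - a * x * a) * (a * x)
      = (a ^ (k+2) - a * x * a ^ (k+2)) * x ^ (k+1) := by
  calc (a - a * x * a) * (a * x)
      = (a - a * x * a) * (a ^ (k+1) * x ^ (k+1)) := by rw [← ax_pow a x h1 k]
    _ = ((a - a * x * a) * a ^ (k+1)) * x ^ (k+1) := by rw [← mul_assoc]
    _ = (a ^ (k+2) - a * x * a ^ (k+2)) * x ^ (k+1) := by
        rw [pow_succ' a (k+1)]; noncomm_ring

lemma key_identity (a x : A) :
    ∀ m : ℕ, (a - a * x * a) ^ (m+1)
      = (a ^ (m+1) - a * x * a ^ (m+1))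
        - ∑ i ∈ Finset.range m,
            (a - a * x * a) ^ i * ((a - a * x * a) * (a * x)) * a ^ (m - i) := by
  set q := a - a * x * a with hq
  intro m
  induction m with
  | zero => simp [hq]
  | succ n ih =>
    have peel : ∑ i ∈ Finset.range (n+1), q ^ i * (q * (a * x)) * a ^ (n + 1 - i)
        = (∑ i ∈ Finset.range n, q ^ i * (q * (a * x)) * a ^ (n - i)) * a
          + q ^ n * (q * (a * x)) * a := by
      rw [Finset.sum_range_succ, Finset.sum_mul]
      congr 1
      · apply Finset.sum_congr rfl
        intro i hi
        have hi' : i ≤ n := Nat.le_of_lt (Finset.mem_range.mp hi)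
        have h3 : n + 1 - i = (n - i) + 1 := by omega
        rw [h3, pow_succ]
        noncomm_ring
      · simp
    have expand : q ^ (n+2) = q ^ (n+1) * a - (q ^ n * (q * (a * x))) * a := by
      calc q ^ (n+2) = q ^ (n+1) * q := by rw [pow_succ]
        _ = q ^ (n+1) * a - q ^ (n+1) * (a * x * a) := by rw [hq]; noncomm_ring
        _ = q ^ (n+1) * a - (q ^ n * (q * (a * x))) * a := by
            rw [pow_succ]
            noncomm_ring
    rw [expand, ih, peel]
    rw [pow_succ a (n+1)]
    noncomm_ring

end Alg

lemma small_pow {g δ : ℝ} {n : ℕ} (hn : n ≠ 0) (h0 : 0 ≤ g)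
    (h : g ^ ((1:ℝ)/n) < δ) : g < δ ^ n := by
  have hg : g = (g ^ ((1:ℝ)/n)) ^ n := by
    rw [← Real.rpow_natCast (g ^ ((1:ℝ)/n)) n, ← Real.rpow_mul h0]
    rw [one_div, inv_mul_cancel₀ (by exact_mod_cast hn : (n:ℝ) ≠ 0), Real.rpow_one]
  rw [hg]
  exact pow_lt_pow_left₀ h (Real.rpow_nonneg h0 _) hn

def Quasinilpotent {A : Type*} [NormedRing A] (q : A) : Prop :=
  Filter.Tendsto (fun n : ℕ => ‖q ^ n‖ ^ ((1 : ℝ) / n)) Filter.atTop (nhds 0)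

theorem quasinil_sub {A : Type*} [NormedRing A] [NormedAlgebra ℂ A] [CompleteSpace A]
    (a x : A) (h1 : x = a * x ^ 2)
    (h2 : Filter.Tendsto (fun n : ℕ => ‖a ^ n - a * x * a ^ n‖ ^ ((1 : ℝ) / n))
      Filter.atTop (nhds 0)) :
    Quasinilpotent (a - a * x * a) := by
  set q := a - a * x * a with hqdef
  set g : ℕ → ℝ := fun n => ‖a ^ n - a * x * a ^ n‖ with hgdef
  set M : ℝ := max 1 (max ‖(1:A)‖ (max ‖q‖ ‖a‖)) with hMdef
  set X : ℝ := max 1 ‖x‖ with hXdef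
  have hM1 : (1:ℝ) ≤ M := le_max_left _ _
  have hM0 : (0:ℝ) ≤ M := by linarith
  have hX1 : (1:ℝ) ≤ X := le_max_left _ _
  have hX0 : (0:ℝ) < X := by linarith
  have hone : ‖(1:A)‖ ≤ M := le_trans (le_max_left _ _) (le_max_right _ _)
  have hq_le : ‖q‖ ≤ M :=
    le_trans (le_trans (le_max_left _ _) (le_max_right _ _)) (le_max_right _ _)
  have ha_le : ‖a‖ ≤ M :=
    le_trans (le_trans (le_max_right _ _) (le_max_right _ _)) (le_max_right _ _)
  -- power norm bounds
  have hqpow : ∀ i : ℕ, ‖q ^ i‖ ≤ M ^ (i+1) := by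
    intro i
    induction i with
    | zero => simpa using hone
    | succ n ih =>
      calc ‖q ^ (n+1)‖ = ‖q ^ n * q‖ := by rw [pow_succ]
        _ ≤ ‖q ^ n‖ * ‖q‖ := norm_mul_le _ _
        _ ≤ M ^ (n+1) * M :=
            mul_le_mul ih hq_le (norm_nonneg _) (pow_nonneg hM0 _)
        _ = M ^ (n+2) := by ring
  have hapow : ∀ i : ℕ, ‖a ^ i‖ ≤ M ^ (i+1) := by
    intro i
    induction i with
    | zero => simpa using hone
    | succ n ih =>
      calc ‖a ^ (n+1)‖ = ‖a ^ n * a‖ := by rw [pow_succ]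
        _ ≤ ‖a ^ n‖ * ‖a‖ := norm_mul_le _ _
        _ ≤ M ^ (n+1) * M :=
            mul_le_mul ih ha_le (norm_nonneg _) (pow_nonneg hM0 _)
        _ = M ^ (n+2) := by ring
  have hqp_norm : ∀ k : ℕ, ‖q * (a * x)‖ ≤ g (k+2) * X ^ (k+1) := by
    intro k
    rw [hqdef, qp_small a x h1 k]
    calc ‖(a ^ (k+2) - a * x * a ^ (k+2)) * x ^ (k+1)‖
        ≤ ‖a ^ (k+2) - a * x * a ^ (k+2)‖ * ‖x ^ (k+1)‖ := norm_mul_le _ _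
      _ ≤ g (k+2) * X ^ (k+1) := by
          apply mul_le_mul le_rfl ?_ (norm_nonneg _) (norm_nonneg _)
          calc ‖x ^ (k+1)‖ ≤ ‖x‖ ^ (k+1) := norm_pow_le' x (Nat.succ_pos k)
            _ ≤ X ^ (k+1) := pow_le_pow_left₀ (norm_nonneg _) (le_max_right _ _) _
  have hmain : ∀ m k : ℕ,
      ‖q ^ (m+1)‖ ≤ g (m+1) + m * (M ^ (m+2) * (g (k+2) * X ^ (k+1))) := by
    intro m k
    rw [hqdef]
    rw [key_identity a x m]
    rw [← hqdef]
    calc ‖(a ^ (m+1) - a * x * a ^ (m+1))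
          - ∑ i ∈ Finset.range m, q ^ i * (q * (a * x)) * a ^ (m - i)‖
        ≤ ‖a ^ (m+1) - a * x * a ^ (m+1)‖
          + ‖∑ i ∈ Finset.range m, q ^ i * (q * (a * x)) * a ^ (m - i)‖ :=
          norm_sub_le _ _
      _ ≤ g (m+1) + m * (M ^ (m+2) * (g (k+2) * X ^ (k+1))) := by
          apply add_le_add le_rfl
          calc ‖∑ i ∈ Finset.range m, q ^ i * (q * (a * x)) * a ^ (m - i)‖
              ≤ ∑ i ∈ Finset.range m, ‖q ^ i * (q * (a * x)) * a ^ (m - i)‖ :=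
              norm_sum_le _ _
            _ ≤ ∑ _i ∈ Finset.range m, M ^ (m+2) * (g (k+2) * X ^ (k+1)) := by
                apply Finset.sum_le_sum
                intro i hi
                have hi' : i ≤ m := Nat.le_of_lt (Finset.mem_range.mp hi)
                calc ‖q ^ i * (q * (a * x)) * a ^ (m - i)‖
                    ≤ ‖q ^ i * (q * (a * x))‖ * ‖a ^ (m-i)‖ := norm_mul_le _ _
                  _ ≤ ‖q ^ i‖ * ‖q * (a * x)‖ * ‖a ^ (m-i)‖ := by
                      apply mul_le_mul (norm_mul_le _ _) le_rfl (norm_nonneg _)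
                      positivity
                  _ ≤ M ^ (i+1) * (g (k+2) * X ^ (k+1)) * M ^ (m-i+1) := by
                      apply mul_le_mul ?_ (hapow _) (norm_nonneg _) (by positivity)
                      exact mul_le_mul (hqpow _) (hqp_norm _) (norm_nonneg _)
                        (by positivity)
                  _ = M ^ (m+2) * (g (k+2) * X ^ (k+1)) := by
                      rw [show (m+2) = (i+1) + (m-i+1) by omega, pow_add]
                      ring
            _ = m * (M ^ (m+2) * (g (k+2) * X ^ (k+1))) := by
                rw [Finset.sum_const, Finset.card_range, nsmul_eq_mul]
  -- analytic part
  show Filter.Tendsto (fun n : ℕ => ‖q ^ n‖ ^ ((1:ℝ)/n)) Filter.atTop (nhds 0)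
  rw [Metric.tendsto_atTop]
  intro ε hε
  -- choose δ
  set δ : ℝ := min (min (ε/4) 1) (1/(2*X)) with hδdef
  have hδpos : 0 < δ := by
    apply lt_min (lt_min (by linarith) one_pos)
    positivity
  have hδ1 : δ ≤ 1 := le_trans (min_le_left _ _) (min_le_right _ _)
  have hδε : δ ≤ ε/4 := le_trans (min_le_left _ _) (min_le_left _ _)
  have hδX : δ * X ≤ 1/2 := by
    have := min_le_right (min (ε/4) 1) (1/(2*X))
    calc δ * X ≤ (1/(2*X)) * X := by
          apply mul_le_mul this le_rfl (le_of_lt hX0) (by positivity)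
      _ = 1/2 := by field_simp
  -- choose t
  obtain ⟨t₀, ht₀⟩ := pow_unbounded_of_one_lt (4 * M^2 / ε) (by norm_num : (1:ℝ) < 2)
  set t : ℕ := t₀ + 1 with htdef
  have ht : 4 * M^2 / ε < 2 ^ t := by
    calc 4 * M^2 / ε < 2 ^ t₀ := ht₀
      _ ≤ 2 ^ t := by apply pow_le_pow_right₀ (by norm_num) (by omega)
  have hS : 2 * (M^2 * ((2⁻¹:ℝ)^t * 1)) < ε / 2 := by
    have h2t : (0:ℝ) < 2 ^ t := by positivity
    rw [div_lt_iff₀ hε] at ht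
    have hlt : M^2 / 2^t < ε/4 := by
      rw [div_lt_iff₀ h2t]
      nlinarith
    calc 2 * (M^2 * ((2⁻¹:ℝ)^t * 1)) = 2 * (M^2 / 2^t) := by
          rw [mul_one, inv_pow, div_eq_mul_inv]
      _ < 2 * (ε/4) := by linarith
      _ = ε/2 := by ring
  -- get N₁ from h2
  rw [Metric.tendsto_atTop] at h2
  obtain ⟨N₁, hN₁⟩ := h2 δ hδpos
  have hg_small : ∀ n : ℕ, N₁ ≤ n → 1 ≤ n → g n < δ ^ n := by
    intro n hn hn1
    have := hN₁ n hn
    rw [dist_zero_right, Real.norm_eq_abs,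
        abs_of_nonneg (Real.rpow_nonneg (norm_nonneg _) _)] at this
    exact small_pow (by omega) (norm_nonneg _) this
  refine ⟨max N₁ 1, fun n hn => ?_⟩
  have hnN₁ : N₁ ≤ n := le_trans (le_max_left _ _) hn
  have hn1 : 1 ≤ n := le_trans (le_max_right _ _) hn
  obtain ⟨m, rfl⟩ : ∃ m, n = m + 1 := ⟨n - 1, by omega⟩
  set n := m + 1
  have hnne : (n:ℝ) ≠ 0 := by positivity
  -- the two bounds
  set B : ℝ := m * (M ^ (m+2) * ((2⁻¹:ℝ) ^ (t*n) * δ)) with hBdef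
  have hB0 : 0 ≤ B := by positivity
  have hA0 : (0:ℝ) ≤ δ ^ n := by positivity
  have hqn : ‖q ^ n‖ ≤ δ ^ n + B := by
    have hk : t * n - 1 + 1 = t * n := by
      have : 1 ≤ t * n := Nat.one_le_iff_ne_zero.mpr (by positivity)
      omega
    have h5 := hmain m (t * n - 1)
    rw [show t*n - 1 + 2 = t*n + 1 by omega, hk] at h5
    have htn : n ≤ t * n := Nat.le_mul_of_pos_left n (by omega)
    have hgtn : g (t*n+1) < δ ^ (t*n+1) :=
      hg_small _ (by omega) (by omega)
    have hgn : g n < δ ^ n := hg_small _ hnN₁ hn1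
    calc ‖q ^ n‖ ≤ g n + m * (M ^ (m+2) * (g (t*n+1) * X ^ (t*n))) := h5
      _ ≤ δ ^ n + m * (M ^ (m+2) * ((2⁻¹:ℝ) ^ (t*n) * δ)) := by
          apply add_le_add (le_of_lt hgn)
          apply mul_le_mul le_rfl ?_ (by positivity) (by positivity)
          apply mul_le_mul le_rfl ?_ (by positivity) (by positivity)
          calc g (t*n+1) * X ^ (t*n) ≤ δ ^ (t*n+1) * X ^ (t*n) := by
                apply mul_le_mul (le_of_lt hgtn) le_rfl (by positivity) (by positivity)
            _ = (δ * X) ^ (t*n) * δ := by rw [pow_succ, mul_pow]; ring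
            _ ≤ (2⁻¹:ℝ) ^ (t*n) * δ := by
                apply mul_le_mul ?_ le_rfl (le_of_lt hδpos) (by positivity)
                apply pow_le_pow_left₀ (by positivity) ?_
                rw [← one_div]
                linarith
  -- rpow computations
  rw [dist_zero_right, Real.norm_eq_abs,
      abs_of_nonneg (Real.rpow_nonneg (norm_nonneg _) _)]
  have hmax0 : 0 ≤ max (δ ^ n) B := le_trans hA0 (le_max_left _ _)
  have hstep1 : ‖q ^ n‖ ^ ((1:ℝ)/n) ≤ (2 * max (δ ^ n) B) ^ ((1:ℝ)/n) := by
    apply Real.rpow_le_rpow (norm_nonneg _) ?_ (by positivity)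
    calc ‖q ^ n‖ ≤ δ ^ n + B := hqn
      _ ≤ max (δ ^ n) B + max (δ ^ n) B := add_le_add (le_max_left _ _) (le_max_right _ _)
      _ = 2 * max (δ ^ n) B := by ring
  have hsplit : (2 * max (δ ^ n) B) ^ ((1:ℝ)/n)
      = (2:ℝ) ^ ((1:ℝ)/n) * (max (δ ^ n) B) ^ ((1:ℝ)/n) :=
    Real.mul_rpow (by norm_num) hmax0
  have h2n : (2:ℝ) ^ ((1:ℝ)/n) ≤ 2 := by
    calc (2:ℝ) ^ ((1:ℝ)/n) ≤ (2:ℝ) ^ (1:ℝ) := by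
          apply Real.rpow_le_rpow_of_exponent_le (by norm_num)
          rw [div_le_one (by positivity)]
          exact_mod_cast hn1
      _ = 2 := Real.rpow_one 2
  have hApow : (δ ^ n) ^ ((1:ℝ)/n) = δ := by
    rw [← Real.rpow_natCast δ n, ← Real.rpow_mul (le_of_lt hδpos)]
    rw [mul_one_div, div_self hnne, Real.rpow_one]
  have hBpow : B ^ ((1:ℝ)/n) ≤ 2 * (M^2 * ((2⁻¹:ℝ)^t * 1)) := by
    rw [hBdef]
    rw [Real.mul_rpow (by positivity) (by positivity),
        Real.mul_rpow (by positivity) (by positivity),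
        Real.mul_rpow (by positivity) (by positivity)]
    have e1 : ((m:ℝ)) ^ ((1:ℝ)/n) ≤ 2 := by
      calc ((m:ℝ)) ^ ((1:ℝ)/n) ≤ ((2:ℝ)^n) ^ ((1:ℝ)/n) := by
            apply Real.rpow_le_rpow (by positivity) ?_ (by positivity)
            have : m < 2 ^ n := by
              calc m < n := by omega
                _ < 2 ^ n := Nat.lt_two_pow_self
            exact_mod_cast this.le
        _ = 2 := by
            rw [← Real.rpow_natCast 2 n, ← Real.rpow_mul (by norm_num)]
            rw [mul_one_div, div_self hnne, Real.rpow_one]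
    have e2 : (M ^ (m+2)) ^ ((1:ℝ)/n) ≤ M^2 := by
      rw [← Real.rpow_natCast M (m+2), ← Real.rpow_mul hM0]
      calc M ^ ((↑(m+2)) * ((1:ℝ)/n)) ≤ M ^ (2:ℝ) := by
            apply Real.rpow_le_rpow_of_exponent_le hM1
            rw [mul_one_div, div_le_iff₀ (by positivity)]
            push_cast
            nlinarith [Nat.cast_nonneg (α := ℝ) m, (Nat.cast_succ m : ((n:ℕ):ℝ) = m + 1)]
        _ = M^2 := by
            simpa using Real.rpow_natCast M 2
    have e3 : ((2⁻¹:ℝ) ^ (t*n)) ^ ((1:ℝ)/n) = (2⁻¹:ℝ)^t := by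
      rw [← Real.rpow_natCast (2⁻¹:ℝ) (t*n), ← Real.rpow_mul (by norm_num)]
      rw [show ((t*n : ℕ):ℝ) * ((1:ℝ)/n) = t by push_cast; field_simp]
      rw [Real.rpow_natCast]
    have e4 : δ ^ ((1:ℝ)/n) ≤ 1 :=
      Real.rpow_le_one (le_of_lt hδpos) hδ1 (by positivity)
    rw [e3]
    apply mul_le_mul e1 ?_ (by positivity) (by norm_num)
    apply mul_le_mul e2 ?_ (by positivity) (by positivity)
    apply mul_le_mul le_rfl e4 (Real.rpow_nonneg (le_of_lt hδpos) _) (by positivity)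
  -- conclude
  have hfinal : ‖q ^ n‖ ^ ((1:ℝ)/n) ≤ 2 * max δ (2 * (M^2 * ((2⁻¹:ℝ)^t * 1))) := by
    calc ‖q ^ n‖ ^ ((1:ℝ)/n) ≤ (2:ℝ) ^ ((1:ℝ)/n) * (max (δ ^ n) B) ^ ((1:ℝ)/n) := by
          rw [← hsplit]; exact hstep1
      _ ≤ 2 * max δ (2 * (M^2 * ((2⁻¹:ℝ)^t * 1))) := by
          apply mul_le_mul h2n ?_ (Real.rpow_nonneg hmax0 _) (by norm_num)
          rcases max_cases (δ ^ n) B with ⟨h, _⟩ | ⟨h, _⟩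
          · rw [h, hApow]; exact le_max_left _ _
          · rw [h]; exact le_trans hBpow (le_max_right _ _)
  have : 2 * max δ (2 * (M^2 * ((2⁻¹:ℝ)^t * 1))) < ε := by
    have hmaxlt : max δ (2 * (M^2 * ((2⁻¹:ℝ)^t * 1))) < ε / 2 :=
      max_lt (by linarith) hS
    linarith
  linarith
end

section
/- If a ∈ A satisfies x = ax^2, lim_{n→∞} ‖a^n − a x a^n‖^{1/n} = 0, and we set x' = a^2 x and y = a − a^2 x, then a = x' + y, y x' = 0, x' has a right group inverse (namely x), and y is quasinilpotent. -/
theorem decomposition {A : Type*} [NormedRing A] [NormedAlgebra ℂ A] [CompleteSpace A]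
    (a x : A) (h1 : x = a * x ^ 2)
    (h2 : Filter.Tendsto (fun n : ℕ => ‖a ^ n - a * x * a ^ n‖ ^ ((1 : ℝ) / n))
      Filter.atTop (nhds 0)) :
    a = (a ^ 2 * x) + (a - a ^ 2 * x) ∧
    (a - a ^ 2 * x) * (a ^ 2 * x) = 0 ∧
    ((a ^ 2 * x) * x ^ 2 = x ∧ (a ^ 2 * x) ^ 2 * x = a ^ 2 * x ∧
      (a ^ 2 * x) * x * (a ^ 2 * x) = a ^ 2 * x) ∧
    Quasinilpotent (a - a ^ 2 * x) := by
  -- `key`: extract polynomial bounds from h2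
  have key : ∀ δ : ℝ, 0 < δ → ∃ N : ℕ, ∀ n, N + 1 ≤ n → ‖a ^ n - a * x * a ^ n‖ ≤ δ ^ n := by
    intro δ hδ
    obtain ⟨N, hN⟩ := Filter.eventually_atTop.mp (h2.eventually (gt_mem_nhds hδ))
    refine ⟨N, fun n hn => ?_⟩
    have hn' : N ≤ n := le_trans (Nat.le_succ N) hn
    have h3 := hN n hn'
    have hn0 : (n : ℝ) ≠ 0 := Nat.cast_ne_zero.mpr (by omega)
    have h4 : (‖a ^ n - a * x * a ^ n‖ ^ ((1:ℝ)/n)) ^ n ≤ δ ^ n :=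
      pow_le_pow_left₀ (Real.rpow_nonneg (norm_nonneg _) _) h3.le n
    rwa [← Real.rpow_natCast (‖a ^ n - a * x * a ^ n‖ ^ ((1:ℝ)/n)) n,
      ← Real.rpow_mul (norm_nonneg _), one_div, inv_mul_cancel₀ hn0, Real.rpow_one] at h4
  -- algebraic identities
  have hA : ∀ n : ℕ, a ^ (n+1) * x ^ (n+1) = a * x := by
    intro n; induction n with
    | zero => simp
    | succ m ih =>
      have e1 : a ^ (m+2) * x ^ (m+2) = a ^ (m+1) * (a * x ^ 2 * x ^ m) := by
        have p1 : a ^ (m+2) = a ^ (m+1) * a := pow_succ a (m+1)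
        have p2 : x ^ (m+2) = x * (x * x ^ m) := by
          rw [pow_succ' x (m+1), pow_succ' x m]
        rw [p1, p2, sq]
        simp only [mul_assoc]
      have e2 : a ^ (m+1) * (x * x ^ m) = a ^ (m+1) * x ^ (m+1) := by
        rw [← pow_succ' x m]
      rw [e1, ← h1, e2, ih]
  have hB : ∀ n : ℕ, (a ^ (n+1) - a * x * a ^ (n+1)) * x ^ (n+1)
      = a * x - (a * x) * (a * x) := by
    intro n
    have h := hA n
    set p := a ^ (n+1) with hp
    set q := x ^ (n+1) with hq
    have e1 : (p - a * x * p) * q = p * q - (a * x) * (p * q) := by noncomm_ring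
    rw [e1, h]
  have hC : ∀ n : ℕ, (a ^ (n+2) - a * x * a ^ (n+2)) * x ^ (n+1)
      = a * (a * x) - (a * x) * (a * (a * x)) := by
    intro n
    have h := hA n
    have e0 : a ^ (n+2) = a * a ^ (n+1) := pow_succ' a (n+1)
    rw [e0]
    set p := a ^ (n+1) with hp
    set q := x ^ (n+1) with hq
    have e1 : (a * p - a * x * (a * p)) * q
        = a * (p * q) - (a * x) * (a * (p * q)) := by noncomm_ring
    rw [e1, h]
  -- choose δ with δ * ‖x‖ < 1 and δ ≤ 1
  set δ₀ : ℝ := 1 / (‖x‖ + 1) with hδ₀def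
  have hx1 : (0:ℝ) < ‖x‖ + 1 := by positivity
  have hδ₀ : 0 < δ₀ := by positivity
  have hδ₀le1 : δ₀ ≤ 1 := by
    rw [hδ₀def, div_le_one hx1]; linarith [norm_nonneg x]
  have hδ₀x : δ₀ * ‖x‖ < 1 := by
    rw [hδ₀def, div_mul_eq_mul_div, one_mul, div_lt_one hx1]; linarith
  have hδ₀x0 : 0 ≤ δ₀ * ‖x‖ := by positivity
  obtain ⟨N, hN⟩ := key δ₀ hδ₀
  have htend : Filter.Tendsto (fun n : ℕ => (δ₀ * ‖x‖) ^ n) Filter.atTop (nhds 0) :=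
    tendsto_pow_atTop_nhds_zero_of_lt_one hδ₀x0 hδ₀x
  -- product norm bounds
  have hbnd : ∀ n : ℕ, ‖(a ^ (n+1) - a * x * a ^ (n+1)) * x ^ (n+1)‖
      ≤ ‖a ^ (n+1) - a * x * a ^ (n+1)‖ * ‖x‖ ^ (n+1) := by
    intro n
    calc ‖(a ^ (n+1) - a * x * a ^ (n+1)) * x ^ (n+1)‖
        ≤ ‖a ^ (n+1) - a * x * a ^ (n+1)‖ * ‖x ^ (n+1)‖ := norm_mul_le _ _
      _ ≤ ‖a ^ (n+1) - a * x * a ^ (n+1)‖ * ‖x‖ ^ (n+1) :=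
          mul_le_mul_of_nonneg_left (norm_pow_le' x (Nat.succ_pos n)) (norm_nonneg _)
  -- e = a*x is idempotent
  have he : (a * x) * (a * x) = a * x := by
    have hle : ∀ n, N + 1 ≤ n + 1 → ‖a * x - (a * x) * (a * x)‖ ≤ (δ₀ * ‖x‖) ^ (n+1) := by
      intro n hn
      have := hbnd n
      rw [hB n] at this
      calc ‖a * x - (a * x) * (a * x)‖
          ≤ ‖a ^ (n+1) - a * x * a ^ (n+1)‖ * ‖x‖ ^ (n+1) := this
        _ ≤ δ₀ ^ (n+1) * ‖x‖ ^ (n+1) :=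
            mul_le_mul_of_nonneg_right (hN _ hn) (by positivity)
        _ = (δ₀ * ‖x‖) ^ (n+1) := by rw [mul_pow]
    have h0 : ‖a * x - (a * x) * (a * x)‖ ≤ 0 := by
      refine ge_of_tendsto htend ?_
      filter_upwards [Filter.eventually_ge_atTop (N + 1)] with n hn
      rcases Nat.exists_eq_add_of_le hn with ⟨k, hk⟩
      have : N + 1 ≤ (N + k) + 1 := by omega
      have hb := hle (N + k) this
      have hnk : n = (N + k) + 1 := by omega
      rw [hnk]; exact hb
    have := norm_le_zero_iff.mp h0
    exact (sub_eq_zero.mp this).symm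
  -- a * e = e * a * e
  have hae : (a * x) * (a * (a * x)) = a * (a * x) := by
    have hle : ∀ n, N + 1 ≤ n + 2 →
        ‖a * (a * x) - (a * x) * (a * (a * x))‖ ≤ δ₀ * (δ₀ * ‖x‖) ^ (n+1) := by
      intro n hn
      have hb : ‖(a ^ (n+2) - a * x * a ^ (n+2)) * x ^ (n+1)‖
          ≤ ‖a ^ (n+2) - a * x * a ^ (n+2)‖ * ‖x‖ ^ (n+1) := by
        calc ‖(a ^ (n+2) - a * x * a ^ (n+2)) * x ^ (n+1)‖
            ≤ ‖a ^ (n+2) - a * x * a ^ (n+2)‖ * ‖x ^ (n+1)‖ := norm_mul_le _ _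
          _ ≤ ‖a ^ (n+2) - a * x * a ^ (n+2)‖ * ‖x‖ ^ (n+1) :=
              mul_le_mul_of_nonneg_left (norm_pow_le' x (Nat.succ_pos n)) (norm_nonneg _)
      rw [hC n] at hb
      calc ‖a * (a * x) - (a * x) * (a * (a * x))‖
          ≤ ‖a ^ (n+2) - a * x * a ^ (n+2)‖ * ‖x‖ ^ (n+1) := hb
        _ ≤ δ₀ ^ (n+2) * ‖x‖ ^ (n+1) :=
            mul_le_mul_of_nonneg_right (hN _ hn) (by positivity)
        _ = δ₀ * (δ₀ * ‖x‖) ^ (n+1) := by rw [mul_pow]; ring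
    have htend2 : Filter.Tendsto (fun n : ℕ => δ₀ * (δ₀ * ‖x‖) ^ n) Filter.atTop (nhds 0) := by
      have := htend.const_mul δ₀
      simpa using this
    have h0 : ‖a * (a * x) - (a * x) * (a * (a * x))‖ ≤ 0 := by
      refine ge_of_tendsto htend2 ?_
      filter_upwards [Filter.eventually_ge_atTop (N + 2)] with n hn
      rcases Nat.exists_eq_add_of_le hn with ⟨k, hk⟩
      have h5 : N + 1 ≤ (N + k + 1) + 2 := by omega
      have hb := hle (N + k + 1) h5
      have hnk : n = (N + k + 1) + 1 := by omega
      rw [hnk]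
      exact hb
    have := norm_le_zero_iff.mp h0
    exact (sub_eq_zero.mp this).symm
  -- goal 2
  have g2 : (a - a ^ 2 * x) * (a ^ 2 * x) = 0 := by
    have e1 : (a - a ^ 2 * x) * (a ^ 2 * x)
        = a * (a * (a * x)) - a * ((a * x) * (a * (a * x))) := by noncomm_ring
    rw [e1, hae, sub_self]
  -- goal 3a
  have g3a : (a ^ 2 * x) * x ^ 2 = x := by
    have e1 : (a ^ 2 * x) * x ^ 2 = a * (a * x ^ 2 * x) := by noncomm_ring
    rw [e1, ← h1]
    have e2 : a * (x * x) = a * x ^ 2 := by noncomm_ring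
    rw [e2, ← h1]
  -- goal 3b
  have g3b : (a ^ 2 * x) ^ 2 * x = a ^ 2 * x := by
    have e1 : (a ^ 2 * x) ^ 2 * x = a ^ 2 * x * a * (a * x ^ 2) := by noncomm_ring
    rw [e1, ← h1]
    have e2 : a ^ 2 * x * a * x = a * ((a * x) * (a * x)) := by noncomm_ring
    rw [e2, he]
    noncomm_ring
  -- goal 3c
  have g3c : (a ^ 2 * x) * x * (a ^ 2 * x) = a ^ 2 * x := by
    have e1 : (a ^ 2 * x) * x * (a ^ 2 * x) = (a * (a * x ^ 2)) * (a ^ 2 * x) := by noncomm_ring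
    rw [e1, ← h1]
    have e2 : (a * x) * (a ^ 2 * x) = (a * x) * (a * (a * x)) := by noncomm_ring
    rw [e2, hae]
    noncomm_ring
  refine ⟨by abel, g2, ⟨g3a, g3b, g3c⟩, ?_⟩
  -- quasinilpotency of y = a - a^2*x
  have h0 : (1 - a * x) * a * (a * x) = 0 := by
    have e1 : (1 - a * x) * a * (a * x) = a * (a * x) - (a * x) * (a * (a * x)) := by
      noncomm_ring
    rw [e1, hae, sub_self]
  have hw1 : (1 - a * x) * a * (1 - a * x) = (1 - a * x) * a := by
    have e1 : (1 - a * x) * a * (1 - a * x)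
        = (1 - a * x) * a - (1 - a * x) * a * (a * x) := by noncomm_ring
    rw [e1, h0, sub_zero]
  have hwn : ∀ n : ℕ, ((1 - a * x) * a) ^ (n + 1) = (1 - a * x) * a ^ (n + 1) := by
    intro n; induction n with
    | zero => simp
    | succ m ih =>
      calc ((1 - a * x) * a) ^ (m + 2)
          = (1 - a * x) * a * ((1 - a * x) * a) ^ (m + 1) := by rw [pow_succ']
        _ = (1 - a * x) * a * ((1 - a * x) * a ^ (m + 1)) := by rw [ih]
        _ = ((1 - a * x) * a * (1 - a * x)) * a ^ (m + 1) := by noncomm_ring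
        _ = (1 - a * x) * a * a ^ (m + 1) := by rw [hw1]
        _ = (1 - a * x) * (a * a ^ (m + 1)) := by rw [mul_assoc]
        _ = (1 - a * x) * a ^ (m + 2) := by rw [← pow_succ' a (m + 1)]
  have hyn : ∀ n : ℕ, (a - a ^ 2 * x) ^ (n + 1)
      = a * ((1 - a * x) * a) ^ n * (1 - a * x) := by
    intro n; induction n with
    | zero => simp; noncomm_ring
    | succ m ih =>
      calc (a - a ^ 2 * x) ^ (m + 2)
          = (a - a ^ 2 * x) * (a - a ^ 2 * x) ^ (m + 1) := by rw [pow_succ']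
        _ = (a - a ^ 2 * x) * (a * ((1 - a * x) * a) ^ m * (1 - a * x)) := by rw [ih]
        _ = a * (((1 - a * x) * a) * ((1 - a * x) * a) ^ m) * (1 - a * x) := by noncomm_ring
        _ = a * ((1 - a * x) * a) ^ (m + 1) * (1 - a * x) := by rw [← pow_succ']
  -- norm bound for y^(m+2)
  set C : ℝ := ‖a‖ * ‖(1 : A) - a * x‖ with hCdef
  have hC0 : 0 ≤ C := by positivity
  have hybnd : ∀ m : ℕ, ‖(a - a ^ 2 * x) ^ (m + 2)‖
      ≤ C * ‖a ^ (m + 1) - a * x * a ^ (m + 1)‖ := by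
    intro m
    have e1 : (a - a ^ 2 * x) ^ (m + 2)
        = a * ((1 - a * x) * a ^ (m + 1)) * (1 - a * x) := by
      rw [hyn (m + 1), hwn m]
    have e2 : (1 - a * x) * a ^ (m + 1) = a ^ (m + 1) - a * x * a ^ (m + 1) := by noncomm_ring
    rw [e1, e2]
    calc ‖a * (a ^ (m + 1) - a * x * a ^ (m + 1)) * (1 - a * x)‖
        ≤ ‖a * (a ^ (m + 1) - a * x * a ^ (m + 1))‖ * ‖(1:A) - a * x‖ := norm_mul_le _ _
      _ ≤ ‖a‖ * ‖a ^ (m + 1) - a * x * a ^ (m + 1)‖ * ‖(1:A) - a * x‖ := by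
          gcongr; exact norm_mul_le _ _
      _ = C * ‖a ^ (m + 1) - a * x * a ^ (m + 1)‖ := by rw [hCdef]; ring
  show Filter.Tendsto (fun n : ℕ => ‖(a - a ^ 2 * x) ^ n‖ ^ ((1 : ℝ) / n))
    Filter.atTop (nhds 0)
  rw [Metric.tendsto_atTop]
  intro ε hε
  set ε₀ : ℝ := min ε 1 / 2 with hε₀def
  have hε₀pos : 0 < ε₀ := by
    rw [hε₀def]; have := lt_min hε one_pos; positivity
  have hε₀le1 : ε₀ ≤ 1 := by
    rw [hε₀def]; have : min ε 1 ≤ 1 := min_le_right _ _; linarith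
  have hε₀ltε : ε₀ < ε := by
    rw [hε₀def]
    rcases le_total ε 1 with h | h
    · rw [min_eq_left h]; linarith
    · rw [min_eq_right h]; linarith
  set δ : ℝ := ε₀ * ε₀ / (C + 1) with hδdef
  have hδpos : 0 < δ := by rw [hδdef]; positivity
  have key0 : δ * (C + 1) = ε₀ * ε₀ := by
    rw [hδdef]; field_simp
  have hδle : δ ≤ ε₀ := by nlinarith
  have hCδ : C * δ ≤ ε₀ * ε₀ := by nlinarith
  obtain ⟨M, hM⟩ := key δ hδpos
  refine ⟨M + 2, fun n hn => ?_⟩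
  rcases Nat.exists_eq_add_of_le hn with ⟨k, hk⟩
  have hnform : n = (M + k) + 2 := by omega
  have hn0 : (n : ℝ) ≠ 0 := Nat.cast_ne_zero.mpr (by omega)
  have hb1 : ‖(a - a ^ 2 * x) ^ n‖ ≤ C * δ ^ ((M + k) + 1) := by
    rw [hnform]
    calc ‖(a - a ^ 2 * x) ^ ((M + k) + 2)‖
        ≤ C * ‖a ^ ((M + k) + 1) - a * x * a ^ ((M + k) + 1)‖ := hybnd (M + k)
      _ ≤ C * δ ^ ((M + k) + 1) :=
          mul_le_mul_of_nonneg_left (hM _ (by omega)) hC0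
  have hb2 : C * δ ^ ((M + k) + 1) ≤ ε₀ ^ n := by
    rw [hnform]
    calc C * δ ^ ((M + k) + 1) = (C * δ) * δ ^ (M + k) := by ring
      _ ≤ (ε₀ * ε₀) * ε₀ ^ (M + k) :=
          mul_le_mul hCδ (pow_le_pow_left₀ hδpos.le hδle _) (by positivity) (by positivity)
      _ = ε₀ ^ ((M + k) + 2) := by ring
  have hb : ‖(a - a ^ 2 * x) ^ n‖ ≤ ε₀ ^ n := hb1.trans hb2
  have hrpow : ‖(a - a ^ 2 * x) ^ n‖ ^ ((1:ℝ)/n) ≤ (ε₀ ^ n) ^ ((1:ℝ)/n) :=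
    Real.rpow_le_rpow (norm_nonneg _) hb (by positivity)
  have heq : ((ε₀ : ℝ) ^ n) ^ ((1:ℝ)/n) = ε₀ := by
    rw [← Real.rpow_natCast ε₀ n, ← Real.rpow_mul hε₀pos.le, mul_one_div,
      div_self hn0, Real.rpow_one]
  rw [heq] at hrpow
  rw [Real.dist_eq, sub_zero, abs_of_nonneg (Real.rpow_nonneg (norm_nonneg _) _)]
  exact lt_of_le_of_lt hrpow hε₀ltε
end

section
/- Symmetry characterization: a ∈ A has an m-generalized right group inverse if and only if a has a generalized right Drazin inverse and there exists x ∈ A such that x = ax^2, ((a^m)^* a^{m+1} x)^* = (a^m)^* a^{m+1} x, and lim_{n→∞} ‖a^n − a x a^n‖^{1/n} = 0. In this case a_r^{g_m} = a a_r^d x. -/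
/-- `d` is a generalized right Drazin inverse of `a`. -/
def IsGRD {A : Type*} [NormedRing A] (a d : A) : Prop :=
  a * d ^ 2 = d ∧ a ^ 2 * d = a * d * a ∧ Quasinilpotent (a - a * d * a)

/-- `x` is an `m`-generalized right group inverse of `a` relative to the
generalized right Drazin inverse `d` of `a`. -/
def IsMGRGI {A : Type*} [NormedRing A] [StarRing A] (m : ℕ) (a d x : A) : Prop :=
  x = a * x ^ 2 ∧ star (a * d) * a ^ (m + 1) * x = star (a * d) * a ^ m ∧
    Filter.Tendsto (fun n : ℕ => ‖a ^ n - a * x * a ^ n‖ ^ ((1 : ℝ) / n))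
      Filter.atTop (nhds 0)

open Filter

section MGRGIHelpers

variable {A : Type*} [NormedRing A]

private lemma tendsto_rpow_one_div {c : ℝ} (hc : 0 < c) :
    Tendsto (fun n : ℕ => c ^ ((1 : ℝ) / n)) atTop (nhds 1) := by
  have h1 : Tendsto (fun n : ℕ => (1 : ℝ) / n) atTop (nhds 0) :=
    tendsto_one_div_atTop_nhds_zero_nat
  have h2 : Tendsto (fun n : ℕ => Real.log c * ((1 : ℝ) / n)) atTop (nhds 0) := by
    simpa using h1.const_mul (Real.log c)
  have h3 := (Real.continuous_exp.tendsto 0).comp h2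
  simp only [Function.comp_def, Real.exp_zero] at h3
  refine h3.congr fun n => ?_
  rw [Real.rpow_def_of_pos hc]

private lemma sm_of_le (u v : ℕ → A) (C D : ℝ) (hC : 0 ≤ C) (hD : 0 ≤ D)
    (hv : Tendsto (fun n : ℕ => ‖v n‖ ^ ((1 : ℝ) / n)) atTop (nhds 0))
    (h : ∀ n : ℕ, 1 ≤ n → ‖u n‖ ≤ C * ‖v n‖ * D ^ n) :
    Tendsto (fun n : ℕ => ‖u n‖ ^ ((1 : ℝ) / n)) atTop (nhds 0) := by
  have hC1 : (0 : ℝ) < C + 1 := by linarith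
  have hub : ∀ n : ℕ, 1 ≤ n →
      ‖u n‖ ^ ((1 : ℝ) / n) ≤ (C + 1) ^ ((1 : ℝ) / n) * ‖v n‖ ^ ((1 : ℝ) / n) * D := by
    intro n hn
    have hn0 : (n : ℝ) ≠ 0 := by exact_mod_cast Nat.one_le_iff_ne_zero.mp hn
    have h1 : ‖u n‖ ≤ (C + 1) * ‖v n‖ * D ^ n := by
      refine le_trans (h n hn) ?_
      nlinarith [norm_nonneg (v n), pow_nonneg hD n,
        mul_nonneg (norm_nonneg (v n)) (pow_nonneg hD n)]
    have h2 : ‖u n‖ ^ ((1 : ℝ) / n) ≤ ((C + 1) * ‖v n‖ * D ^ n) ^ ((1 : ℝ) / n) :=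
      Real.rpow_le_rpow (norm_nonneg _) h1 (by positivity)
    have h3 : ((C + 1) * ‖v n‖ * D ^ n) ^ ((1 : ℝ) / n)
        = (C + 1) ^ ((1 : ℝ) / n) * ‖v n‖ ^ ((1 : ℝ) / n) * (D ^ n) ^ ((1 : ℝ) / n) := by
      rw [Real.mul_rpow (by positivity) (by positivity),
        Real.mul_rpow (by positivity) (norm_nonneg _)]
    have h4 : ((D : ℝ) ^ n) ^ ((1 : ℝ) / n) = D := by
      rw [← Real.rpow_natCast D n, ← Real.rpow_mul hD]
      rw [mul_one_div, div_self hn0, Real.rpow_one]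
    rw [h3, h4] at h2
    exact h2
  have hlim : Tendsto (fun n : ℕ =>
      (C + 1) ^ ((1 : ℝ) / n) * ‖v n‖ ^ ((1 : ℝ) / n) * D) atTop (nhds 0) := by
    have := ((tendsto_rpow_one_div hC1).mul hv).mul_const D
    simpa using this
  refine tendsto_of_tendsto_of_tendsto_of_le_of_le' tendsto_const_nhds hlim ?_ ?_
  · exact Eventually.of_forall fun n => Real.rpow_nonneg (norm_nonneg _) _
  · exact eventually_atTop.2 ⟨1, hub⟩

private lemma eq_zero_of_bound (z : A) (v : ℕ → A) (C D : ℝ) (hC : 0 ≤ C) (hD : 0 ≤ D)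
    (hv : Tendsto (fun n : ℕ => ‖v n‖ ^ ((1 : ℝ) / n)) atTop (nhds 0))
    (h : ∀ n : ℕ, 1 ≤ n → ‖z‖ ≤ C * ‖v n‖ * D ^ n) : z = 0 := by
  by_contra hz
  have hz' : 0 < ‖z‖ := norm_pos_iff.2 hz
  have h1 : Tendsto (fun n : ℕ => ‖z‖ ^ ((1 : ℝ) / n)) atTop (nhds 0) :=
    sm_of_le (fun _ => z) v C D hC hD hv h
  have h2 := tendsto_rpow_one_div hz'
  have := tendsto_nhds_unique h1 h2
  norm_num at this

private lemma sm_add (u v : ℕ → A)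
    (hu : Tendsto (fun n : ℕ => ‖u n‖ ^ ((1 : ℝ) / n)) atTop (nhds 0))
    (hv : Tendsto (fun n : ℕ => ‖v n‖ ^ ((1 : ℝ) / n)) atTop (nhds 0)) :
    Tendsto (fun n : ℕ => ‖u n + v n‖ ^ ((1 : ℝ) / n)) atTop (nhds 0) := by
  have key : ∀ n : ℕ, ‖u n + v n‖ ^ ((1 : ℝ) / n)
      ≤ (2 : ℝ) ^ ((1 : ℝ) / n) * max (‖u n‖ ^ ((1 : ℝ) / n)) (‖v n‖ ^ ((1 : ℝ) / n)) := by
    intro n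
    have e1 : ‖u n + v n‖ ≤ 2 * max ‖u n‖ ‖v n‖ := by
      refine le_trans (norm_add_le _ _) ?_
      have h1 := le_max_left ‖u n‖ ‖v n‖
      have h2 := le_max_right ‖u n‖ ‖v n‖
      linarith
    have e2 : ‖u n + v n‖ ^ ((1 : ℝ) / n) ≤ (2 * max ‖u n‖ ‖v n‖) ^ ((1 : ℝ) / n) :=
      Real.rpow_le_rpow (norm_nonneg _) e1 (by positivity)
    have hmx : (0 : ℝ) ≤ max ‖u n‖ ‖v n‖ := le_trans (norm_nonneg _) (le_max_left _ _)
    have e3 : (2 * max ‖u n‖ ‖v n‖) ^ ((1 : ℝ) / n)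
        = (2 : ℝ) ^ ((1 : ℝ) / n) * (max ‖u n‖ ‖v n‖) ^ ((1 : ℝ) / n) :=
      Real.mul_rpow (by norm_num) hmx
    have e4 : (max ‖u n‖ ‖v n‖) ^ ((1 : ℝ) / n)
        = max (‖u n‖ ^ ((1 : ℝ) / n)) (‖v n‖ ^ ((1 : ℝ) / n)) := by
      rcases le_total ‖u n‖ ‖v n‖ with h | h
      · rw [max_eq_right h, max_eq_right (Real.rpow_le_rpow (norm_nonneg _) h (by positivity))]
      · rw [max_eq_left h, max_eq_left (Real.rpow_le_rpow (norm_nonneg _) h (by positivity))]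
    rw [e3, e4] at e2
    exact e2
  have hlim : Tendsto (fun n : ℕ =>
      (2 : ℝ) ^ ((1 : ℝ) / n) * max (‖u n‖ ^ ((1 : ℝ) / n)) (‖v n‖ ^ ((1 : ℝ) / n)))
      atTop (nhds 0) := by
    have := (tendsto_rpow_one_div (by norm_num : (0 : ℝ) < 2)).mul (hu.max hv)
    simpa using this
  exact tendsto_of_tendsto_of_tendsto_of_le_of_le tendsto_const_nhds hlim
    (fun n => Real.rpow_nonneg (norm_nonneg _) _) key

variable (a d x : A)

private lemma L_pa (h2 : a ^ 2 * d = a * d * a) : a * (a * d) = (a * d) * a := by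
  have : a * (a * d) = a ^ 2 * d := by noncomm_ring
  rw [this, h2]

private lemma L_pp (h1 : a * d ^ 2 = d) (h2 : a ^ 2 * d = a * d * a) :
    (a * d) * (a * d) = a * d := by
  calc (a * d) * (a * d) = ((a * d) * a) * d := by noncomm_ring
    _ = (a ^ 2 * d) * d := by rw [← h2]
    _ = a * (a * d ^ 2) := by noncomm_ring
    _ = a * d := by rw [h1]

private lemma L_pan (h2 : a ^ 2 * d = a * d * a) :
    ∀ n : ℕ, a ^ n * (a * d) = (a * d) * a ^ n := by
  intro n
  induction n with
  | zero => simp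
  | succ n ih =>
      calc a ^ (n + 1) * (a * d) = a * (a ^ n * (a * d)) := by
            rw [pow_succ' a n, mul_assoc]
        _ = a * ((a * d) * a ^ n) := by rw [ih]
        _ = (a * (a * d)) * a ^ n := (mul_assoc a (a * d) (a ^ n)).symm
        _ = ((a * d) * a) * a ^ n := by rw [L_pa a d h2]
        _ = (a * d) * (a * a ^ n) := by rw [mul_assoc]
        _ = (a * d) * a ^ (n + 1) := by rw [← pow_succ' a n]

private lemma L_pn (h1 : a * d ^ 2 = d) (h2 : a ^ 2 * d = a * d * a) :
    ∀ n : ℕ, a ^ (n + 1) * d ^ (n + 1) = a * d := by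
  intro n
  induction n with
  | zero => simp
  | succ n ih =>
      have hd2 : d ^ (n + 2) = d ^ 2 * d ^ n := by
        rw [show n + 2 = 2 + n from by omega, pow_add]
      have ha2 : a ^ (n + 2) = a ^ (n + 1) * a := by rw [← pow_succ]
      calc a ^ (n + 2) * d ^ (n + 2) = (a ^ (n + 1) * a) * (d ^ 2 * d ^ n) := by rw [hd2, ha2]
        _ = a ^ (n + 1) * ((a * d ^ 2) * d ^ n) := by noncomm_ring
        _ = a ^ (n + 1) * (d * d ^ n) := by rw [h1]
        _ = a ^ (n + 1) * d ^ (n + 1) := by rw [← pow_succ' d n]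
        _ = a * d := ih

private lemma L_d (h1 : a * d ^ 2 = d) : ∀ n : ℕ, a ^ n * d ^ (n + 1) = d := by
  intro n
  induction n with
  | zero => simp
  | succ n ih =>
      have hd2 : d ^ (n + 2) = d ^ 2 * d ^ n := by
        rw [show n + 2 = 2 + n from by omega, pow_add]
      have ha2 : a ^ (n + 1) = a ^ n * a := by rw [← pow_succ]
      calc a ^ (n + 1) * d ^ (n + 2) = (a ^ n * a) * (d ^ 2 * d ^ n) := by rw [hd2, ha2]
        _ = a ^ n * ((a * d ^ 2) * d ^ n) := by noncomm_ring
        _ = a ^ n * (d * d ^ n) := by rw [h1]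
        _ = a ^ n * d ^ (n + 1) := by rw [← pow_succ' d n]
        _ = d := ih

private lemma L_dm (h1 : a * d ^ 2 = d) :
    ∀ n k : ℕ, a ^ n * d ^ (n + k + 1) = d ^ (k + 1) := by
  intro n k
  have h : d ^ (n + k + 1) = d ^ (n + 1) * d ^ k := by
    rw [show n + k + 1 = (n + 1) + k from by omega, pow_add]
  rw [h, ← mul_assoc, L_d a d h1, ← pow_succ' d k]

private lemma L_qp (h1 : a * d ^ 2 = d) (h2 : a ^ 2 * d = a * d * a) :
    (a - a * d * a) * (a * d) = 0 := by
  have e1 : (a * d * a) * (a * d) = a * (a * d) := by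
    calc (a * d * a) * (a * d) = (a * d) * (a * (a * d)) := by noncomm_ring
      _ = (a * d) * ((a * d) * a) := by rw [L_pa a d h2]
      _ = ((a * d) * (a * d)) * a := by noncomm_ring
      _ = (a * d) * a := by rw [L_pp a d h1 h2]
      _ = a * (a * d) := by rw [← L_pa a d h2]
  rw [sub_mul, e1, sub_self]

private lemma L_qn (h1 : a * d ^ 2 = d) (h2 : a ^ 2 * d = a * d * a) :
    ∀ n : ℕ, (a - a * d * a) ^ (n + 1) = a ^ (n + 1) - (a * d) * a ^ (n + 1) := by
  intro n
  induction n with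
  | zero => simp [mul_assoc]
  | succ n ih =>
      have key : (a ^ (n + 1) - (a * d) * a ^ (n + 1)) * (a - a * d * a)
          = a ^ (n + 2) - (a * d) * a ^ (n + 2) := by
        have c1 : a ^ (n + 1) * a = a ^ (n + 2) := by rw [← pow_succ]
        have c2 : a ^ (n + 1) * (a * d * a) = (a * d) * a ^ (n + 2) := by
          calc a ^ (n + 1) * (a * d * a) = (a ^ (n + 1) * (a * d)) * a := by
                noncomm_ring
            _ = ((a * d) * a ^ (n + 1)) * a := by rw [L_pan a d h2]
            _ = (a * d) * a ^ (n + 2) := by rw [mul_assoc, ← pow_succ]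
        have c3 : ((a * d) * a ^ (n + 1)) * a = (a * d) * a ^ (n + 2) := by
          rw [mul_assoc, ← pow_succ]
        have c4 : ((a * d) * a ^ (n + 1)) * (a * d * a) = (a * d) * a ^ (n + 2) := by
          calc ((a * d) * a ^ (n + 1)) * (a * d * a)
              = (a * d) * (a ^ (n + 1) * (a * d * a)) := by noncomm_ring
            _ = (a * d) * ((a * d) * a ^ (n + 2)) := by rw [c2]
            _ = ((a * d) * (a * d)) * a ^ (n + 2) := by noncomm_ring
            _ = (a * d) * a ^ (n + 2) := by rw [L_pp a d h1 h2]
        rw [sub_mul, mul_sub, mul_sub, c1, c2, c3, c4]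
        abel
      calc (a - a * d * a) ^ (n + 2)
          = (a - a * d * a) ^ (n + 1) * (a - a * d * a) := by rw [pow_succ]
        _ = (a ^ (n + 1) - (a * d) * a ^ (n + 1)) * (a - a * d * a) := by rw [ih]
        _ = a ^ (n + 2) - (a * d) * a ^ (n + 2) := key

private lemma L_qa (h1 : a * d ^ 2 = d) (h2 : a ^ 2 * d = a * d * a) :
    ∀ k n : ℕ, (a - a * d * a) ^ (k + 1) * a ^ n = (a - a * d * a) ^ (k + 1 + n) := by
  intro k n
  induction n with
  | zero => simp
  | succ n ih =>
      have hsplit : a = (a - a * d * a) + (a * d) * a := by rw [mul_assoc]; abel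
      have h5 : (a - a * d * a) ^ (k + 1 + n)
          = (a - a * d * a) ^ (k + n) * (a - a * d * a) := by
        rw [← pow_succ]
        ring_nf
      have hqp : (a - a * d * a) ^ (k + 1 + n) * ((a * d) * a) = 0 := by
        calc (a - a * d * a) ^ (k + 1 + n) * ((a * d) * a)
            = ((a - a * d * a) ^ (k + n) * (a - a * d * a)) * ((a * d) * a) := by rw [← h5]
          _ = (a - a * d * a) ^ (k + n) * (((a - a * d * a) * (a * d)) * a) := by
              simp only [mul_assoc]
          _ = 0 := by rw [L_qp a d h1 h2, zero_mul, mul_zero]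
      calc (a - a * d * a) ^ (k + 1) * a ^ (n + 1)
          = ((a - a * d * a) ^ (k + 1) * a ^ n) * a := by rw [pow_succ a n, ← mul_assoc]
        _ = (a - a * d * a) ^ (k + 1 + n) * a := by rw [ih]
        _ = (a - a * d * a) ^ (k + 1 + n) * ((a - a * d * a) + (a * d) * a) := by
            rw [← hsplit]
        _ = (a - a * d * a) ^ (k + 1 + n) * (a - a * d * a)
            + (a - a * d * a) ^ (k + 1 + n) * ((a * d) * a) := by rw [mul_add]
        _ = (a - a * d * a) ^ (k + 1 + n) * (a - a * d * a) + 0 := by rw [hqp]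
        _ = (a - a * d * a) ^ (k + 1 + n + 1) := by rw [add_zero, ← pow_succ]

private lemma L_x (hx1 : x = a * x ^ 2) : ∀ n : ℕ, x = a ^ n * x ^ (n + 1) := by
  intro n
  induction n with
  | zero => simp
  | succ n ih =>
      have hstep : x ^ (n + 1) = a * x ^ (n + 2) := by
        calc x ^ (n + 1) = x * x ^ n := by rw [pow_succ' x n]
          _ = (a * x ^ 2) * x ^ n := by rw [← hx1]
          _ = a * (x ^ 2 * x ^ n) := by rw [mul_assoc]
          _ = a * x ^ (n + 2) := by rw [← pow_add]; ring_nf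
      calc x = a ^ n * x ^ (n + 1) := ih
        _ = a ^ n * (a * x ^ (n + 2)) := by rw [← hstep]
        _ = (a ^ n * a) * x ^ (n + 2) := by rw [mul_assoc]
        _ = a ^ (n + 1) * x ^ (n + 2) := by rw [← pow_succ]

private lemma Z_qx (h1 : a * d ^ 2 = d) (h2 : a ^ 2 * d = a * d * a)
    (hq : Quasinilpotent (a - a * d * a)) (hx1 : x = a * x ^ 2) (k : ℕ) :
    (a - a * d * a) ^ (k + 1) * x = 0 := by
  apply eq_zero_of_bound _ (fun n => (a - a * d * a) ^ n)
    (‖(a - a * d * a) ^ (k + 1)‖ * ‖x‖) ‖x‖ (by positivity) (norm_nonneg x) hq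
  intro n hn
  have e1 : (a - a * d * a) ^ (k + 1) * x
      = ((a - a * d * a) ^ (k + 1) * (a - a * d * a) ^ n) * (x * x ^ n) := by
    calc (a - a * d * a) ^ (k + 1) * x
        = (a - a * d * a) ^ (k + 1) * (a ^ n * x ^ (n + 1)) := by rw [← L_x a x hx1 n]
      _ = ((a - a * d * a) ^ (k + 1) * a ^ n) * x ^ (n + 1) :=
          (mul_assoc _ _ _).symm
      _ = (a - a * d * a) ^ (k + 1 + n) * x ^ (n + 1) := by rw [L_qa a d h1 h2 k n]
      _ = ((a - a * d * a) ^ (k + 1) * (a - a * d * a) ^ n) * (x * x ^ n) := by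
          rw [pow_add, pow_succ' x n]
  rw [e1]
  calc ‖((a - a * d * a) ^ (k + 1) * (a - a * d * a) ^ n) * (x * x ^ n)‖
      ≤ ‖(a - a * d * a) ^ (k + 1) * (a - a * d * a) ^ n‖ * ‖x * x ^ n‖ := norm_mul_le _ _
    _ ≤ (‖(a - a * d * a) ^ (k + 1)‖ * ‖(a - a * d * a) ^ n‖) * (‖x‖ * ‖x ^ n‖) :=
        mul_le_mul (norm_mul_le _ _) (norm_mul_le _ _) (norm_nonneg _) (by positivity)
    _ ≤ (‖(a - a * d * a) ^ (k + 1)‖ * ‖(a - a * d * a) ^ n‖) * (‖x‖ * ‖x‖ ^ n) := by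
        have hxx := norm_pow_le' x (show 0 < n by omega)
        gcongr
    _ = ‖(a - a * d * a) ^ (k + 1)‖ * ‖x‖ * ‖(a - a * d * a) ^ n‖ * ‖x‖ ^ n := by ring

private lemma Z_ep (h1 : a * d ^ 2 = d) (h2 : a ^ 2 * d = a * d * a)
    (hx3 : Tendsto (fun n : ℕ => ‖a ^ n - a * x * a ^ n‖ ^ ((1 : ℝ) / n)) atTop (nhds 0)) :
    (a * x) * (a * d) = a * d := by
  have hz : (a * x) * (a * d) - a * d = 0 := by
    apply eq_zero_of_bound _ (fun n => a ^ n - a * x * a ^ n) 1 ‖d‖ zero_le_one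
      (norm_nonneg d) hx3
    intro n hn
    obtain ⟨j, rfl⟩ : ∃ j, n = j + 1 := ⟨n - 1, by omega⟩
    have e1 : (a * x) * (a * d) - a * d
        = -((a ^ (j + 1) - a * x * a ^ (j + 1)) * d ^ (j + 1)) := by
      calc (a * x) * (a * d) - a * d
          = (a * x) * (a ^ (j + 1) * d ^ (j + 1)) - a ^ (j + 1) * d ^ (j + 1) := by
            rw [L_pn a d h1 h2 j]
        _ = ((a * x) * a ^ (j + 1)) * d ^ (j + 1) - a ^ (j + 1) * d ^ (j + 1) := by
            rw [← mul_assoc (a * x) (a ^ (j + 1)) (d ^ (j + 1))]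
        _ = -((a ^ (j + 1) - a * x * a ^ (j + 1)) * d ^ (j + 1)) := by
            rw [sub_mul, neg_sub]
    rw [e1, norm_neg]
    calc ‖(a ^ (j + 1) - a * x * a ^ (j + 1)) * d ^ (j + 1)‖
        ≤ ‖a ^ (j + 1) - a * x * a ^ (j + 1)‖ * ‖d ^ (j + 1)‖ := norm_mul_le _ _
      _ ≤ ‖a ^ (j + 1) - a * x * a ^ (j + 1)‖ * ‖d‖ ^ (j + 1) := by
          have := norm_pow_le' d (show 0 < j + 1 by omega)
          gcongr
      _ = 1 * ‖a ^ (j + 1) - a * x * a ^ (j + 1)‖ * ‖d‖ ^ (j + 1) := by ring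
  exact sub_eq_zero.mp hz


private lemma aux_main [StarRing A] (m : ℕ) (hm : 1 ≤ m)
    (hgrd : IsGRD a d)
    (hx1 : x = a * x ^ 2)
    (hx2 : star (star (a ^ m) * a ^ (m + 1) * x) = star (a ^ m) * a ^ (m + 1) * x)
    (hx3 : Tendsto (fun n : ℕ => ‖a ^ n - a * x * a ^ n‖ ^ ((1 : ℝ) / n)) atTop (nhds 0)) :
    IsMGRGI m a d (a * d * x) := by
  obtain ⟨h1, h2, hq⟩ := hgrd
  obtain ⟨k, rfl⟩ : ∃ k, m = k + 1 := ⟨m - 1, by omega⟩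
  have hep : (a * x) * (a * d) = a * d := Z_ep a d x h1 h2 hx3
  refine ⟨?_, ?_, ?_⟩
  · -- (i)  a*d*x = a * (a*d*x)^2
    have : a * ((a * d * x) * (a * d * x)) = a * d * x := by
      calc a * ((a * d * x) * (a * d * x))
          = (a * (a * d)) * (x * ((a * d) * x)) := by noncomm_ring
        _ = ((a * d) * a) * (x * ((a * d) * x)) := by rw [L_pa a d h2]
        _ = (a * d) * (((a * x) * (a * d)) * x) := by noncomm_ring
        _ = (a * d) * ((a * d) * x) := by rw [hep]
        _ = ((a * d) * (a * d)) * x := (mul_assoc _ _ _).symm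
        _ = (a * d) * x := by rw [L_pp a d h1 h2]
    rw [pow_two]
    exact this.symm
  · -- (ii)  star (a*d) * a^(m+1) * (a*d*x) = star (a*d) * a^m
    have hqx : (a - a * d * a) ^ (k + 1 + 1) * x = 0 :=
      Z_qx a d x h1 h2 hq hx1 (k + 1)
    have hw : (a * d) * (a ^ (k + 1 + 1) * x) = a ^ (k + 1 + 1) * x := by
      have e := L_qn a d h1 h2 (k + 1)
      have h0 : (a ^ (k + 1 + 1) - (a * d) * a ^ (k + 1 + 1)) * x = 0 := by
        rw [← e]; exact hqx
      rw [sub_mul, mul_assoc] at h0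
      have := sub_eq_zero.mp h0
      exact this.symm
    set T : A := star (a ^ (k + 1)) * a ^ (k + 1)
        - star (a ^ (k + 1)) * (a ^ (k + 1 + 1) * x) with hTdef
    have hTstar : star T = T := by
      have hS2 : star (star (a ^ (k + 1)) * (a ^ (k + 1 + 1) * x))
          = star (a ^ (k + 1)) * (a ^ (k + 1 + 1) * x) := by
        have h' := hx2
        rw [mul_assoc] at h'
        exact h'
      have hS1 : star (star (a ^ (k + 1)) * a ^ (k + 1))
          = star (a ^ (k + 1)) * a ^ (k + 1) := by
        rw [star_mul, star_star]
      rw [hTdef, star_sub, hS1, hS2]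
    have hTd : T * d ^ (k + 1) = 0 := by
      apply eq_zero_of_bound _ (fun n => a ^ n - a * x * a ^ n)
        (‖star (a ^ (k + 1)) * a ^ (k + 1)‖ * ‖d ^ (k + 1)‖) ‖d‖
        (by positivity) (norm_nonneg d) hx3
      intro n hn
      have eTa : T * a ^ n
          = (star (a ^ (k + 1)) * a ^ (k + 1)) * (a ^ n - a * x * a ^ n) := by
        have eb : (a ^ (k + 1 + 1) * x) * a ^ n = a ^ (k + 1) * ((a * x) * a ^ n) := by
          rw [pow_succ a (k + 1)]
          noncomm_ring
        have eb2 : (star (a ^ (k + 1)) * (a ^ (k + 1 + 1) * x)) * a ^ n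
            = (star (a ^ (k + 1)) * a ^ (k + 1)) * ((a * x) * a ^ n) := by
          calc (star (a ^ (k + 1)) * (a ^ (k + 1 + 1) * x)) * a ^ n
              = star (a ^ (k + 1)) * ((a ^ (k + 1 + 1) * x) * a ^ n) := mul_assoc _ _ _
            _ = star (a ^ (k + 1)) * (a ^ (k + 1) * ((a * x) * a ^ n)) := by rw [eb]
            _ = (star (a ^ (k + 1)) * a ^ (k + 1)) * ((a * x) * a ^ n) :=
                (mul_assoc _ _ _).symm
        rw [hTdef, sub_mul, mul_sub, eb2]
      have edm : d ^ (k + 1) = a ^ n * (d ^ n * d ^ (k + 1)) := by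
        rw [show d ^ n * d ^ (k + 1) = d ^ (n + k + 1) from by rw [← pow_add]; ring_nf]
        rw [L_dm a d h1 n k]
      have e1 : T * d ^ (k + 1)
          = ((star (a ^ (k + 1)) * a ^ (k + 1)) * (a ^ n - a * x * a ^ n))
            * (d ^ n * d ^ (k + 1)) := by
        calc T * d ^ (k + 1) = T * (a ^ n * (d ^ n * d ^ (k + 1))) := by rw [← edm]
          _ = (T * a ^ n) * (d ^ n * d ^ (k + 1)) := (mul_assoc _ _ _).symm
          _ = ((star (a ^ (k + 1)) * a ^ (k + 1)) * (a ^ n - a * x * a ^ n))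
              * (d ^ n * d ^ (k + 1)) := by rw [eTa]
      rw [e1]
      calc ‖((star (a ^ (k + 1)) * a ^ (k + 1)) * (a ^ n - a * x * a ^ n))
            * (d ^ n * d ^ (k + 1))‖
          ≤ ‖(star (a ^ (k + 1)) * a ^ (k + 1)) * (a ^ n - a * x * a ^ n)‖
            * ‖d ^ n * d ^ (k + 1)‖ := norm_mul_le _ _
        _ ≤ (‖star (a ^ (k + 1)) * a ^ (k + 1)‖ * ‖a ^ n - a * x * a ^ n‖)
            * (‖d ^ n‖ * ‖d ^ (k + 1)‖) :=
            mul_le_mul (norm_mul_le _ _) (norm_mul_le _ _) (norm_nonneg _) (by positivity)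
        _ ≤ (‖star (a ^ (k + 1)) * a ^ (k + 1)‖ * ‖a ^ n - a * x * a ^ n‖)
            * (‖d‖ ^ n * ‖d ^ (k + 1)‖) := by
            have := norm_pow_le' d (show 0 < n by omega)
            gcongr
        _ = ‖star (a ^ (k + 1)) * a ^ (k + 1)‖ * ‖d ^ (k + 1)‖
            * ‖a ^ n - a * x * a ^ n‖ * ‖d‖ ^ n := by ring
    have hTd2 : star (d ^ (k + 1)) * T = 0 := by
      have hcs := congrArg star hTd
      rwa [star_mul, hTstar, star_zero] at hcs
    have hpm : a ^ (k + 1) * d ^ (k + 1) = a * d := L_pn a d h1 h2 k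
    have e2 : a ^ (k + 1 + 1) * ((a * d) * x) = (a * d) * (a ^ (k + 1 + 1) * x) := by
      calc a ^ (k + 1 + 1) * ((a * d) * x)
          = (a ^ (k + 1 + 1) * (a * d)) * x := (mul_assoc _ _ _).symm
        _ = ((a * d) * a ^ (k + 1 + 1)) * x := by rw [L_pan a d h2]
        _ = (a * d) * (a ^ (k + 1 + 1) * x) := mul_assoc _ _ _
    have eS2 : star (a ^ (k + 1)) * (a ^ (k + 1 + 1) * x)
        = star (a ^ (k + 1)) * a ^ (k + 1) - T := by
      rw [hTdef]; abel
    calc star (a * d) * a ^ (k + 1 + 1) * (a * d * x)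
        = star (a * d) * (a ^ (k + 1 + 1) * ((a * d) * x)) := by
          simp only [mul_assoc]
      _ = star (a * d) * ((a * d) * (a ^ (k + 1 + 1) * x)) := by rw [e2]
      _ = star (a * d) * (a ^ (k + 1 + 1) * x) := by rw [hw]
      _ = star (a ^ (k + 1) * d ^ (k + 1)) * (a ^ (k + 1 + 1) * x) := by rw [hpm]
      _ = star (d ^ (k + 1)) * (star (a ^ (k + 1)) * (a ^ (k + 1 + 1) * x)) := by
          rw [star_mul, mul_assoc]
      _ = star (d ^ (k + 1)) * (star (a ^ (k + 1)) * a ^ (k + 1) - T) := by rw [eS2]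
      _ = star (d ^ (k + 1)) * (star (a ^ (k + 1)) * a ^ (k + 1))
          - star (d ^ (k + 1)) * T := mul_sub _ _ _
      _ = star (d ^ (k + 1)) * (star (a ^ (k + 1)) * a ^ (k + 1)) := by
          rw [hTd2, sub_zero]
      _ = star (a ^ (k + 1) * d ^ (k + 1)) * a ^ (k + 1) := by
          rw [star_mul, mul_assoc]
      _ = star (a * d) * a ^ (k + 1) := by rw [hpm]
  · -- (iii) the spectral condition
    have hbd : Tendsto (fun n : ℕ =>
        ‖(a * d) * (a ^ n - a * x * a ^ n)‖ ^ ((1 : ℝ) / n)) atTop (nhds 0) := by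
      apply sm_of_le _ (fun n => a ^ n - a * x * a ^ n) ‖a * d‖ 1
        (norm_nonneg _) zero_le_one hx3
      intro n hn
      rw [one_pow, mul_one]
      exact norm_mul_le _ _
    have hsum := sm_add (fun n => (a - a * d * a) ^ n)
      (fun n => (a * d) * (a ^ n - a * x * a ^ n)) hq hbd
    refine hsum.congr' ?_
    refine eventually_atTop.2 ⟨1, fun n hn => ?_⟩
    obtain ⟨j, rfl⟩ : ∃ j, n = j + 1 := ⟨n - 1, by omega⟩
    have heq : (a - a * d * a) ^ (j + 1) + (a * d) * (a ^ (j + 1) - a * x * a ^ (j + 1))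
        = a ^ (j + 1) - a * (a * d * x) * a ^ (j + 1) := by
      rw [L_qn a d h1 h2 j, mul_sub]
      have e3 : a * (a * d * x) * a ^ (j + 1) = (a * d) * (a * x * a ^ (j + 1)) := by
        calc a * (a * d * x) * a ^ (j + 1)
            = ((a * (a * d)) * x) * a ^ (j + 1) := by noncomm_ring
          _ = (((a * d) * a) * x) * a ^ (j + 1) := by rw [L_pa a d h2]
          _ = (a * d) * (a * x * a ^ (j + 1)) := by noncomm_ring
      rw [e3]
      abel
    simp only [heq]

private lemma aux_fwd [StarRing A] (m : ℕ)
    (hgrd : IsGRD a d) (hmg : IsMGRGI m a d x) :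
    x = a * x ^ 2 ∧
      star (star (a ^ m) * a ^ (m + 1) * x) = star (a ^ m) * a ^ (m + 1) * x ∧
      Tendsto (fun n : ℕ => ‖a ^ n - a * x * a ^ n‖ ^ ((1 : ℝ) / n)) atTop (nhds 0) := by
  obtain ⟨h1, h2, hq⟩ := hgrd
  obtain ⟨hx1, hx2, hx3⟩ := hmg
  refine ⟨hx1, ?_, hx3⟩
  have hqx : (a - a * d * a) ^ (m + 1) * x = 0 :=
    Z_qx a d x h1 h2 hq hx1 m
  have hw : (a * d) * (a ^ (m + 1) * x) = a ^ (m + 1) * x := by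
    have e := L_qn a d h1 h2 m
    have h0 : (a ^ (m + 1) - (a * d) * a ^ (m + 1)) * x = 0 := by
      rw [← e]; exact hqx
    rw [sub_mul, mul_assoc] at h0
    exact (sub_eq_zero.mp h0).symm
  have hx2' : star (a * d) * (a ^ (m + 1) * x) = star (a * d) * a ^ m := by
    rw [← mul_assoc]; exact hx2
  have hstar : star (a ^ m) * (a * d) = star (a ^ (m + 1) * x) * (a * d) := by
    calc star (a ^ m) * (a * d) = star (star (a * d) * a ^ m) := by
          rw [star_mul, star_star]
      _ = star (star (a * d) * (a ^ (m + 1) * x)) := by rw [hx2']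
      _ = star (a ^ (m + 1) * x) * (a * d) := by rw [star_mul, star_star]
  have key : star (a ^ m) * a ^ (m + 1) * x
      = star (a ^ (m + 1) * x) * (a ^ (m + 1) * x) := by
    calc star (a ^ m) * a ^ (m + 1) * x
        = star (a ^ m) * (a ^ (m + 1) * x) := mul_assoc _ _ _
      _ = star (a ^ m) * ((a * d) * (a ^ (m + 1) * x)) := by rw [hw]
      _ = (star (a ^ m) * (a * d)) * (a ^ (m + 1) * x) := (mul_assoc _ _ _).symm
      _ = (star (a ^ (m + 1) * x) * (a * d)) * (a ^ (m + 1) * x) := by rw [hstar]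
      _ = star (a ^ (m + 1) * x) * ((a * d) * (a ^ (m + 1) * x)) := mul_assoc _ _ _
      _ = star (a ^ (m + 1) * x) * (a ^ (m + 1) * x) := by rw [hw]
  rw [key, star_mul, star_star]

end MGRGIHelpers

theorem mgrgi_iff_symm {A : Type*} [NormedRing A] [NormedAlgebra ℂ A] [CompleteSpace A]
    [StarRing A] (a : A) (m : ℕ) (hm : 1 ≤ m) :
    ((∃ d x, IsGRD a d ∧ IsMGRGI m a d x) ↔
      ((∃ d, IsGRD a d) ∧ ∃ x, x = a * x ^ 2 ∧
        star (star (a ^ m) * a ^ (m + 1) * x) = star (a ^ m) * a ^ (m + 1) * x ∧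
        Filter.Tendsto (fun n : ℕ => ‖a ^ n - a * x * a ^ n‖ ^ ((1 : ℝ) / n))
          Filter.atTop (nhds 0))) ∧
    (∀ d x, IsGRD a d → (x = a * x ^ 2 ∧
        star (star (a ^ m) * a ^ (m + 1) * x) = star (a ^ m) * a ^ (m + 1) * x ∧
        Filter.Tendsto (fun n : ℕ => ‖a ^ n - a * x * a ^ n‖ ^ ((1 : ℝ) / n))
          Filter.atTop (nhds 0)) →
      IsMGRGI m a d (a * d * x)) := by
  constructor
  · constructor
    · rintro ⟨d, x, hgrd, hmg⟩
      exact ⟨⟨d, hgrd⟩, x, aux_fwd a d x m hgrd hmg⟩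
    · rintro ⟨⟨d, hgrd⟩, x, hx1, hx2, hx3⟩
      exact ⟨d, a * d * x, hgrd, aux_main a d x m hm hgrd hx1 hx2 hx3⟩
  · intro d x hgrd hx
    exact aux_main a d x m hm hgrd hx.1 hx.2.1 hx.2.2
end

section
/- Decomposition characterization: a ∈ A has an m-generalized right group inverse if and only if a admits an m-generalized group decomposition, i.e. there exist x, y ∈ A with a = x + y, x^* a^{m−1} y = 0, yx = 0, x has a right group inverse, and y is quasinilpotent. In this case a_r^{g_m} equals the right group inverse of x. -/
section Aux
open Filter Topology

private lemma rootA1 {c : ℕ → ℝ} (hc : ∀ n, 0 ≤ c n)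
    (h : Tendsto (fun n : ℕ => (c n) ^ ((1:ℝ)/n)) atTop (nhds 0))
    {ε : ℝ} (hε : 0 < ε) : ∀ᶠ n in atTop, c n ≤ ε ^ n := by
  have h1 : ∀ᶠ n : ℕ in atTop, (c n) ^ ((1:ℝ)/n) < ε :=
    Tendsto.eventually_lt_const hε h
  filter_upwards [h1, eventually_ge_atTop 1] with n hn hn1
  have hne : (n : ℝ) ≠ 0 := Nat.cast_ne_zero.mpr (by omega)
  have : ((c n) ^ ((1:ℝ)/n)) ^ n ≤ ε ^ n :=
    pow_le_pow_left₀ (Real.rpow_nonneg (hc n) _) hn.le n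
  rwa [← Real.rpow_natCast ((c n) ^ ((1:ℝ)/n)) n, ← Real.rpow_mul (hc n),
    one_div, inv_mul_cancel₀ hne, Real.rpow_one] at this

private lemma rootA2 {c : ℕ → ℝ} (hc : ∀ n, 0 ≤ c n)
    (h : ∀ ε : ℝ, 0 < ε → ∀ᶠ n in atTop, c n ≤ ε ^ n) :
    Tendsto (fun n : ℕ => (c n) ^ ((1:ℝ)/n)) atTop (nhds 0) := by
  rw [NormedAddCommGroup.tendsto_nhds_zero]
  intro ε hε
  filter_upwards [h (ε/2) (by positivity), eventually_ge_atTop 1] with n hn hn1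
  have hne : (n : ℝ) ≠ 0 := Nat.cast_ne_zero.mpr (by omega)
  rw [Real.norm_eq_abs, abs_of_nonneg (Real.rpow_nonneg (hc n) _)]
  calc (c n) ^ ((1:ℝ)/n) ≤ ((ε/2) ^ n) ^ ((1:ℝ)/n) :=
        Real.rpow_le_rpow (hc n) hn (by positivity)
    _ = ε/2 := by
        rw [← Real.rpow_natCast (ε/2) n, ← Real.rpow_mul (by positivity),
          mul_one_div, div_self hne, Real.rpow_one]
    _ < ε := half_lt_self hε

private lemma rootA3 {A : Type*} [NormedRing A] {c : ℕ → ℝ}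
    (h : ∀ ε : ℝ, 0 < ε → ∀ᶠ n in atTop, c n ≤ ε ^ n)
    {W : ℝ} (hW : 0 ≤ W) (k : ℕ) {E : A}
    (hE : ∀ n : ℕ, ‖E‖ ≤ c (n + k + 1) * W ^ (n + 1)) : E = 0 := by
  have hW1 : (0:ℝ) < W + 1 := by linarith
  set ε : ℝ := (2 * (W+1))⁻¹ with hεdef
  have hε : 0 < ε := by positivity
  obtain ⟨N, hN⟩ := eventually_atTop.mp (h ε hε)
  have key : ∀ᶠ n : ℕ in atTop, ‖E‖ ≤ (2⁻¹ : ℝ) ^ (n+(k+1)) := by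
    refine eventually_atTop.mpr ⟨N, fun n hn => ?_⟩
    have hc' := hN (n+k+1) (by omega)
    calc ‖E‖ ≤ c (n+k+1) * W^(n+1) := hE n
      _ ≤ ε^(n+k+1) * (W+1)^(n+k+1) := by
          refine mul_le_mul hc' ?_ (by positivity) (by positivity)
          calc W^(n+1) ≤ (W+1)^(n+1) := pow_le_pow_left₀ hW (by linarith) _
            _ ≤ (W+1)^(n+k+1) := pow_le_pow_right₀ (by linarith) (by omega)
      _ = (ε * (W+1))^(n+k+1) := (mul_pow _ _ _).symm
      _ = (2⁻¹:ℝ)^(n+(k+1)) := by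
          rw [show ε * (W+1) = 2⁻¹ by rw [hεdef]; field_simp, ← add_assoc]
  have hlim : Tendsto (fun n : ℕ => (2⁻¹:ℝ)^(n+(k+1))) atTop (nhds 0) :=
    (tendsto_pow_atTop_nhds_zero_of_lt_one (by norm_num) (by norm_num)).comp
      (tendsto_add_atTop_nat (k+1))
  have h0 : ‖E‖ ≤ 0 := ge_of_tendsto hlim key
  simpa using le_antisymm h0 (norm_nonneg E)

private lemma rootA4 {cu cv : ℕ → ℝ}
    (h : ∀ ε : ℝ, 0 < ε → ∀ᶠ n in atTop, cu n ≤ ε ^ n)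
    {K : ℝ} (hK : 0 ≤ K) (k : ℕ)
    (hv : ∀ᶠ n in atTop, cv n ≤ K * cu (n - k)) :
    ∀ ε : ℝ, 0 < ε → ∀ᶠ n in atTop, cv n ≤ ε ^ n := by
  intro ε hε
  have h2 := h (ε/2) (by positivity)
  have h3 : Tendsto (fun j : ℕ => K * (2⁻¹:ℝ)^j) atTop (nhds 0) := by
    simpa using (tendsto_pow_atTop_nhds_zero_of_lt_one (by norm_num)
      (by norm_num : (2⁻¹:ℝ) < 1)).const_mul K
  have h4 : ∀ᶠ j : ℕ in atTop, K * (2⁻¹:ℝ)^j ≤ ε^k :=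
    (Tendsto.eventually_lt_const (by positivity) h3).mono fun j hj => hj.le
  have hsub : Tendsto (fun n : ℕ => n - k) atTop atTop := tendsto_sub_atTop_nat k
  filter_upwards [hv, hsub.eventually h2, hsub.eventually h4,
    eventually_ge_atTop k] with n h5 h6 h7 h8
  calc cv n ≤ K * cu (n-k) := h5
    _ ≤ K * (ε/2)^(n-k) := mul_le_mul_of_nonneg_left h6 hK
    _ = (K * (2⁻¹)^(n-k)) * ε^(n-k) := by
        rw [div_eq_mul_inv, mul_comm ε, mul_pow]; ring
    _ ≤ ε^k * ε^(n-k) := mul_le_mul_of_nonneg_right h7 (by positivity)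
    _ = ε^n := by rw [← pow_add]; congr 1; omega

private lemma pow_sandwich {A : Type*} [Ring A] {P a : A} (h : (1-P)*(a*P) = 0) :
    ∀ n, 1 ≤ n → ((1-P)*a)^n = (1-P)*a^n := by
  have key : ((1-P)*a)*(1-P) = (1-P)*a := by
    rw [mul_one_sub, mul_assoc, h, sub_zero]
  intro n hn
  induction n with
  | zero => omega
  | succ n ih =>
    rcases Nat.lt_or_ge n 1 with h1 | h1
    · interval_cases n
      · simp
    · calc ((1-P)*a)^(n+1) = ((1-P)*a)*((1-P)*a)^n := pow_succ' _ _
        _ = ((1-P)*a)*((1-P)*a^n) := by rw [ih h1]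
        _ = (((1-P)*a)*(1-P))*a^n := (mul_assoc _ _ _).symm
        _ = ((1-P)*a)*a^n := by rw [key]
        _ = (1-P)*a^(n+1) := by rw [mul_assoc, ← pow_succ']

private lemma part_fwd {A : Type*} [NormedRing A] [StarRing A]
    (a d w : A) (k : ℕ)
    (hd1 : a * d ^ 2 = d) (hd2 : a ^ 2 * d = a * d * a)
    (hd3 : Quasinilpotent (a - a * d * a))
    (hw1 : w = a * w ^ 2)
    (hw2 : star (a * d) * a ^ (k + 1 + 1) * w = star (a * d) * a ^ (k + 1))
    (hw3 : Filter.Tendsto (fun n : ℕ => ‖a ^ n - a * w * a ^ n‖ ^ ((1:ℝ)/n))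
      Filter.atTop (nhds 0)) :
    ∃ x y z, a = x + y ∧ star x * a ^ k * y = 0 ∧ y * x = 0 ∧
      (x * z ^ 2 = z ∧ x ^ 2 * z = x ∧ x * z * x = x) ∧ Quasinilpotent y := by
  set f := a * d with hf
  set g := a * w with hg
  have hfa : f * a = a * f := by
    rw [← hd2, pow_two, mul_assoc, ← hf]
  have hfd : f * d = d := by
    rw [hf, mul_assoc, ← pow_two, hd1]
  have hff : f * f = f := by
    calc f * f = (f * a) * d := by rw [hf]; exact (mul_assoc _ _ _).symm
      _ = (a * f) * d := by rw [hfa]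
      _ = a * (f * d) := mul_assoc _ _ _
      _ = f := by rw [hfd, hf]
  have hy03 : Quasinilpotent (a - f * a) := hd3
  have hy0 : a - f * a = (1-f)*a := by rw [sub_mul, one_mul]
  have hfaf : (1-f)*(a*f) = 0 := by
    rw [← hfa, ← mul_assoc, sub_mul, one_mul, hff, sub_self, zero_mul]
  have hy0n : ∀ n, 1 ≤ n → (a - f*a)^n = (1-f)*a^n := by
    intro n hn; rw [hy0]; exact pow_sandwich hfaf n hn
  have hcw : ∀ ε : ℝ, 0 < ε → ∀ᶠ n in Filter.atTop, ‖a ^ n - g * a ^ n‖ ≤ ε ^ n :=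
    fun ε hε => rootA1 (fun n => norm_nonneg _) hw3 hε
  have hcy : ∀ ε : ℝ, 0 < ε → ∀ᶠ n in Filter.atTop, ‖(a - f*a) ^ n‖ ≤ ε ^ n :=
    fun ε hε => rootA1 (fun n => norm_nonneg _) hy03 hε
  have hUg : ∀ n : ℕ, (1-g)*a^n = a^n - g*a^n := by
    intro n; rw [sub_mul, one_mul]
  have hwn : ∀ n : ℕ, w = a^n * w^(n+1) := by
    intro n
    induction n with
    | zero => simp
    | succ n ih =>
      have h1 : a * w^(n+2) = w^(n+1) := by
        calc a * w^(n+2) = a * (w^2 * w^n) := by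
              rw [show n+2 = 2+n by omega, pow_add]
          _ = (a * w^2) * w^n := (mul_assoc _ _ _).symm
          _ = w * w^n := by rw [← hw1]
          _ = w^(n+1) := (pow_succ' w n).symm
      calc w = a^n * w^(n+1) := ih
        _ = a^n * (a * w^(n+2)) := by rw [h1]
        _ = (a^n * a) * w^(n+2) := (mul_assoc _ _ _).symm
        _ = a^(n+1) * w^(n+2) := by rw [pow_succ a n]
  have hgn : ∀ n : ℕ, g = a^(n+1) * w^(n+1) := by
    intro n
    calc g = a * w := hg
      _ = a * (a^n * w^(n+1)) := by rw [← hwn n]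
      _ = (a * a^n) * w^(n+1) := (mul_assoc _ _ _).symm
      _ = a^(n+1) * w^(n+1) := by rw [← pow_succ']
  have hgagn : ∀ j : ℕ, (1-g)*(a^j*g) = 0 := by
    intro j
    refine rootA3 hcw (norm_nonneg w) j ?_
    intro n
    have hid : (1-g)*(a^j*g) = (a^(n+j+1) - g*a^(n+j+1)) * w^(n+1) := by
      calc (1-g)*(a^j*g) = (1-g)*(a^j*(a^(n+1)*w^(n+1))) := by rw [← hgn n]
        _ = (1-g)*((a^j*a^(n+1))*w^(n+1)) := by rw [mul_assoc]
        _ = (1-g)*(a^(n+j+1)*w^(n+1)) := by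
            rw [← pow_add, show j+(n+1) = n+j+1 by omega]
        _ = ((1-g)*a^(n+j+1))*w^(n+1) := (mul_assoc _ _ _).symm
        _ = (a^(n+j+1) - g*a^(n+j+1)) * w^(n+1) := by rw [hUg]
    rw [hid]
    calc ‖(a^(n+j+1) - g*a^(n+j+1)) * w^(n+1)‖
        ≤ ‖a^(n+j+1) - g*a^(n+j+1)‖ * ‖w^(n+1)‖ := norm_mul_le _ _
      _ ≤ ‖a^(n+j+1) - g*a^(n+j+1)‖ * ‖w‖^(n+1) :=
          mul_le_mul_of_nonneg_left (norm_pow_le' w (by omega)) (norm_nonneg _)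
  have hfag : (1-f)*(a*g) = 0 := by
    refine rootA3 hcy (norm_nonneg w) 1 ?_
    intro n
    have hid : (1-f)*(a*g) = (a - f*a)^(n+1+1) * w^(n+1) := by
      calc (1-f)*(a*g) = (1-f)*(a*(a^(n+1)*w^(n+1))) := by rw [← hgn n]
        _ = (1-f)*((a*a^(n+1))*w^(n+1)) := by rw [mul_assoc]
        _ = (1-f)*(a^(n+1+1)*w^(n+1)) := by rw [← pow_succ']
        _ = ((1-f)*a^(n+1+1))*w^(n+1) := (mul_assoc _ _ _).symm
        _ = (a - f*a)^(n+1+1) * w^(n+1) := by rw [hy0n (n+1+1) (by omega)]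
    rw [hid]
    calc ‖(a - f*a)^(n+1+1) * w^(n+1)‖
        ≤ ‖(a - f*a)^(n+1+1)‖ * ‖w^(n+1)‖ := norm_mul_le _ _
      _ ≤ ‖(a - f*a)^(n+1+1)‖ * ‖w‖^(n+1) :=
          mul_le_mul_of_nonneg_left (norm_pow_le' w (by omega)) (norm_nonneg _)
  have hgg : g * g = g := by
    have h0 := hgagn 0
    rw [pow_zero, one_mul, sub_mul, one_mul, sub_eq_zero] at h0
    exact h0.symm
  have hgag0 : (1-g)*(a*g) = 0 := by
    have h1 := hgagn 1
    rwa [pow_one] at h1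
  have hgag : g*(a*g) = a*g := by
    have h2 := hgag0
    rw [sub_mul, one_mul, sub_eq_zero] at h2
    exact h2.symm
  have hfagX : f*(a*g) = a*g := by
    have h2 := hfag
    rw [sub_mul, one_mul, sub_eq_zero] at h2
    exact h2.symm
  have hgw : g * w = w := by rw [hg, mul_assoc, ← pow_two, ← hw1]
  have hXZ : (a*g)*(w*g) = g := by
    calc (a*g)*(w*g) = a*(g*(w*g)) := mul_assoc _ _ _
      _ = a*((g*w)*g) := by rw [← mul_assoc g w g]
      _ = a*(w*g) := by rw [hgw]
      _ = (a*w)*g := (mul_assoc _ _ _).symm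
      _ = g*g := by rw [← hg]
      _ = g := hgg
  refine ⟨a*g, a - a*g, w*g, ?_, ?_, ?_, ⟨?_, ?_, ?_⟩, ?_⟩
  · abel
  · have hAY : a^k * (a - a*g) = a^(k+1) - a^(k+1)*g := by
      rw [mul_sub, ← pow_succ, ← mul_assoc, ← pow_succ]
    have hkey : star f * (a^(k+1) - a^(k+1)*g) = 0 := by
      rw [mul_sub]
      have h2 : star f * (a^(k+1)*g) = star f * a^(k+1) := by
        calc star f * (a^(k+1)*g) = star f * (a^(k+1)*(a*w)) := by rw [hg]
          _ = star f * ((a^(k+1)*a)*w) := by rw [mul_assoc]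
          _ = star f * (a^(k+1+1)*w) := by rw [← pow_succ]
          _ = (star f * a^(k+1+1))*w := (mul_assoc _ _ _).symm
          _ = star f * a^(k+1) := hw2
      rw [h2, sub_self]
    calc star (a*g) * a^k * (a - a*g)
        = star (a*g) * (a^k * (a - a*g)) := mul_assoc _ _ _
      _ = star (f*(a*g)) * (a^(k+1) - a^(k+1)*g) := by rw [hfagX, hAY]
      _ = (star (a*g) * star f) * (a^(k+1) - a^(k+1)*g) := by rw [star_mul]
      _ = star (a*g) * (star f * (a^(k+1) - a^(k+1)*g)) := mul_assoc _ _ _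
      _ = 0 := by rw [hkey, mul_zero]
  · rw [sub_mul, sub_eq_zero]
    symm
    calc (a*g)*(a*g) = a*(g*(a*g)) := mul_assoc _ _ _
      _ = a*(a*g) := by rw [hgag]
  · rw [pow_two, ← mul_assoc, hXZ, ← mul_assoc, hgw]
  · rw [pow_two, mul_assoc, hXZ, mul_assoc, hgg]
  · rw [hXZ, hgag]
  · have hp : ∀ n, 1 ≤ n → ((1-g)*a)^n = (1-g)*a^n := pow_sandwich hgag0
    have hYag : a - a*g = a*(1-g) := by rw [mul_one_sub]
    have hD : ∀ n : ℕ, (a - a*g)^(n+1) = a*(((1-g)*a)^n*(1-g)) := by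
      intro n
      induction n with
      | zero => simp [hYag]
      | succ n ih =>
        calc (a - a*g)^(n+1+1) = (a - a*g)*(a - a*g)^(n+1) := pow_succ' _ _
          _ = (a*(1-g))*(a*(((1-g)*a)^n*(1-g))) := by rw [ih, hYag]
          _ = a*((1-g)*(a*(((1-g)*a)^n*(1-g)))) := mul_assoc _ _ _
          _ = a*(((1-g)*a)*(((1-g)*a)^n*(1-g))) := by rw [← mul_assoc (1-g) a _]
          _ = a*((((1-g)*a)*((1-g)*a)^n)*(1-g)) := by rw [← mul_assoc ((1-g)*a) _ _]
          _ = a*(((1-g)*a)^(n+1)*(1-g)) := by rw [← pow_succ']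
    have hv : ∀ᶠ n in Filter.atTop,
        ‖(a - a*g)^n‖ ≤ (‖a‖*‖1-g‖) * ‖a^(n-1) - g*a^(n-1)‖ := by
      rw [Filter.eventually_atTop]
      refine ⟨2, fun j hj => ?_⟩
      obtain ⟨n, rfl⟩ : ∃ n, j = n + 2 := ⟨j - 2, by omega⟩
      have e1 : (a - a*g)^(n+1+1) = a*(((1-g)*a^(n+1))*(1-g)) := by
        rw [hD (n+1), hp (n+1) (by omega)]
      have e2 : n + 2 - 1 = n + 1 := by omega
      rw [show n+2 = n+1+1 from rfl, e1, e2, ← hUg]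
      calc ‖a*(((1-g)*a^(n+1))*(1-g))‖ ≤ ‖a‖*‖((1-g)*a^(n+1))*(1-g)‖ := norm_mul_le _ _
        _ ≤ ‖a‖*(‖(1-g)*a^(n+1)‖*‖1-g‖) :=
            mul_le_mul_of_nonneg_left (norm_mul_le _ _) (norm_nonneg _)
        _ = (‖a‖*‖1-g‖)*‖(1-g)*a^(n+1)‖ := by ring
    exact rootA2 (fun n => norm_nonneg _) (rootA4 hcw (by positivity) 1 hv)

private lemma part_bwd {A : Type*} [NormedRing A] [CompleteSpace A] [StarRing A]
    (a x y z : A) (k : ℕ)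
    (hxy : a = x + y) (hst : star x * a ^ k * y = 0) (hyx : y * x = 0)
    (hz1 : x * z ^ 2 = z) (hz2 : x ^ 2 * z = x) (hz3 : x * z * x = x)
    (hq : Quasinilpotent y) :
    ∃ d, IsGRD a d ∧ IsMGRGI (k+1) a d z := by
  have hxzz : x * (z * z) = z := by rw [← pow_two]; exact hz1
  have hxxz : (x * x) * z = x := by rw [← pow_two]; exact hz2
  set e := x * z with he
  -- hz3 : e * x = x? check via set
  have hex : e * x = x := hz3
  have hxe : x * e = x := by rw [he, ← mul_assoc]; exact hxxz
  have hez : e * z = z := by rw [he, mul_assoc]; exact hxzz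
  have hee : e * e = e := by
    conv_lhs => rw [he, ← mul_assoc]
    rw [← he, hex, ← he]
  have hyz : y * z = 0 := by
    rw [← hxzz, ← mul_assoc, hyx, zero_mul]
  have haz : a * z = e := by rw [hxy, add_mul, hyz, add_zero, he]
  have hye : y * e = 0 := by rw [he, ← mul_assoc, hyx, zero_mul]
  have hae : a * e = x := by rw [hxy, add_mul, hye, add_zero, hxe]
  have hax : a * x = x * x := by rw [hxy, add_mul, hyx, add_zero]
  set zp := z * e with hzp
  have hezp : e * zp = zp := by rw [hzp, ← mul_assoc, hez]
  have hazp : a * zp = e := by rw [hzp, ← mul_assoc, haz, hee]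
  have hxzp : x * zp = e := by rw [hzp, ← mul_assoc, ← he, hee]
  have hyzp : y * zp = 0 := by rw [hzp, ← mul_assoc, hyz, zero_mul]
  set b := e * y with hb
  set q := y - b with hqd
  have hbq : b + q = y := by rw [hqd]; abel
  have hbx : b * x = 0 := by rw [hb, mul_assoc, hyx, mul_zero]
  have hbzp : b * zp = 0 := by rw [hb, mul_assoc, hyzp, mul_zero]
  have hbb : b * b = 0 := by
    rw [hb, ← mul_assoc, mul_assoc e y e, hye, mul_zero, zero_mul]
  have hbqmul : b * q = b * y := by
    rw [hqd, mul_sub, hbb, sub_zero]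
  have hqx : q * x = 0 := by rw [hqd, sub_mul, hyx, hbx, sub_zero]
  have hqzp : q * zp = 0 := by rw [hqd, sub_mul, hyzp, hbzp, sub_zero]
  have hqb : q * b = 0 := by
    rw [hqd, sub_mul, hbb, sub_zero, hb, ← mul_assoc, hye, zero_mul]
  have heb : e * b = b := by rw [hb, ← mul_assoc, hee]
  -- power lemmas
  have hezpn : ∀ n : ℕ, e * zp^(n+1) = zp^(n+1) := by
    intro n
    induction n with
    | zero => rw [pow_one]; exact hezp
    | succ n ih =>
      rw [pow_succ' zp (n+1), ← mul_assoc, hezp]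
  have hazpn : ∀ n : ℕ, a * zp^(n+2) = zp^(n+1) := by
    intro n
    rw [show n+2 = n+1+1 from rfl, pow_succ' zp (n+1), ← mul_assoc, hazp]
    exact hezpn n
  have hqnx : ∀ n : ℕ, q^(n+1) * x = 0 := by
    intro n; rw [pow_succ, mul_assoc, hqx, mul_zero]
  have hqnzp : ∀ n : ℕ, q^(n+1) * zp = 0 := by
    intro n; rw [pow_succ, mul_assoc, hqzp, mul_zero]
  have hqnb : ∀ n : ℕ, q^(n+1) * b = 0 := by
    intro n; rw [pow_succ, mul_assoc, hqb, mul_zero]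
  have hyne : ∀ n : ℕ, y^(n+1) * e = 0 := by
    intro n; rw [pow_succ, mul_assoc, hye, mul_zero]
  have hq1e : ∀ n : ℕ, q^(n+1) = (1-e) * y^(n+1) := by
    intro n
    induction n with
    | zero => rw [pow_one, pow_one, hqd, hb, sub_mul, one_mul]
    | succ n ih =>
      calc q^(n+1+1) = q^(n+1) * q := pow_succ q (n+1)
        _ = ((1-e)*y^(n+1)) * (y - e*y) := by rw [ih, hqd, hb]
        _ = (1-e)*(y^(n+1)*y - y^(n+1)*(e*y)) := by rw [mul_assoc, mul_sub]
        _ = (1-e)*(y^(n+1)*y - (y^(n+1)*e)*y) := by rw [mul_assoc (y^(n+1)) e y]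
        _ = (1-e)*y^(n+1+1) := by rw [hyne n, zero_mul, sub_zero, ← pow_succ]
  -- quasinilpotent data
  have hyev : ∀ ε : ℝ, 0 < ε → ∀ᶠ n in atTop, ‖y^n‖ ≤ ε^n :=
    fun ε hε => rootA1 (fun n => norm_nonneg _) hq hε
  have hqev : ∀ ε : ℝ, 0 < ε → ∀ᶠ n in atTop, ‖q^n‖ ≤ ε^n := by
    refine rootA4 hyev (norm_nonneg (1-e)) 0 ?_
    filter_upwards [eventually_ge_atTop 1] with n hn
    obtain ⟨m, rfl⟩ := Nat.exists_eq_succ_of_ne_zero (by omega : n ≠ 0)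
    rw [Nat.sub_zero, hq1e m]
    exact norm_mul_le _ _
  -- summability
  have hsum : ∀ j : ℕ, Summable (fun n : ℕ => zp^(n+j) * (b * q^n)) := by
    intro j
    have hε : (0:ℝ) < (2*(‖zp‖+1))⁻¹ := by positivity
    apply Summable.of_norm_bounded_eventually_nat
      (g := fun n => ((‖zp‖+1)^j * ‖b‖) * (2⁻¹:ℝ)^n)
      ((summable_geometric_of_lt_one (by norm_num) (by norm_num)).mul_left _)
    filter_upwards [hqev _ hε, eventually_ge_atTop 1] with n hn hn1
    have h1 : ‖zp^(n+j)‖ ≤ (‖zp‖+1)^(n+j) :=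
      le_trans (norm_pow_le' _ (by omega))
        (pow_le_pow_left₀ (norm_nonneg _) (by linarith) _)
    have h2 : ‖b * q^n‖ ≤ ‖b‖ * ((2*(‖zp‖+1))⁻¹)^n :=
      le_trans (norm_mul_le _ _) (mul_le_mul_of_nonneg_left hn (norm_nonneg _))
    calc ‖zp^(n+j) * (b*q^n)‖ ≤ ‖zp^(n+j)‖ * ‖b*q^n‖ := norm_mul_le _ _
      _ ≤ (‖zp‖+1)^(n+j) * (‖b‖ * ((2*(‖zp‖+1))⁻¹)^n) :=
          mul_le_mul h1 h2 (norm_nonneg _) (by positivity)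
      _ = ((‖zp‖+1)^j * ‖b‖) * ((‖zp‖+1) * (2*(‖zp‖+1))⁻¹)^n := by
          rw [pow_add, mul_pow]; ring
      _ = ((‖zp‖+1)^j * ‖b‖) * (2⁻¹:ℝ)^n := by
          rw [show (‖zp‖+1) * (2*(‖zp‖+1))⁻¹ = (2⁻¹:ℝ) by
            have : ‖zp‖+1 ≠ 0 := by positivity
            field_simp]
  have hsum0' : Summable (fun n : ℕ => zp^n * (b * q^n)) := by
    simpa using hsum 0
  set s := ∑' n : ℕ, zp^(n+2) * (b * q^n) with hs
  set t := ∑' n : ℕ, zp^(n+1) * (b * q^n) with ht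
  set t0 := ∑' n : ℕ, zp^n * (b * q^n) with ht0
  have tsum0 : ∀ {f : ℕ → A}, (∀ n, f n = 0) → ∑' n, f n = 0 := by
    intro f h
    rw [tsum_congr h, tsum_zero]
  have hbqzp : ∀ n : ℕ, (b * q^n) * zp = 0 := by
    intro n; cases n with
    | zero => rw [pow_zero, mul_one, hbzp]
    | succ n => rw [mul_assoc, hqnzp, mul_zero]
  have hbqx : ∀ n : ℕ, (b * q^n) * x = 0 := by
    intro n; cases n with
    | zero => rw [pow_zero, mul_one, hbx]
    | succ n => rw [mul_assoc, hqnx, mul_zero]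
  have hbqy : ∀ n : ℕ, (b * q^n) * y = b * q^(n+1) := by
    intro n; cases n with
    | zero => rw [pow_zero, mul_one, pow_one]; exact hbqmul.symm
    | succ n => rw [mul_assoc, ← hbq, mul_add, hqnb, zero_add, ← pow_succ]
  have hbqq : ∀ n : ℕ, (b * q^n) * q = b * q^(n+1) := by
    intro n; rw [mul_assoc, ← pow_succ]
  have hszp : s * zp = 0 := by
    rw [hs, ← Summable.tsum_mul_right zp (hsum 2)]
    exact tsum0 fun n => by rw [mul_assoc, hbqzp n, mul_zero]
  have hqs : q * s = 0 := by
    rw [hs, ← Summable.tsum_mul_left q (hsum 2)]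
    exact tsum0 fun n => by
      rw [show n+2 = n+1+1 from rfl, pow_succ' zp (n+1),
        mul_assoc zp (zp^(n+1)) (b*q^n), ← mul_assoc q zp _, hqzp, zero_mul]
  have hqt : q * t = 0 := by
    rw [ht, ← Summable.tsum_mul_left q (hsum 1)]
    exact tsum0 fun n => by
      rw [pow_succ' zp n, mul_assoc zp (zp^n) (b*q^n), ← mul_assoc q zp _,
        hqzp, zero_mul]
  have hbs : b * s = 0 := by
    rw [hs, ← Summable.tsum_mul_left b (hsum 2)]
    exact tsum0 fun n => by
      rw [show n+2 = n+1+1 from rfl, pow_succ' zp (n+1),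
        mul_assoc zp (zp^(n+1)) (b*q^n), ← mul_assoc b zp _, hbzp, zero_mul]
  have hqss : ∀ n : ℕ, q^(n+1) * s = 0 := fun n => by
    rw [pow_succ, mul_assoc, hqs, mul_zero]
  have hbqs : ∀ n : ℕ, (b * q^n) * s = 0 := by
    intro n; cases n with
    | zero => rw [pow_zero, mul_one, hbs]
    | succ n => rw [mul_assoc, hqss, mul_zero]
  have hss : s * s = 0 := by
    nth_rewrite 1 [hs]
    rw [← Summable.tsum_mul_right s (hsum 2)]
    exact tsum0 fun n => by rw [mul_assoc, hbqs n, mul_zero]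
  have hes : e * s = s := by
    nth_rewrite 1 [hs]
    rw [← Summable.tsum_mul_left e (hsum 2), hs]
    exact tsum_congr fun n => by
      rw [← mul_assoc, show n+2 = n+1+1 from rfl, hezpn (n+1)]
  have het : e * t = t := by
    nth_rewrite 1 [ht]
    rw [← Summable.tsum_mul_left e (hsum 1), ht]
    exact tsum_congr fun n => by rw [← mul_assoc, hezpn n]
  have has2 : a * s = t := by
    rw [hs, ← Summable.tsum_mul_left a (hsum 2), ht]
    exact tsum_congr fun n => by rw [← mul_assoc, hazpn n]
  have hat : a * t = t0 := by
    rw [ht, ← Summable.tsum_mul_left a (hsum 1), ht0]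
    refine tsum_congr fun n => ?_
    cases n with
    | zero =>
      show a * (zp^(0+1) * (b * q^0)) = zp^0 * (b * q^0)
      rw [zero_add, pow_one, pow_zero, mul_one, ← mul_assoc, hazp, heb, pow_zero, one_mul]
    | succ n =>
      show a * (zp^(n+1+1) * (b * q^(n+1))) = zp^(n+1) * (b * q^(n+1))
      rw [← mul_assoc, show n+1+1 = n+2 from rfl, hazpn n]
  have htx : t * x = 0 := by
    rw [ht, ← Summable.tsum_mul_right x (hsum 1)]
    exact tsum0 fun n => by rw [mul_assoc, hbqx n, mul_zero]
  have hty : t * y = ∑' n : ℕ, zp^(n+1) * (b * q^(n+1)) := by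
    rw [ht, ← Summable.tsum_mul_right y (hsum 1)]
    exact tsum_congr fun n => by rw [mul_assoc, hbqy n]
  have htq : t * q = ∑' n : ℕ, zp^(n+1) * (b * q^(n+1)) := by
    rw [ht, ← Summable.tsum_mul_right q (hsum 1)]
    exact tsum_congr fun n => by rw [mul_assoc, hbqq n]
  have htyq : t * y = t * q := hty.trans htq.symm
  have ht0split : t0 = b + ∑' n : ℕ, zp^(n+1) * (b * q^(n+1)) := by
    rw [ht0, Summable.tsum_eq_zero_add hsum0']
    congr 1
    simp
  -- GRD data
  have hd2sq : (zp + s) * (zp + s) = zp*zp + zp*s := by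
    rw [add_mul, mul_add, mul_add, hszp, hss, add_zero, add_zero]
  have hGRD1 : a * (zp + s)^2 = zp + s := by
    rw [pow_two, hd2sq, mul_add, ← mul_assoc a zp zp, ← mul_assoc a zp s, hazp, hezp, hes]
  have had : a * (zp + s) = e + t := by rw [mul_add, hazp, has2]
  have hea : e * a = x + b := by rw [hxy, mul_add, hex, ← hb]
  have hta : t * a = t * y := by rw [hxy, mul_add, htx, zero_add]
  have hL : a^2 * (zp + s) = x + t0 := by
    rw [pow_two, mul_assoc, had, mul_add, hae, hat]
  have hR : a * (zp + s) * a = (x + b) + t * y := by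
    rw [had, add_mul, hea, hta]
  have hGRD2 : a^2 * (zp + s) = a * (zp + s) * a := by
    rw [hL, hR, hty, ht0split, ← add_assoc]
  have hada : a - a * (zp + s) * a = q - t * q := by
    rw [hR, htyq, hxy, hqd, hb]
    abel
  have hqnt : ∀ n : ℕ, q^(n+1) * t = 0 := fun n => by
    rw [pow_succ, mul_assoc, hqt, mul_zero]
  have hrg : q - t * q = (1-t) * q := by rw [sub_mul, one_mul]
  have hrn : ∀ n : ℕ, (q - t * q)^(n+1) = (1-t) * q^(n+1) := by
    intro n; induction n with
    | zero => rw [pow_one, pow_one, hrg]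
    | succ n ih =>
      have h1 : q^(n+1) * (1-t) = q^(n+1) := by
        rw [mul_one_sub, hqnt, sub_zero]
      calc (q - t*q)^(n+1+1) = (q - t*q)^(n+1) * (q - t*q) := pow_succ _ _
        _ = ((1-t) * q^(n+1)) * ((1-t) * q) := by rw [ih, hrg]
        _ = (1-t) * ((q^(n+1) * (1-t)) * q) := by
            rw [mul_assoc, ← mul_assoc (q^(n+1)) (1-t) q]
        _ = (1-t) * (q^(n+1) * q) := by rw [h1]
        _ = (1-t) * q^(n+1+1) := by rw [← pow_succ]
  have hGRD3 : Quasinilpotent (a - a * (zp + s) * a) := by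
    rw [hada]
    refine rootA2 (fun n => norm_nonneg _)
      (rootA4 hyev (K := ‖(1:A)-t‖ * ‖(1:A)-e‖) (by positivity) 0 ?_)
    filter_upwards [eventually_ge_atTop 1] with n hn
    obtain ⟨m, rfl⟩ := Nat.exists_eq_succ_of_ne_zero (by omega : n ≠ 0)
    rw [Nat.sub_zero, hrn m, hq1e m]
    calc ‖(1-t) * ((1-e) * y^(m+1))‖ ≤ ‖(1:A)-t‖ * ‖(1-e) * y^(m+1)‖ :=
          norm_mul_le _ _
      _ ≤ ‖(1:A)-t‖ * (‖(1:A)-e‖ * ‖y^(m+1)‖) :=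
          mul_le_mul_of_nonneg_left (norm_mul_le _ _) (norm_nonneg _)
      _ = ‖(1:A)-t‖ * ‖(1:A)-e‖ * ‖y^(m+1)‖ := (mul_assoc _ _ _).symm
  -- MGRGI data
  have hM1 : z = a * z^2 := by
    rw [pow_two, ← mul_assoc, haz, hez]
  have hadu : a * (zp + s) = x * (z + z * t) := by
    rw [had, mul_add, ← mul_assoc, ← he, het]
  have hP1 : ∀ j : ℕ, a^j * x = x^(j+1) := by
    intro j; induction j with
    | zero => rw [pow_zero, one_mul, pow_one]
    | succ j ih =>
      calc a^(j+1) * x = a^j * (a * x) := by rw [pow_succ, mul_assoc]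
        _ = a^j * (x * x) := by rw [hax]
        _ = (a^j * x) * x := (mul_assoc _ _ _).symm
        _ = x^(j+1) * x := by rw [ih]
        _ = x^(j+1+1) := (pow_succ _ _).symm
  have hP2 : a^(k+1) * e = x^(k+1) := by
    calc a^(k+1) * e = a^(k+1) * (x * z) := by rw [he]
      _ = (a^(k+1) * x) * z := (mul_assoc _ _ _).symm
      _ = x^(k+1+1) * z := by rw [hP1 (k+1)]
      _ = ((x^k * x) * x) * z := by rw [pow_succ x (k+1), pow_succ x k]
      _ = x^k * ((x * x) * z) := by rw [mul_assoc (x^k) x x, mul_assoc (x^k) (x*x) z]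
      _ = x^k * x := by rw [hxxz]
      _ = x^(k+1) := (pow_succ _ _).symm
  have hP3 : a^(k+1) = x^(k+1) + a^k * y := by
    have hax2 : a^k * a = a^k * (x + y) := by rw [← hxy]
    calc a^(k+1) = a^k * a := pow_succ _ _
      _ = a^k * (x + y) := hax2
      _ = a^k * x + a^k * y := mul_add _ _ _
      _ = x^(k+1) + a^k * y := by rw [hP1 k]
  have hM2 : star (a * (zp+s)) * a^(k+1+1) * z = star (a * (zp+s)) * a^(k+1) := by
    have h5 : a^(k+1+1) * z = x^(k+1) := by
      rw [pow_succ a (k+1), mul_assoc, haz, hP2]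
    have h6 : star (a * (zp+s)) * (a^k * y) = 0 := by
      rw [hadu, star_mul, mul_assoc, ← mul_assoc (star x) (a^k) y, hst, mul_zero]
    rw [mul_assoc, h5, hP3, mul_add (star (a * (zp+s))) (x^(k+1)) (a^k * y), h6, add_zero]
  have hQy : ∀ n : ℕ, (1-e) * (y^n * x) = 0 := by
    intro n; cases n with
    | zero => rw [pow_zero, one_mul, sub_mul, one_mul, hex, sub_self]
    | succ n => rw [pow_succ, mul_assoc, hyx, mul_zero, mul_zero]
  have hP4 : ∀ n : ℕ, (1-e) * a^n = (1-e) * y^n := by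
    intro n; induction n with
    | zero => rw [pow_zero, pow_zero]
    | succ n ih =>
      calc (1-e) * a^(n+1) = ((1-e) * a^n) * a := by rw [pow_succ, ← mul_assoc]
        _ = ((1-e) * y^n) * (x + y) := by rw [ih, hxy]
        _ = (1-e) * (y^n * x) + (1-e) * (y^n * y) := by
            rw [mul_add, mul_assoc, mul_assoc]
        _ = (1-e) * y^(n+1) := by rw [hQy n, zero_add, ← pow_succ]
  have hM3 : Filter.Tendsto (fun n : ℕ => ‖a^n - a * z * a^n‖ ^ ((1:ℝ)/n))
      Filter.atTop (nhds 0) := by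
    simp only [haz]
    refine rootA2 (fun n => norm_nonneg _)
      (rootA4 hyev (K := ‖(1:A)-e‖) (norm_nonneg _) 0 ?_)
    refine Filter.Eventually.of_forall fun n => ?_
    rw [Nat.sub_zero, show a^n - e * a^n = (1-e) * y^n from by
      rw [← hP4 n, sub_mul, one_mul]]
    exact norm_mul_le _ _
  exact ⟨zp + s, ⟨hGRD1, hGRD2, hGRD3⟩, hM1, hM2, hM3⟩
end Aux

theorem mgrgi_iff_decomp {A : Type*} [NormedRing A] [NormedAlgebra ℂ A] [CompleteSpace A]
    [StarRing A] (a : A) (m : ℕ) (hm : 1 ≤ m) :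
    ((∃ d w, IsGRD a d ∧ IsMGRGI m a d w) ↔
      (∃ x y z, a = x + y ∧ star x * a ^ (m - 1) * y = 0 ∧ y * x = 0 ∧
        (x * z ^ 2 = z ∧ x ^ 2 * z = x ∧ x * z * x = x) ∧ Quasinilpotent y)) ∧
    (∀ x y z, a = x + y → star x * a ^ (m - 1) * y = 0 → y * x = 0 →
      (x * z ^ 2 = z ∧ x ^ 2 * z = x ∧ x * z * x = x) → Quasinilpotent y →
      ∃ d, IsGRD a d ∧ IsMGRGI m a d z) := by
  obtain ⟨k, rfl⟩ : ∃ k, m = k + 1 := ⟨m - 1, by omega⟩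
  constructor
  · constructor
    · rintro ⟨d, w, hgrd, hmg⟩
      rw [Nat.add_sub_cancel]
      exact part_fwd a d w k hgrd.1 hgrd.2.1 hgrd.2.2 hmg.1 hmg.2.1 hmg.2.2
    · rintro ⟨x, y, z, h1, h2, h3, h456, h7⟩
      rw [Nat.add_sub_cancel] at h2
      obtain ⟨d, hd, hw⟩ := part_bwd a x y z k h1 h2 h3 h456.1 h456.2.1 h456.2.2 h7
      exact ⟨d, z, hd, hw⟩
  · rintro x y z h1 h2 h3 h456 h7
    rw [Nat.add_sub_cancel] at h2
    exact part_bwd a x y z k h1 h2 h3 h456.1 h456.2.1 h456.2.2 h7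
end

section
/- Polar-like characterization: a ∈ A has an m-generalized right group inverse if and only if there exists an idempotent p ∈ A such that (1−p)a(1−p) is right invertible in the corner algebra (1−p)A(1−p), ((a^m)^* a^m p)^* = (a^m)^* a^m p, ap is quasinilpotent, and (1−p)A = a(1−p)A. -/
open Filter


lemma qn_bound {A : Type*} [NormedRing A] {q : A} (h : Quasinilpotent q) {ε : ℝ} (hε : 0 < ε) :
    ∀ᶠ k in atTop, ‖q ^ k‖ ≤ ε ^ k := by
  have h1 : ∀ᶠ k in atTop, ‖q ^ k‖ ^ ((1 : ℝ) / (k : ℕ)) < ε := h.eventually_lt_const hε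
  filter_upwards [h1, eventually_ge_atTop 1] with k hk hk1
  have hk0 : (k : ℕ) ≠ 0 := by omega
  have key : (‖q ^ k‖ ^ ((1 : ℝ) / (k : ℕ))) ^ (k : ℕ) = ‖q ^ k‖ := by
    rw [one_div]
    exact Real.rpow_inv_natCast_pow (norm_nonneg _) hk0
  calc ‖q ^ k‖ = (‖q ^ k‖ ^ ((1 : ℝ) / (k : ℕ))) ^ (k : ℕ) := key.symm
    _ ≤ ε ^ k := pow_le_pow_left₀ (Real.rpow_nonneg (norm_nonneg _) _) hk.le k

lemma root_tendsto_zero {s : ℕ → ℝ} (h0 : ∀ k, 0 ≤ s k)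
    (h : ∀ ε : ℝ, 0 < ε → ∃ C : ℝ, 0 < C ∧ ∀ᶠ k in atTop, s k ≤ C * ε ^ k) :
    Tendsto (fun k : ℕ => s k ^ ((1 : ℝ) / k)) atTop (nhds 0) := by
  rw [Metric.tendsto_nhds]
  intro ε hε
  obtain ⟨C, hC, hbound⟩ := h (ε / 4) (by positivity)
  have hC1 : Tendsto (fun k : ℕ => (C + 1) ^ ((1 : ℝ) / k)) atTop (nhds 1) := by
    have h1 : Tendsto (fun k : ℕ => (1 : ℝ) / k) atTop (nhds 0) :=
      tendsto_one_div_atTop_nhds_zero_nat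
    have h2 : ContinuousAt (fun y : ℝ => (C + 1) ^ y) 0 :=
      Real.continuousAt_const_rpow (by positivity)
    have := h2.tendsto.comp h1
    simpa [Real.rpow_zero, Function.comp_def] using this
  have h2 : ∀ᶠ k in atTop, (C + 1) ^ ((1 : ℝ) / (k : ℕ)) < 2 := hC1.eventually_lt_const one_lt_two
  filter_upwards [hbound, h2, eventually_ge_atTop 1] with k hk1 hk2 hk3
  have hk0 : (k : ℕ) ≠ 0 := by omega
  have hnn : (0:ℝ) ≤ (ε/4) ^ k := by positivity
  have step1 : s k ^ ((1:ℝ)/k) ≤ ((C+1) * (ε/4)^k) ^ ((1:ℝ)/k) := by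
    apply Real.rpow_le_rpow (h0 k) _ (by positivity)
    nlinarith
  have step2 : ((C+1) * (ε/4)^k) ^ ((1:ℝ)/k)
      = (C+1) ^ ((1:ℝ)/k) * ((ε/4)^k) ^ ((1:ℝ)/k) :=
    Real.mul_rpow (by positivity) hnn
  have step3 : ((ε/4:ℝ)^k) ^ ((1:ℝ)/k) = ε/4 := by
    rw [one_div]
    exact Real.pow_rpow_inv_natCast (by positivity) hk0
  have hfin : s k ^ ((1:ℝ)/k) < ε := by
    calc s k ^ ((1:ℝ)/k) ≤ (C+1) ^ ((1:ℝ)/k) * ((ε/4)^k) ^ ((1:ℝ)/k) := step1.trans step2.le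
      _ = (C+1) ^ ((1:ℝ)/k) * (ε/4) := by rw [step3]
      _ ≤ 2 * (ε/4) := by nlinarith [Real.rpow_nonneg (show (0:ℝ) ≤ C+1 by positivity) ((1:ℝ)/k)]
      _ < ε := by nlinarith
  have : dist (s k ^ ((1:ℝ)/k)) 0 = s k ^ ((1:ℝ)/k) := by
    rw [Real.dist_eq, sub_zero, abs_of_nonneg (Real.rpow_nonneg (h0 k) _)]
  rw [this]
  exact hfin

lemma qn_dominated {A : Type*} [NormedRing A] {n : A} (hn : Quasinilpotent n)
    {C : ℝ} (hC : 0 ≤ C) (g : ℕ → A)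
    (hg : ∀ᶠ k in atTop, ‖g k‖ ≤ C * ‖n ^ k‖ + C * ‖n ^ (k - 1)‖) :
    Tendsto (fun k : ℕ => ‖g k‖ ^ ((1 : ℝ) / k)) atTop (nhds 0) := by
  apply root_tendsto_zero (fun k => norm_nonneg _)
  intro ε hε
  refine ⟨C + C / ε + 1, by positivity, ?_⟩
  obtain ⟨N, hN⟩ := eventually_atTop.1 (qn_bound hn hε)
  obtain ⟨N2, hN2⟩ := eventually_atTop.1 hg
  refine eventually_atTop.2 ⟨N + N2 + 1, fun k hk => ?_⟩
  obtain ⟨j, rfl⟩ : ∃ j, k = j + 1 := ⟨k - 1, by omega⟩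
  have e1 : ‖n ^ (j+1)‖ ≤ ε ^ (j+1) := hN (j+1) (by omega)
  have e2 : ‖n ^ j‖ ≤ ε ^ j := hN j (by omega)
  have key : (C / ε) * ε ^ (j+1) = C * ε ^ j := by
    rw [pow_succ]; field_simp
  calc ‖g (j+1)‖ ≤ C * ‖n ^ (j+1)‖ + C * ‖n ^ (j+1-1)‖ := hN2 (j+1) (by omega)
    _ = C * ‖n ^ (j+1)‖ + C * ‖n ^ j‖ := by norm_num
    _ ≤ C * ε ^ (j+1) + C * ε ^ j := by gcongr
    _ = C * ε ^ (j+1) + (C/ε) * ε ^ (j+1) := by rw [key]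
    _ ≤ (C + C / ε + 1) * ε ^ (j+1) := by nlinarith [pow_nonneg hε.le (j+1)]

lemma eq_zero_of_qn_bound {A : Type*} [NormedRing A] {r n : A} (hn : Quasinilpotent n)
    {D R : ℝ} (hD : 0 ≤ D) (hR : 0 ≤ R) (K : ℕ)
    (h : ∀ j : ℕ, ‖r‖ ≤ D * (R ^ (j + 1) * ‖n ^ (K + j)‖)) : r = 0 := by
  set ε : ℝ := (2 * (R + 1))⁻¹ with hεdef
  have hε : (0:ℝ) < ε := by positivity
  obtain ⟨N, hN⟩ := eventually_atTop.1 (qn_bound hn hε)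
  have hRε : R * ε ≤ 1 / 2 := by
    have h2 : (0:ℝ) < 2 * (R + 1) := by positivity
    have h3 : R * (2 * (R+1))⁻¹ = R / (2 * (R+1)) := (div_eq_mul_inv R _).symm
    rw [hεdef, h3, div_le_iff₀ h2]
    nlinarith
  have hbound : ∀ᶠ j in atTop, ‖r‖ ≤ (D * (R+1) * ε ^ K) * (1/2:ℝ) ^ j := by
    refine eventually_atTop.2 ⟨N, fun j hj => ?_⟩
    have e1 : ‖n ^ (K + j)‖ ≤ ε ^ (K + j) := hN (K + j) (by omega)
    calc ‖r‖ ≤ D * (R ^ (j+1) * ‖n ^ (K + j)‖) := h j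
      _ ≤ D * (R ^ (j+1) * ε ^ (K + j)) := by gcongr
      _ = (D * R * ε ^ K) * (R * ε) ^ j := by rw [pow_add, pow_succ, mul_pow]; ring
      _ ≤ (D * (R+1) * ε ^ K) * (1/2:ℝ) ^ j := by
          have h1 : (R * ε) ^ j ≤ (1/2:ℝ) ^ j :=
            pow_le_pow_left₀ (by positivity) hRε j
          have h2 : (0:ℝ) ≤ D * R * ε ^ K := by positivity
          have h3 : D * R * ε ^ K ≤ D * (R+1) * ε ^ K := by
            have : (0:ℝ) ≤ ε ^ K := by positivity
            nlinarith
          nlinarith [pow_nonneg (show (0:ℝ) ≤ R * ε by positivity) j,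
            pow_nonneg (show (0:ℝ) ≤ (1/2:ℝ) by norm_num) j]
  have htend : Tendsto (fun j : ℕ => (D * (R+1) * ε ^ K) * (1/2:ℝ) ^ j) atTop (nhds 0) := by
    have := tendsto_pow_atTop_nhds_zero_of_lt_one (show (0:ℝ) ≤ 1/2 by norm_num)
      (show (1/2:ℝ) < 1 by norm_num)
    simpa using this.const_mul (D * (R+1) * ε ^ K)
  have : ‖r‖ ≤ 0 := ge_of_tendsto htend hbound
  simpa using norm_le_zero_iff.1 this

section Toolbox
variable {A : Type*} [Ring A] (a f v : A)

lemma tl_uf (hff : f * f = f) : (a * f) * f = a * f := by rw [mul_assoc, hff]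

lemma tl_fu (hff : f * f = f) (haf : a * f = f * a) : f * (a * f) = a * f := by
  rw [← mul_assoc, ← haf, mul_assoc, hff]

lemma tl_fuk (hff : f * f = f) (haf : a * f = f * a) :
    ∀ k, f * (a * f) ^ (k + 1) = (a * f) ^ (k + 1) := by
  intro k
  induction k with
  | zero => simpa using tl_fu a f hff haf
  | succ k ih => rw [pow_succ', ← mul_assoc, tl_fu a f hff haf, ← pow_succ']

lemma tl_ukf (hff : f * f = f) : ∀ k, (a * f) ^ (k + 1) * f = (a * f) ^ (k + 1) := by
  intro k
  induction k with
  | zero => simpa using tl_uf a f hff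
  | succ k ih => rw [pow_succ, mul_assoc, tl_uf a f hff, ← pow_succ]

lemma tl_fvk (hfv : f * v = v) : ∀ k, f * v ^ (k + 1) = v ^ (k + 1) := by
  intro k
  induction k with
  | zero => simpa using hfv
  | succ k ih => rw [pow_succ', ← mul_assoc, hfv, ← pow_succ']

lemma tl_uvk (hff : f * f = f) (hfv : f * v = v) (huv : (a * f) * v = f) :
    ∀ k, (a * f) ^ (k + 1) * v ^ (k + 1) = f := by
  intro k
  induction k with
  | zero => simpa using huv
  | succ k ih =>
      rw [pow_succ', pow_succ (v) (k+1), mul_assoc, ← mul_assoc ((a*f)^(k+1)), ih, hfv, huv]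

lemma tl_un (hff : f * f = f) (haf : a * f = f * a) : (a * f) * (a - a * f) = 0 := by
  rw [mul_sub, sub_eq_zero, mul_assoc a f a, ← haf, mul_assoc a f (a*f), tl_fu a f hff haf]

lemma tl_nu (hff : f * f = f) (haf : a * f = f * a) : (a - a * f) * (a * f) = 0 := by
  rw [sub_mul, sub_eq_zero, mul_assoc a f (a*f), tl_fu a f hff haf]

lemma tl_nf (hff : f * f = f) : (a - a * f) * f = 0 := by
  rw [sub_mul, mul_assoc, hff, sub_self]

lemma tl_ukn (hff : f * f = f) (haf : a * f = f * a) :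
    ∀ k, (a * f) ^ (k + 1) * (a - a * f) = 0 := by
  intro k
  rw [pow_succ, mul_assoc, tl_un a f hff haf, mul_zero]

lemma tl_nku (hff : f * f = f) (haf : a * f = f * a) :
    ∀ k, (a - a * f) ^ (k + 1) * (a * f) = 0 := by
  intro k
  rw [pow_succ, mul_assoc, tl_nu a f hff haf, mul_zero]

lemma tl_nkf (hff : f * f = f) : ∀ k, (a - a * f) ^ (k + 1) * f = 0 := by
  intro k
  rw [pow_succ, mul_assoc, tl_nf a f hff, mul_zero]

lemma tl_apow (hff : f * f = f) (haf : a * f = f * a) :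
    ∀ k, a ^ (k + 1) = (a * f) ^ (k + 1) + (a - a * f) ^ (k + 1) := by
  intro k
  induction k with
  | zero => simp
  | succ k ih =>
      have ha : a = a * f + (a - a * f) := by abel
      calc a ^ (k + 1 + 1) = a ^ (k + 1) * a := pow_succ a (k + 1)
        _ = a ^ (k+1) * (a * f + (a - a * f)) := by nth_rewrite 2 [ha]; rfl
        _ = ((a*f)^(k+1) + (a - a*f)^(k+1)) * (a * f + (a - a * f)) := by rw [ih]
        _ = (a*f)^(k+1+1) + (a - a*f)^(k+1+1) := by
            rw [add_mul, mul_add, mul_add, tl_ukn a f hff haf k, tl_nku a f hff haf k,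
              ← pow_succ, ← pow_succ]
            abel

lemma tl_akf (hff : f * f = f) (haf : a * f = f * a) :
    ∀ k, a ^ (k + 1) * f = (a * f) ^ (k + 1) := by
  intro k
  rw [tl_apow a f hff haf k, add_mul, tl_ukf a f hff k, tl_nkf a f hff k, add_zero]

lemma tl_qa (haf : a * f = f * a) : (1 - f) * a = a - a * f := by
  rw [sub_mul, one_mul, ← haf]

lemma tl_qak (hff : f * f = f) (haf : a * f = f * a) :
    ∀ k, (1 - f) * a ^ (k + 1) = (a - a * f) ^ (k + 1) := by
  intro k
  induction k with
  | zero => simpa using tl_qa a f haf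
  | succ k ih =>
      rw [pow_succ, ← mul_assoc, ih]
      have ha : a = a * f + (a - a * f) := by abel
      nth_rewrite 3 [ha]
      rw [mul_add, tl_nku a f hff haf k, zero_add, ← pow_succ]

end Toolbox

section Forward
variable {A : Type*} [NormedRing A] [StarRing A]

lemma forward_dir (a d x : A) (M : ℕ)
    (hd1 : a * d ^ 2 = d) (hd2 : a ^ 2 * d = a * d * a)
    (hd3 : Quasinilpotent (a - a * d * a))
    (hx1 : x = a * x ^ 2)
    (hx2 : star (a * d) * a ^ (M + 1 + 1) * x = star (a * d) * a ^ (M + 1)) :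
    ∃ p : A, p ^ 2 = p ∧
        (∃ v, v = (1 - p) * v * (1 - p) ∧ ((1 - p) * a * (1 - p)) * v = 1 - p) ∧
        star (star (a ^ (M + 1)) * a ^ (M + 1) * p) = star (a ^ (M + 1)) * a ^ (M + 1) * p ∧
        Quasinilpotent (a * p) ∧
        (Set.range fun r : A => (1 - p) * r) = (Set.range fun r : A => a * ((1 - p) * r)) := by
  have hdd : a * (d * d) = d := by rw [← pow_two]; exact hd1
  have haf : a * (a * d) = (a * d) * a := by rw [← mul_assoc, ← pow_two]; exact hd2
  have hff : (a*d)*(a*d) = a*d := by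
    rw [← mul_assoc, ← hd2, pow_two, mul_assoc, mul_assoc, hdd]
  have hfd : (a*d)*d = d := by rw [mul_assoc, hdd]
  have hfv : (a*d)*(d*(a*d)) = d*(a*d) := by rw [← mul_assoc, hfd]
  have hvf : (d*(a*d))*(a*d) = d*(a*d) := by rw [mul_assoc, hff]
  have huv : (a*(a*d))*(d*(a*d)) = a*d := by rw [mul_assoc, hfv, ← mul_assoc, hff]
  have hn_qn : Quasinilpotent (a - a*(a*d)) := by
    have e : a - a*(a*d) = a - a*d*a := by rw [← mul_assoc, ← pow_two, hd2]
    rw [e]; exact hd3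
  set f := a * d with hfdef
  -- haf : a * f = f * a ; hff : f * f = f; hfv : f * (d*f) = d*f; hvf; huv : (a*f)*(d*f) = f
  have hqq : (1 - f) * (1 - f) = 1 - f := by
    rw [mul_sub, mul_one, sub_mul, one_mul, hff]; abel
  have hqf : (1 - f) * f = 0 := by rw [sub_mul, one_mul, hff, sub_self]
  have hqv : (1 - f) * (d * f) = 0 := by rw [sub_mul, one_mul, hfv, sub_self]
  have hqu : (1 - f) * (a * f) = 0 := by rw [sub_mul, one_mul, tl_fu a f hff haf, sub_self]
  set g := (a*f)^(M+1+1) * (x * (1 - f)) with hgdef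
  have hfg : f * g = g := by rw [hgdef, ← mul_assoc, tl_fuk a f hff haf (M+1)]
  have hgq : g * (1 - f) = g := by rw [hgdef, mul_assoc, mul_assoc, hqq]
  have hgf : g * f = 0 := by rw [hgdef, mul_assoc, mul_assoc, hqf, mul_zero, mul_zero]
  have hgv : g * (d*f) = 0 := by rw [hgdef, mul_assoc, mul_assoc, hqv, mul_zero, mul_zero]
  have hgu : g * (a*f) = 0 := by rw [hgdef, mul_assoc, mul_assoc, hqu, mul_zero, mul_zero]
  set w := (d*f)^(M+1) * g with hwdef
  have hfw : f * w = w := by rw [hwdef, ← mul_assoc, tl_fvk f (d*f) hfv M]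
  have hwq : w * (1 - f) = w := by rw [hwdef, mul_assoc, hgq]
  have hwf : w * f = 0 := by rw [hwdef, mul_assoc, hgf, mul_zero]
  have hgvk : g * (d*f)^(M+1) = 0 := by rw [pow_succ', ← mul_assoc, hgv, zero_mul]
  have hww : w * w = 0 := by
    rw [hwdef, mul_assoc, ← mul_assoc g, hgvk, zero_mul, mul_zero]
  have hwu : w * (a*f) = 0 := by rw [hwdef, mul_assoc, hgu, mul_zero]
  have hwv : w * (d*f) = 0 := by rw [hwdef, mul_assoc, hgv, mul_zero]
  have haw : a * w = (a*f) * w := by rw [mul_assoc, hfw]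
  have hee : (f + w) * (f + w) = f + w := by
    rw [mul_add, add_mul, add_mul, hff, hfw, hwf, hww]; abel
  have hev : (f + w) * (d*f) = d*f := by rw [add_mul, hfv, hwv, add_zero]
  have heu : (f + w) * (a*f) = a*f := by rw [add_mul, tl_fu a f hff haf, hwu, add_zero]
  have hae' : a * (f + w) = (a*f) * (f + w) := by
    rw [mul_add, mul_add, tl_uf a f hff, haw]
  have hfe : f * (f + w) = f + w := by rw [mul_add, hff, hfw]
  have hwa : w * a = w * (a - a*f) := by
    nth_rewrite 1 [← hwq]; rw [mul_assoc, tl_qa a f haf]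
  have hwaf : (w * a) * f = 0 := by rw [hwa, mul_assoc, tl_nf a f hff, mul_zero]
  have hnw : (a - a*f) * w = 0 := by
    nth_rewrite 1 [← hfw]; rw [← mul_assoc, tl_nf a f hff, zero_mul]
  have hwaw : (w * a) * w = 0 := by rw [hwa, mul_assoc, hnw, mul_zero]
  -- key zero fact
  have hsplit : x = f*x + (1 - f)*x := by noncomm_ring
  have hqxx : (1 - f)*x = (a - a*f)*(x*x) := by
    nth_rewrite 1 [hx1]
    rw [← mul_assoc, tl_qa a f haf, pow_two]
  have hnx : ∀ K, (a - a*f)^(K+1) * x = (a - a*f)^(K+1+1) * (x*x) := by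
    intro K
    calc (a - a*f)^(K+1) * x = (a - a*f)^(K+1) * (f*x + (1 - f)*x) := by rw [← hsplit]
      _ = (a - a*f)^(K+1) * (f*x) + (a - a*f)^(K+1) * ((1 - f)*x) := mul_add _ _ _
      _ = (a - a*f)^(K+1+1) * (x*x) := by
          rw [← mul_assoc, tl_nkf a f hff K, zero_mul, zero_add, hqxx, ← mul_assoc, ← pow_succ]
  have hit : ∀ j, star f * ((a - a*f)^(M+1+1) * (x*(1 - f)))
      = star f * ((a - a*f)^(M+1+j+1) * (x^(j+1)*(1 - f))) := by
    intro j
    induction j with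
    | zero => rw [Nat.add_zero, pow_one]
    | succ j ihj =>
        rw [ihj]
        have hexp : M+1+(j+1)+1 = M+1+j+1+1 := by omega
        rw [hexp, pow_succ' x (j+1), pow_succ' x j, mul_assoc x (x^j) (1-f),
          ← mul_assoc ((a - a*f)^(M+1+j+1)) x (x^j*(1-f)), hnx (M+1+j)]
        simp only [mul_assoc]
  have hzero : star f * ((a - a*f)^(M+1+1) * (x*(1 - f))) = 0 := by
    apply eq_zero_of_qn_bound (r := star f * ((a - a*f)^(M+1+1) * (x*(1 - f)))) hn_qn
      (D := (‖star f‖+1) * (‖1-f‖+1)) (R := ‖x‖+1) (by positivity) (by positivity) (M+1+1)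
    intro j
    have hidx : M+1+j+1 = M+1+1+j := by omega
    rw [hit j, hidx]
    have b4 : ‖x^(j+1)‖ ≤ (‖x‖+1)^(j+1) := by
      refine le_trans (norm_pow_le' x (Nat.succ_pos j)) ?_
      exact pow_le_pow_left₀ (norm_nonneg x) (by linarith) _
    calc ‖star f * ((a - a*f)^(M+1+1+j) * (x^(j+1)*(1 - f)))‖
        ≤ ‖star f‖ * ‖(a - a*f)^(M+1+1+j) * (x^(j+1)*(1 - f))‖ := norm_mul_le _ _
      _ ≤ ‖star f‖ * (‖(a - a*f)^(M+1+1+j)‖ * ‖x^(j+1)*(1 - f)‖) := by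
          gcongr
          exact norm_mul_le _ _
      _ ≤ ‖star f‖ * (‖(a - a*f)^(M+1+1+j)‖ * (‖x^(j+1)‖*‖1 - f‖)) := by
          gcongr
          exact norm_mul_le _ _
      _ = (‖star f‖ * ‖1 - f‖) * (‖x^(j+1)‖ * ‖(a - a*f)^(M+1+1+j)‖) := by ring
      _ ≤ (‖star f‖+1) * (‖1-f‖+1) * ((‖x‖+1)^(j+1) * ‖(a - a*f)^(M+1+1+j)‖) := by
          apply mul_le_mul
          · nlinarith [norm_nonneg (star f), norm_nonneg ((1:A) - f)]
          · exact mul_le_mul_of_nonneg_right b4 (norm_nonneg _)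
          · positivity
          · positivity
  have hs1 : a^(M+1)*(1 - f) = (a - a*f)^(M+1) := by
    rw [mul_sub, mul_one, tl_akf a f hff haf M]
    nth_rewrite 1 [tl_apow a f hff haf M]
    abel
  have hsfn : star f * (a - a*f)^(M+1) = star f * g := by
    calc star f * (a - a*f)^(M+1)
        = star f * (a^(M+1)*(1 - f)) := by rw [hs1]
      _ = star f * a^(M+1) * (1 - f) := by rw [mul_assoc]
      _ = star f * a^(M+1+1) * x * (1 - f) := by rw [hx2]
      _ = star f * (a^(M+1+1) * (x * (1 - f))) := by simp only [mul_assoc]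
      _ = star f * (((a*f)^(M+1+1) + (a - a*f)^(M+1+1)) * (x*(1 - f))) := by
          rw [tl_apow a f hff haf (M+1)]
      _ = star f * g + star f * ((a - a*f)^(M+1+1)*(x*(1 - f))) := by
          rw [add_mul, mul_add, ← hgdef]
      _ = star f * g := by rw [hzero, add_zero]
  -- now the witness
  have hamw : a^(M+1)*w = g := by
    nth_rewrite 1 [← hfw]
    rw [← mul_assoc, tl_akf a f hff haf M, hwdef, ← mul_assoc,
      tl_uvk a f (d*f) hff hfv huv M, hfg]
  have hyp : a^(M+1)*(1 - (f + w)) = (a - a*f)^(M+1) - g := by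
    rw [mul_sub, mul_one, mul_add, hamw, tl_akf a f hff haf M]
    nth_rewrite 1 [tl_apow a f hff haf M]
    abel
  have hfy : star f * ((a - a*f)^(M+1) - g) = 0 := by rw [mul_sub, hsfn, sub_self]
  have hyf : star ((a - a*f)^(M+1) - g) * f = 0 := by
    have h : star ((a - a*f)^(M+1) - g) * f = star (star f * ((a - a*f)^(M+1) - g)) := by
      rw [star_mul, star_star]
    rw [h, hfy, star_zero]
  refine ⟨1 - (f + w), ?_, ⟨(d*f)*(f+w), ?_, ?_⟩, ?_, ?_, ?_⟩
  · -- p^2 = p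
    rw [pow_two, mul_sub, mul_one, sub_mul, one_mul, hee]; abel
  · -- v' = (1-p) v' (1-p)
    rw [sub_sub_cancel, ← mul_assoc (f+w) (d*f) (f+w), hev, mul_assoc (d*f) (f+w) (f+w), hee]
  · -- corner right inverse
    rw [sub_sub_cancel]
    have hc1 : ((f+w)*a)*(f+w) = (a*f)*(f+w) := by
      rw [add_mul, add_mul, mul_add, mul_add]
      have hfaf : (f*a)*f = a*f := by rw [← haf, tl_uf a f hff]
      have hfawt : (f*a)*w = (a*f)*w := by rw [← haf]
      rw [hfaf, hfawt, hwaf, hwaw, mul_add, tl_uf a f hff]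
      abel
    rw [hc1, mul_assoc (a*f), ← mul_assoc (f+w), hev, ← mul_assoc, huv, mul_add, hff, hfw]
  · -- star condition
    rw [mul_assoc (star (a^(M+1))), hyp, star_mul, star_star]
    have t1 : star ((a - a*f)^(M+1) - g) * (a*f)^(M+1) = 0 := by
      nth_rewrite 1 [← tl_fuk a f hff haf M]
      rw [← mul_assoc, hyf, zero_mul]
    have e6 : star ((a*f)^(M+1)) = star ((a*f)^(M+1)) * star f := by
      nth_rewrite 1 [← tl_fuk a f hff haf M]
      rw [star_mul]
    have t2 : star ((a*f)^(M+1)) * ((a - a*f)^(M+1) - g) = 0 := by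
      rw [e6, mul_assoc, hfy, mul_zero]
    have e4 : star g = star g * star f := by nth_rewrite 1 [← hfg]; rw [star_mul]
    have t4 : star g * (a - a*f)^(M+1) = star g * g := by
      nth_rewrite 1 [e4]
      rw [mul_assoc, hsfn, ← mul_assoc, ← e4]
    have e5 : star ((a - a*f)^(M+1)) * f = star g * f := by
      rw [show star ((a - a*f)^(M+1)) * f = star (star f * (a - a*f)^(M+1)) from by
        rw [star_mul, star_star], hsfn, star_mul, star_star]
    have t5 : star ((a - a*f)^(M+1)) * g = star g * g := by
      calc star ((a - a*f)^(M+1)) * g = star ((a - a*f)^(M+1)) * (f*g) := by rw [hfg]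
        _ = (star ((a - a*f)^(M+1)) * f) * g := by
            rw [mul_assoc (star ((a - a*f)^(M+1))) f g]
        _ = (star g * f) * g := by rw [e5]
        _ = star g * g := by rw [mul_assoc (star g) f g, hfg]
    nth_rewrite 2 [tl_apow a f hff haf M]
    nth_rewrite 1 [tl_apow a f hff haf M]
    rw [star_add, mul_add, add_mul, t1, t2, zero_add, zero_add]
    rw [star_sub, sub_mul, mul_sub, t4, t5]
  · -- quasinilpotent
    have hap : a*(1 - (f + w)) = (a - a*f) - (a*f)*w := by
      rw [mul_sub, mul_one, mul_add, haw]; abel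
    have hnuw : (a - a*f)*((a*f)*w) = 0 := by
      rw [← mul_assoc, tl_nu a f hff haf, zero_mul]
    have huwuw : ((a*f)*w)*((a*f)*w) = 0 := by
      rw [mul_assoc, ← mul_assoc w, hwu, zero_mul, mul_zero]
    have hppow : ∀ k, (a*(1 - (f + w)))^(k+1)
        = (a - a*f)^(k+1) - ((a*f)*w)*(a - a*f)^k := by
      intro k
      induction k with
      | zero => simp only [zero_add, pow_one, pow_zero, mul_one]; exact hap
      | succ k ih =>
          rw [pow_succ' (a*(1 - (f + w))) (k+1), ih, hap]
          have ee : ((a - a*f) - (a*f)*w) * ((a - a*f)^(k+1) - ((a*f)*w)*(a - a*f)^k)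
              = (a - a*f)*(a - a*f)^(k+1) - (a - a*f)*(((a*f)*w)*(a - a*f)^k)
                - ((a*f)*w)*(a - a*f)^(k+1) + ((a*f)*w)*(((a*f)*w)*(a - a*f)^k) := by
            noncomm_ring
          rw [ee, ← mul_assoc (a - a*f) ((a*f)*w), hnuw, zero_mul,
            ← mul_assoc ((a*f)*w) ((a*f)*w), huwuw, zero_mul, ← pow_succ']
          abel
    apply qn_dominated hn_qn (C := ‖(a*f)*w‖ + 1) (by positivity)
    filter_upwards [eventually_ge_atTop 1] with k hk
    obtain ⟨j, rfl⟩ : ∃ j, k = j + 1 := ⟨k - 1, by omega⟩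
    rw [hppow j]
    have hn1 : ‖(a - a*f)^(j+1) - ((a*f)*w)*(a - a*f)^j‖
        ≤ ‖(a - a*f)^(j+1)‖ + ‖(a*f)*w‖ * ‖(a - a*f)^j‖ := by
      refine le_trans (norm_sub_le _ _) ?_
      have := norm_mul_le ((a*f)*w) ((a - a*f)^j)
      linarith
    have hj : j + 1 - 1 = j := by omega
    rw [hj]
    have c0 : (0:ℝ) ≤ ‖(a - a*f)^(j+1)‖ := norm_nonneg _
    have c1 : (0:ℝ) ≤ ‖(a - a*f)^j‖ := norm_nonneg _
    have c2 : (0:ℝ) ≤ ‖(a*f)*w‖ := norm_nonneg _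
    nlinarith
  · -- range
    rw [sub_sub_cancel]
    apply Set.Subset.antisymm
    · rintro _ ⟨r, rfl⟩
      refine ⟨(d*f)*((f+w)*r), ?_⟩
      show a * ((f+w) * ((d*f)*((f+w)*r))) = (f+w)*r
      rw [← mul_assoc, hae', mul_assoc, ← mul_assoc (f+w), hev, ← mul_assoc, huv,
        ← mul_assoc, hfe]
    · rintro _ ⟨r, rfl⟩
      refine ⟨(a*f)*((f+w)*r), ?_⟩
      show (f+w) * ((a*f)*((f+w)*r)) = a*((f+w)*r)
      rw [← mul_assoc, heu, ← mul_assoc, ← hae', mul_assoc]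
end Forward

section Backward
variable {A : Type*} [NormedRing A] [CompleteSpace A] [StarRing A]

set_option maxHeartbeats 2000000 in
lemma backward_dir (a : A) (M : ℕ) (p : A) (hp : p ^ 2 = p)
    (v : A) (hv1 : v = (1 - p) * v * (1 - p)) (hv2 : ((1 - p) * a * (1 - p)) * v = 1 - p)
    (hstar : star (star (a ^ (M + 1)) * a ^ (M + 1) * p) = star (a ^ (M + 1)) * a ^ (M + 1) * p)
    (hqn : Quasinilpotent (a * p))
    (hrange : (Set.range fun r : A => (1 - p) * r) = Set.range fun r : A => a * ((1 - p) * r)) :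
    ∃ d x : A,
      (a * d ^ 2 = d ∧ a ^ 2 * d = a * d * a ∧ Quasinilpotent (a - a * d * a)) ∧
      (x = a * x ^ 2 ∧ star (a * d) * a ^ (M + 1 + 1) * x = star (a * d) * a ^ (M + 1) ∧
        Tendsto (fun n : ℕ => ‖a ^ n - a * x * a ^ n‖ ^ ((1 : ℝ) / n)) atTop (nhds 0)) := by
  have hpp : p * p = p := by rw [← pow_two, hp]
  set e : A := 1 - p with hedef
  have hpe : p * e = 0 := by rw [hedef, mul_sub, mul_one, hpp, sub_self]
  have hep : e * p = 0 := by rw [hedef, sub_mul, one_mul, hpp, sub_self]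
  have hee : e * e = e := by nth_rewrite 2 [hedef]; rw [mul_sub, mul_one, hep, sub_zero]
  have hep1 : e + p = 1 := by rw [hedef]; abel
  have hev : e * v = v := by
    nth_rewrite 1 [hv1]; rw [← mul_assoc, ← mul_assoc, hee, ← hv1]
  have hve : v * e = v := by
    nth_rewrite 1 [hv1]; rw [mul_assoc, hee, ← hv1]
  -- range gives e(ae) = ae
  have hmem : a * (e * 1) ∈ Set.range (fun r : A => e * r) := by
    rw [hrange]; exact ⟨1, rfl⟩
  obtain ⟨r₀, hr₀⟩ := hmem
  have hae : e * (a * e) = a * e := by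
    have hr₀' : e * r₀ = a * (e * 1) := hr₀
    have h1 : a * e = e * r₀ := by rw [hr₀', mul_one]
    rw [h1, ← mul_assoc, hee]
  have hav' : (a * e) * v = e := by
    rw [← hae, ← mul_assoc e a e]; exact hv2
  have hav : a * v = e := by
    nth_rewrite 1 [← hev]; rw [← mul_assoc]; exact hav'
  have hpae : p * (a * e) = 0 := by rw [← hae, ← mul_assoc, hpe, zero_mul]
  have ha_split : a = a * e + a * p := by rw [← mul_add a e p, hep1, mul_one]
  have happ : (a * p) * p = a * p := by rw [mul_assoc, hpp]
  have hape : (a * p) * e = 0 := by rw [mul_assoc, hpe, mul_zero]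
  have hpap : p * a = p * (a * p) := by
    have h2 : p * a = p * (a * e + a * p) := by rw [← ha_split]
    rw [h2, mul_add p (a*e) (a*p), hpae, zero_add]
  set c : A := p * (a * p) with hcdef
  set b : A := e * (a * p) with hbdef
  have hcp : c * p = c := by rw [hcdef, mul_assoc, happ]
  have hbp : b * p = b := by rw [hbdef, mul_assoc, happ]
  have hce : c * e = 0 := by rw [hcdef, mul_assoc, hape, mul_zero]
  have hbe : b * e = 0 := by rw [hbdef, mul_assoc, hape, mul_zero]
  have heb : e * b = b := by rw [hbdef, ← mul_assoc, hee]
  have hcpow : ∀ k, c ^ (k + 1) = p * (a * p) ^ (k + 1) := by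
    intro k
    induction k with
    | zero => rw [pow_one, pow_one, hcdef]
    | succ k ih =>
        rw [pow_succ' c (k+1), ih, hcdef, mul_assoc,
          ← mul_assoc (a*p) p ((a*p)^(k+1)), happ, ← pow_succ']
  have hcnorm : ∀ᶠ k in atTop, ‖c ^ k‖ ≤ (‖p‖ + 1) * ‖(a * p) ^ k‖ := by
    filter_upwards [eventually_ge_atTop 1] with k hk
    obtain ⟨j, rfl⟩ : ∃ j, k = j + 1 := ⟨k - 1, by omega⟩
    rw [hcpow j]
    refine le_trans (norm_mul_le _ _) ?_
    have h0 := norm_nonneg ((a * p) ^ (j + 1))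
    nlinarith [norm_nonneg p]
  -- the series
  set t : ℕ → A := fun k => v ^ (k + 1) * (b * c ^ k) with htdef
  have hsum : Summable t := by
    have hε : (0:ℝ) < (2 * (‖v‖ + 1))⁻¹ := by positivity
    have hb2 := qn_bound hqn hε
    apply Summable.of_norm_bounded_eventually_nat
      (g := fun k => ((‖v‖ + 1) * ((‖b‖ + 1) * (‖p‖ + 1))) * (1/2 : ℝ) ^ k)
    · apply Summable.mul_left
      exact summable_geometric_of_lt_one (by norm_num) (by norm_num)
    · filter_upwards [hb2, hcnorm] with k hk1 hk2
      have n1 : ‖t k‖ ≤ ‖v‖ ^ (k+1) * (‖b‖ * ‖c ^ k‖) := by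
        refine le_trans (norm_mul_le _ _) ?_
        have n2 : ‖v ^ (k+1)‖ ≤ ‖v‖ ^ (k+1) := norm_pow_le' v (Nat.succ_pos k)
        have n3 : ‖b * c ^ k‖ ≤ ‖b‖ * ‖c ^ k‖ := norm_mul_le _ _
        exact mul_le_mul n2 n3 (norm_nonneg _) (pow_nonneg (norm_nonneg v) _)
      have n4 : ‖c ^ k‖ ≤ (‖p‖ + 1) * ((2 * (‖v‖ + 1))⁻¹) ^ k := by
        refine le_trans hk2 ?_
        exact mul_le_mul_of_nonneg_left hk1 (by positivity)
      have n5 : ‖v‖ ^ (k+1) * ((2 * (‖v‖ + 1))⁻¹) ^ k ≤ (‖v‖ + 1) * (1/2 : ℝ) ^ k := by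
        have l1 : ‖v‖ ^ (k+1) ≤ (‖v‖ + 1) ^ (k+1) :=
          pow_le_pow_left₀ (norm_nonneg v) (by linarith [norm_nonneg v]) _
        have l2 : ((‖v‖+1) * (2 * (‖v‖ + 1))⁻¹) = 1/2 := by
          have : (0:ℝ) < ‖v‖ + 1 := by positivity
          field_simp
        calc ‖v‖ ^ (k+1) * ((2 * (‖v‖ + 1))⁻¹) ^ k
            ≤ (‖v‖ + 1) ^ (k+1) * ((2 * (‖v‖ + 1))⁻¹) ^ k :=
              mul_le_mul_of_nonneg_right l1 (by positivity)
          _ = (‖v‖ + 1) * (((‖v‖+1) * (2 * (‖v‖ + 1))⁻¹) ^ k) := by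
              rw [pow_succ' (‖v‖+1) k, mul_pow]; ring
          _ = (‖v‖ + 1) * (1/2 : ℝ) ^ k := by rw [l2]
      calc ‖t k‖ ≤ ‖v‖ ^ (k+1) * (‖b‖ * ‖c ^ k‖) := n1
        _ ≤ ‖v‖ ^ (k+1) * (‖b‖ * ((‖p‖ + 1) * ((2 * (‖v‖ + 1))⁻¹) ^ k)) := by
            exact mul_le_mul_of_nonneg_left
              (mul_le_mul_of_nonneg_left n4 (norm_nonneg b))
              (pow_nonneg (norm_nonneg v) (k+1))
        _ = (‖b‖ * (‖p‖ + 1)) * (‖v‖ ^ (k+1) * ((2 * (‖v‖ + 1))⁻¹) ^ k) := by ring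
        _ ≤ (‖b‖ * (‖p‖ + 1)) * ((‖v‖ + 1) * (1/2 : ℝ) ^ k) := by
            exact mul_le_mul_of_nonneg_left n5 (by positivity)
        _ = ((1/2 : ℝ) ^ k) * (‖b‖ * ((‖p‖ + 1) * (‖v‖ + 1))) := by ring
        _ ≤ ((1/2 : ℝ) ^ k) * ((‖b‖ + 1) * ((‖p‖ + 1) * (‖v‖ + 1))) := by
            refine mul_le_mul_of_nonneg_left ?_ (by positivity)
            refine mul_le_mul_of_nonneg_right (by linarith [norm_nonneg b]) (by positivity)
        _ = ((‖v‖ + 1) * ((‖b‖ + 1) * (‖p‖ + 1))) * (1/2 : ℝ) ^ k := by ring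
  set z : A := ∑' k, t k with hzdef
  have htke : ∀ k, e * t k = t k := by
    intro k
    show e * (v ^ (k+1) * (b * c ^ k)) = v ^ (k+1) * (b * c ^ k)
    rw [← mul_assoc, tl_fvk e v hev k]
  have hez : e * z = z := by
    rw [hzdef, ← Summable.tsum_mul_left e hsum]
    exact tsum_congr htke
  have hbcke : ∀ k, (b * c ^ k) * e = 0 := by
    intro k
    cases k with
    | zero => rw [pow_zero, mul_one, hbe]
    | succ j => rw [pow_succ, ← mul_assoc, mul_assoc, hce, mul_zero]
  have hze : z * e = 0 := by
    rw [hzdef, ← Summable.tsum_mul_right e hsum]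
    rw [show (fun k => t k * e) = fun _ => (0:A) from funext fun k => by
      show (v ^ (k+1) * (b * c ^ k)) * e = 0
      rw [mul_assoc, hbcke, mul_zero]]
    exact tsum_zero
  have hbckp : ∀ k, (b * c ^ k) * p = b * c ^ k := by
    intro k
    cases k with
    | zero => rw [pow_zero, mul_one, hbp]
    | succ j => rw [pow_succ, ← mul_assoc, mul_assoc, hcp]
  have hzp : z * p = z := by
    rw [hzdef, ← Summable.tsum_mul_right p hsum]
    refine tsum_congr fun k => ?_
    show (v ^ (k+1) * (b * c ^ k)) * p = v ^ (k+1) * (b * c ^ k)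
    rw [mul_assoc, hbckp]
  have hzz : z * z = 0 := by
    nth_rewrite 2 [← hez]
    rw [← mul_assoc, hze, zero_mul]
  have hzv : z * v = 0 := by
    nth_rewrite 1 [← hev]
    rw [← mul_assoc, hze, zero_mul]
  have havk : ∀ k, (a * e) * v ^ (k + 1) = e * v ^ k := by
    intro k
    rw [pow_succ' v k, ← mul_assoc, hav']
  have huz' : True := trivial
  have huz : (a * e) * z = b + z * c := by
    have hsml : Summable (fun k => (a * e) * t k) := hsum.mul_left (a * e)
    calc (a * e) * z = ∑' k, (a * e) * t k := (hsum.tsum_mul_left (a * e)).symm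
      _ = (a * e) * t 0 + ∑' j, (a * e) * t (j + 1) := Summable.tsum_eq_zero_add hsml
      _ = b + ∑' j, (t j) * c := by
          congr 1
          · show (a * e) * (v ^ (0+1) * (b * c ^ 0)) = b
            rw [← mul_assoc, havk 0, pow_zero, pow_zero, mul_one, mul_one, heb]
          · refine tsum_congr fun j => ?_
            show (a * e) * (v ^ (j+1+1) * (b * c ^ (j+1))) = (v ^ (j+1) * (b * c ^ j)) * c
            rw [← mul_assoc, havk (j+1), tl_fvk e v hev j, pow_succ c j]
            simp only [mul_assoc]
      _ = b + z * c := by rw [Summable.tsum_mul_right c hsum, ← hzdef]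
  clear_value t z
  -- d and its properties
  set d : A := v + v * z with hddef
  have hed : e * d = d := by
    rw [hddef, mul_add, hev, ← mul_assoc, hev]
  have hzd : z * d = 0 := by
    rw [hddef, mul_add, hzv, ← mul_assoc, hzv, zero_mul, add_zero]
  have had : a * d = e + z := by
    rw [hddef, mul_add, hav, ← mul_assoc, hav, hez]
  have hdd : a * (d * d) = d := by
    have e1 : d * d = v * v + v * (v * z) := by
      have ee : (v + v * z) * (v + v * z)
          = v * v + v * (v * z) + ((v * z) * v + (v * z) * (v * z)) := by noncomm_ring
      have e2 : (v * z) * v = 0 := by rw [mul_assoc, hzv, mul_zero]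
      have e3 : (v * z) * (v * z) = 0 := by
        rw [mul_assoc, ← mul_assoc z v z, hzv, zero_mul, mul_zero]
      rw [hddef, ee, e2, e3, add_zero, add_zero]
    rw [e1, mul_add, ← mul_assoc, hav, ← mul_assoc, hav, hev, ← mul_assoc, hev, ← hddef]
  have grd1 : a * d ^ 2 = d := by rw [pow_two]; exact hdd
  have haz : a * z = b + z * c := by
    nth_rewrite 1 [← hez]; rw [← mul_assoc, huz]
  have hea : e * a = a * e + b := by
    calc e * a = e * (a * e + a * p) := by rw [← ha_split]
      _ = e * (a * e) + e * (a * p) := mul_add _ _ _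
      _ = a * e + b := by rw [hae, ← hbdef]
  have hza : z * a = z * c := by
    calc z * a = z * (p * a) := by nth_rewrite 1 [← hzp]; rw [mul_assoc]
      _ = z * c := by rw [hpap]
  have grd2 : a ^ 2 * d = a * d * a := by
    have l1 : a ^ 2 * d = a * e + (b + z * c) := by
      rw [pow_two, mul_assoc, had, mul_add, haz]
    have l2 : a * d * a = (a * e + b) + z * c := by
      rw [had, add_mul, hea, hza]
    rw [l1, l2]; abel
  have hap_split : a * p = b + c := by
    rw [hbdef, hcdef, ← add_mul, hep1, one_mul]
  have hl3 : a - a * d * a = c - z * c := by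
    have l2 : a * d * a = (a * e + b) + z * c := by rw [had, add_mul, hea, hza]
    rw [l2]
    nth_rewrite 1 [ha_split]
    rw [hap_split]; abel
  have hcz : c * z = 0 := by
    nth_rewrite 1 [← hez]; rw [← mul_assoc, hce, zero_mul]
  have hX : ∀ k, (c - z * c) ^ (k + 1) = c ^ (k + 1) - z * c ^ (k + 1) := by
    intro k
    induction k with
    | zero => rw [pow_one, pow_one]
    | succ k ih =>
        rw [pow_succ' (c - z*c) (k+1), ih]
        have ee : (c - z * c) * (c ^ (k+1) - z * c ^ (k+1))
            = c * c ^ (k+1) - c * (z * c ^ (k+1)) - ((z * c) * c ^ (k+1)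
              - (z * c) * (z * c ^ (k+1))) := by noncomm_ring
        have e2 : c * (z * c ^ (k+1)) = 0 := by rw [← mul_assoc, hcz, zero_mul]
        have e3 : (z * c) * (z * c ^ (k+1)) = 0 := by
          rw [mul_assoc, ← mul_assoc c z, hcz, zero_mul, mul_zero]
        rw [ee, e2, e3, ← pow_succ' c (k+1), mul_assoc, ← pow_succ' c (k+1)]
        abel
  have grd3 : Quasinilpotent (a - a * d * a) := by
    rw [hl3]
    apply qn_dominated hqn (C := (1 + ‖z‖) * (‖p‖ + 1)) (by positivity)
    filter_upwards [hcnorm, eventually_ge_atTop 1] with k hk1 hk2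
    obtain ⟨j, rfl⟩ : ∃ j, k = j + 1 := ⟨k - 1, by omega⟩
    rw [hX j]
    have n1 : ‖c ^ (j+1) - z * c ^ (j+1)‖ ≤ (1 + ‖z‖) * ‖c ^ (j+1)‖ := by
      refine le_trans (norm_sub_le _ _) ?_
      have := norm_mul_le z (c ^ (j+1))
      nlinarith [norm_nonneg (c ^ (j+1)), norm_nonneg z]
    have n2 : ‖c ^ (j+1)‖ ≤ (‖p‖ + 1) * ‖(a*p) ^ (j+1)‖ := hk1
    have c0 : (0:ℝ) ≤ ‖(a*p) ^ (j+1)‖ := norm_nonneg _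
    have c1 : (0:ℝ) ≤ ‖(a*p) ^ (j+1-1)‖ := norm_nonneg _
    have c2 : (0:ℝ) ≤ 1 + ‖z‖ := by positivity
    calc ‖c ^ (j+1) - z * c ^ (j+1)‖ ≤ (1 + ‖z‖) * ‖c ^ (j+1)‖ := n1
      _ ≤ (1 + ‖z‖) * ((‖p‖ + 1) * ‖(a*p) ^ (j+1)‖) := mul_le_mul_of_nonneg_left n2 c2
      _ = ((1 + ‖z‖) * (‖p‖ + 1)) * ‖(a*p) ^ (j+1)‖ := by ring
      _ ≤ ((1 + ‖z‖) * (‖p‖ + 1)) * ‖(a*p) ^ (j+1)‖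
          + ((1 + ‖z‖) * (‖p‖ + 1)) * ‖(a*p) ^ (j+1-1)‖ := by
          nlinarith [mul_nonneg (mul_nonneg c2 (by positivity : (0:ℝ) ≤ ‖p‖+1)) c1]

  -- f-world with f := a * d
  have hzf : z * (a * d) = 0 := by rw [had, mul_add, hze, hzz, add_zero]
  have hfz : (a * d) * z = z := by rw [had, add_mul, hez, hzz, add_zero]
  have hff : (a * d) * (a * d) = a * d := by
    rw [had, mul_add, add_mul, add_mul, hee, hze, hez, hzz]; abel
  have haf : a * (a * d) = (a * d) * a := by
    rw [had, mul_add, add_mul, haz, hea, hza]; abel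
  have hfd : (a * d) * d = d := by rw [had, add_mul, hed, hzd, add_zero]
  have hfv : (a * d) * (d * (a * d)) = d * (a * d) := by rw [← mul_assoc, hfd]
  have huv : (a * (a * d)) * (d * (a * d)) = a * d := by rw [mul_assoc, hfv, ← mul_assoc, hff]
  have hqn_nf : Quasinilpotent (a - a * (a * d)) := by
    rw [show a - a * (a * d) = a - a * d * a from by rw [haf]]
    exact grd3
  have hz1q : z * (1 - a * d) = z := by rw [mul_sub, mul_one, hzf, sub_zero]
  have hfg : (a * d) * ((a * (a * d)) ^ (M + 1) * z) = (a * (a * d)) ^ (M + 1) * z := by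
    rw [← mul_assoc, tl_fuk a (a * d) hff haf M]
  have hp_split : p = (1 - a * d) + z := by rw [had, hedef]; abel
  have hNsplit : a ^ (M + 1) * (1 - a * d) = (a - a * (a * d)) ^ (M + 1) := by
    rw [mul_sub, mul_one, tl_akf a (a * d) hff haf M]
    nth_rewrite 1 [tl_apow a (a * d) hff haf M]
    abel
  have hamz : a ^ (M + 1) * z = (a * (a * d)) ^ (M + 1) * z := by
    nth_rewrite 1 [← hfz]
    rw [← mul_assoc, tl_akf a (a * d) hff haf M]
  have hyg : a ^ (M + 1) * p = (a - a * (a * d)) ^ (M + 1) + (a * (a * d)) ^ (M + 1) * z := by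
    nth_rewrite 1 [hp_split]
    rw [mul_add, hNsplit, hamz]
  have h_eq : star (a ^ (M + 1) * p) * a ^ (M + 1) = star (a ^ (M + 1)) * (a ^ (M + 1) * p) := by
    rw [mul_assoc] at hstar
    rw [star_mul, star_star] at hstar
    exact hstar
  have hNV : (a - a * (a * d)) ^ (M + 1) * (d * (a * d)) ^ (M + 1) = 0 := by
    nth_rewrite 1 [← tl_fvk (a * d) (d * (a * d)) hfv M]
    rw [← mul_assoc, tl_nkf a (a * d) hff M, zero_mul]
  have hzdf : z * (d * (a * d)) = 0 := by rw [← mul_assoc, hzd, zero_mul]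
  have hzV : z * (d * (a * d)) ^ (M + 1) = 0 := by
    rw [pow_succ' (d * (a * d)) M, ← mul_assoc, hzdf, zero_mul]
  have hyV : (a ^ (M + 1) * p) * (d * (a * d)) ^ (M + 1) = 0 := by
    rw [hyg, add_mul, hNV, mul_assoc, hzV, mul_zero, add_zero]
  have hsfU : star (a * d)
      = star ((d * (a * d)) ^ (M + 1)) * star ((a * (a * d)) ^ (M + 1)) := by
    nth_rewrite 1 [← tl_uvk a (a * d) (d * (a * d)) hff hfv huv M]
    rw [star_mul]
  have hUy : star ((a * (a * d)) ^ (M + 1)) * (a ^ (M + 1) * p)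
      = star (a ^ (M + 1) * p) * a ^ (M + 1)
        - star ((a - a * (a * d)) ^ (M + 1)) * (a ^ (M + 1) * p) := by
    have hd1' : star (a ^ (M + 1))
        = star ((a * (a * d)) ^ (M + 1)) + star ((a - a * (a * d)) ^ (M + 1)) := by
      nth_rewrite 1 [tl_apow a (a * d) hff haf M]
      rw [star_add]
    have h3 := h_eq
    rw [hd1', add_mul] at h3
    exact eq_sub_of_add_eq h3.symm
  have hfy : star (a * d) * (a ^ (M + 1) * p) = 0 := by
    rw [hsfU, mul_assoc, hUy, mul_sub, ← mul_assoc, ← star_mul, hyV, star_zero, zero_mul,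
      ← mul_assoc, ← star_mul, hNV, star_zero, zero_mul, sub_zero]
  have hfN_g : star (a * d) * ((a - a * (a * d)) ^ (M + 1))
      = -(star (a * d) * ((a * (a * d)) ^ (M + 1) * z)) := by
    have h4 : star (a * d) * ((a - a * (a * d)) ^ (M + 1))
        + star (a * d) * ((a * (a * d)) ^ (M + 1) * z) = 0 := by
      rw [← mul_add, ← hyg, hfy]
    exact eq_neg_of_add_eq_zero_left h4
  set x : A := d - (d * (a * d)) ^ (M + 1 + 1) * ((a * (a * d)) ^ (M + 1) * z) with hxdef
  have hgd : ((a * (a * d)) ^ (M + 1) * z) * d = 0 := by rw [mul_assoc, hzd, mul_zero]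
  have hgdf : ((a * (a * d)) ^ (M + 1) * z) * (d * (a * d)) = 0 := by
    rw [mul_assoc, hzdf, mul_zero]
  have hgV2 : ((a * (a * d)) ^ (M + 1) * z) * ((d * (a * d)) ^ (M + 1 + 1)) = 0 := by
    rw [pow_succ' (d * (a * d)) (M + 1), ← mul_assoc, hgdf, zero_mul]
  have hh_d : ((d * (a * d)) ^ (M + 1 + 1) * ((a * (a * d)) ^ (M + 1) * z)) * d = 0 := by
    rw [mul_assoc, hgd, mul_zero]
  have hhh : ((d * (a * d)) ^ (M + 1 + 1) * ((a * (a * d)) ^ (M + 1) * z))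
      * ((d * (a * d)) ^ (M + 1 + 1) * ((a * (a * d)) ^ (M + 1) * z)) = 0 := by
    rw [mul_assoc, ← mul_assoc ((a * (a * d)) ^ (M + 1) * z), hgV2, zero_mul, mul_zero]
  have hfh : (a * d) * ((d * (a * d)) ^ (M + 1 + 1) * ((a * (a * d)) ^ (M + 1) * z))
      = (d * (a * d)) ^ (M + 1 + 1) * ((a * (a * d)) ^ (M + 1) * z) := by
    rw [← mul_assoc, tl_fvk (a * d) (d * (a * d)) hfv (M + 1)]
  have mgr1 : x = a * x ^ 2 := by
    have hxx : x * x = d * d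
        - d * ((d * (a * d)) ^ (M + 1 + 1) * ((a * (a * d)) ^ (M + 1) * z)) := by
      rw [hxdef]
      have ee : ∀ dd hh : A, (dd - hh) * (dd - hh) = dd * dd - dd * hh - (hh * dd - hh * hh) :=
        fun dd hh => by noncomm_ring
      rw [ee, hh_d, hhh, sub_zero, sub_zero]
    rw [pow_two, hxx, mul_sub, hdd, ← mul_assoc a d, hfh]
  have ham2d : a ^ (M + 1 + 1) * d = (a * (a * d)) ^ (M + 1) := by
    rw [pow_succ a (M + 1), mul_assoc, tl_akf a (a * d) hff haf M]
  have ham2h : a ^ (M + 1 + 1) * ((d * (a * d)) ^ (M + 1 + 1) * ((a * (a * d)) ^ (M + 1) * z))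
      = (a * (a * d)) ^ (M + 1) * z := by
    rw [← mul_assoc]
    nth_rewrite 1 [← tl_fvk (a * d) (d * (a * d)) hfv (M + 1)]
    rw [← mul_assoc (a ^ (M + 1 + 1)) (a * d) ((d * (a * d)) ^ (M + 1 + 1)),
      tl_akf a (a * d) hff haf (M + 1), tl_uvk a (a * d) (d * (a * d)) hff hfv huv (M + 1), hfg]
  have hax2 : a ^ (M + 1 + 1) * x
      = (a * (a * d)) ^ (M + 1) - (a * (a * d)) ^ (M + 1) * z := by
    rw [hxdef, mul_sub, ham2d, ham2h]
  have mgr2 : star (a * d) * a ^ (M + 1 + 1) * x = star (a * d) * a ^ (M + 1) := by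
    rw [mul_assoc (star (a * d)) (a ^ (M + 1 + 1)) x, hax2, mul_sub]
    have h5 : star (a * d) * ((a * (a * d)) ^ (M + 1) * z)
        = -(star (a * d) * ((a - a * (a * d)) ^ (M + 1))) := by rw [hfN_g, neg_neg]
    rw [h5, sub_neg_eq_add, ← mul_add, ← tl_apow a (a * d) hff haf M]
  have hadf : a * (d * (a * d)) = a * d := by rw [← mul_assoc, hff]
  have hah : a * ((d * (a * d)) ^ (M + 1 + 1) * ((a * (a * d)) ^ (M + 1) * z))
      = (d * (a * d)) ^ (M + 1) * ((a * (a * d)) ^ (M + 1) * z) := by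
    rw [← mul_assoc, pow_succ' (d * (a * d)) (M + 1),
      ← mul_assoc a (d * (a * d)) ((d * (a * d)) ^ (M + 1)), hadf,
      tl_fvk (a * d) (d * (a * d)) hfv M]
  have hax : a * x
      = a * d - (d * (a * d)) ^ (M + 1) * ((a * (a * d)) ^ (M + 1) * z) := by
    rw [hxdef, mul_sub, hah]
  have hWq : ((d * (a * d)) ^ (M + 1) * ((a * (a * d)) ^ (M + 1) * z)) * (1 - a * d)
      = (d * (a * d)) ^ (M + 1) * ((a * (a * d)) ^ (M + 1) * z) := by
    rw [mul_assoc, mul_assoc, hz1q]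
  have haxn : ∀ k, a ^ (k + 1) - a * x * a ^ (k + 1)
      = (a - a * (a * d)) ^ (k + 1)
        + ((d * (a * d)) ^ (M + 1) * ((a * (a * d)) ^ (M + 1) * z))
          * (a - a * (a * d)) ^ (k + 1) := by
    intro k
    have r1 : ((d * (a * d)) ^ (M + 1) * ((a * (a * d)) ^ (M + 1) * z)) * a ^ (k + 1)
        = ((d * (a * d)) ^ (M + 1) * ((a * (a * d)) ^ (M + 1) * z))
          * (a - a * (a * d)) ^ (k + 1) := by
      nth_rewrite 1 [← hWq]
      rw [mul_assoc, tl_qak a (a * d) hff haf k]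
    calc a ^ (k + 1) - a * x * a ^ (k + 1)
        = (1 - a * d) * a ^ (k + 1)
          + ((d * (a * d)) ^ (M + 1) * ((a * (a * d)) ^ (M + 1) * z)) * a ^ (k + 1) := by
          rw [hax]; noncomm_ring
      _ = (a - a * (a * d)) ^ (k + 1)
          + ((d * (a * d)) ^ (M + 1) * ((a * (a * d)) ^ (M + 1) * z))
            * (a - a * (a * d)) ^ (k + 1) := by
          rw [tl_qak a (a * d) hff haf k, r1]
  have mgr3 : Tendsto (fun n : ℕ => ‖a ^ n - a * x * a ^ n‖ ^ ((1 : ℝ) / n)) atTop (nhds 0) := by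
    apply qn_dominated hqn_nf
      (C := ‖(d * (a * d)) ^ (M + 1) * ((a * (a * d)) ^ (M + 1) * z)‖ + 1) (by positivity)
    filter_upwards [eventually_ge_atTop 1] with k hk
    obtain ⟨j, rfl⟩ : ∃ j, k = j + 1 := ⟨k - 1, by omega⟩
    rw [haxn j]
    have n1 := norm_add_le ((a - a * (a * d)) ^ (j + 1))
      (((d * (a * d)) ^ (M + 1) * ((a * (a * d)) ^ (M + 1) * z)) * (a - a * (a * d)) ^ (j + 1))
    have n2 := norm_mul_le ((d * (a * d)) ^ (M + 1) * ((a * (a * d)) ^ (M + 1) * z))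
      ((a - a * (a * d)) ^ (j + 1))
    have c0 : (0:ℝ) ≤ ‖(a - a * (a * d)) ^ (j + 1)‖ := norm_nonneg _
    have c1 : (0:ℝ) ≤ ‖(a - a * (a * d)) ^ (j + 1 - 1)‖ := norm_nonneg _
    nlinarith [mul_nonneg (by positivity :
      (0:ℝ) ≤ ‖(d * (a * d)) ^ (M + 1) * ((a * (a * d)) ^ (M + 1) * z)‖ + 1) c1]
  exact ⟨d, x, ⟨grd1, grd2, grd3⟩, mgr1, mgr2, mgr3⟩

end Backward


theorem mgrgi_iff_polar {A : Type*} [NormedRing A] [NormedAlgebra ℂ A] [CompleteSpace A]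
    [StarRing A] (a : A) (m : ℕ) (hm : 1 ≤ m) :
    (∃ d x, IsGRD a d ∧ IsMGRGI m a d x) ↔
      ∃ p : A, p ^ 2 = p ∧
        (∃ v, v = (1 - p) * v * (1 - p) ∧ ((1 - p) * a * (1 - p)) * v = 1 - p) ∧
        star (star (a ^ m) * a ^ m * p) = star (a ^ m) * a ^ m * p ∧
        Quasinilpotent (a * p) ∧
        (Set.range fun r : A => (1 - p) * r) = (Set.range fun r : A => a * ((1 - p) * r)) := by
  obtain ⟨M, rfl⟩ : ∃ M, m = M + 1 := ⟨m - 1, by omega⟩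
  constructor
  · rintro ⟨d, x, hd, hx⟩
    obtain ⟨hd1, hd2, hd3⟩ :=
      (hd : a * d ^ 2 = d ∧ a ^ 2 * d = a * d * a ∧ Quasinilpotent (a - a * d * a))
    obtain ⟨hx1, hx2, -⟩ :=
      (hx : x = a * x ^ 2 ∧ star (a * d) * a ^ (M + 1 + 1) * x = star (a * d) * a ^ (M + 1) ∧
        Filter.Tendsto (fun n : ℕ => ‖a ^ n - a * x * a ^ n‖ ^ ((1 : ℝ) / n))
          Filter.atTop (nhds 0))
    exact forward_dir a d x M hd1 hd2 hd3 hx1 hx2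
  · rintro ⟨p, hp, ⟨v, hv1, hv2⟩, hstar, hqn, hrange⟩
    obtain ⟨d, x, hgrd, hmg⟩ := backward_dir a M p hp v hv1 hv2 hstar hqn hrange
    exact ⟨d, x, hgrd, hmg⟩
end

section
/- If a ∈ A has an m-generalized right group inverse, then there exists an idempotent p ∈ A such that a + p is right invertible in A, ((a^m)^* a^m p)^* = (a^m)^* a^m p, and pa = pap is quasinilpotent. -/
open Filter

private lemma aux_tendsto_mul_pow {u : ℕ → ℝ} (hu : ∀ n, 0 ≤ u n)
    (h : Tendsto (fun n : ℕ => u n ^ ((1:ℝ)/n)) atTop (nhds 0))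
    {D : ℝ} (hD : 0 ≤ D) :
    Tendsto (fun n : ℕ => u n * D ^ n) atTop (nhds 0) := by
  have h2pos : (0:ℝ) < 2*(D+1) := by positivity
  set δ : ℝ := (2*(D+1))⁻¹ with hδdef
  have hδpos : (0:ℝ) < δ := by positivity
  have hdD : δ * D < 1 := by
    calc δ * D < δ * (2*(D+1)) := by
          apply mul_lt_mul_of_pos_left _ hδpos
          linarith
      _ = 1 := inv_mul_cancel₀ h2pos.ne'
  have hdD0 : (0:ℝ) ≤ δ * D := by positivity
  apply squeeze_zero' (g := fun n : ℕ => (δ*D)^n)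
  · exact Eventually.of_forall fun n => mul_nonneg (hu n) (pow_nonneg hD n)
  · filter_upwards [h.eventually_lt_const hδpos, eventually_ge_atTop 1] with n hn hn1
    have hne : ((n:ℝ)) ≠ 0 := by
      have : (1:ℝ) ≤ (n:ℝ) := by exact_mod_cast hn1
      linarith
    have hueq : (u n ^ ((1:ℝ)/n)) ^ n = u n := by
      rw [← Real.rpow_natCast (u n ^ ((1:ℝ)/n)) n, ← Real.rpow_mul (hu n), one_div,
        inv_mul_cancel₀ hne, Real.rpow_one]
    calc u n * D ^ n = (u n ^ ((1:ℝ)/n))^n * D^n := by rw [hueq]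
      _ = (u n ^ ((1:ℝ)/n) * D)^n := (mul_pow _ _ _).symm
      _ ≤ (δ*D)^n :=
          pow_le_pow_left₀ (mul_nonneg (Real.rpow_nonneg (hu n) _) hD)
            (mul_le_mul_of_nonneg_right hn.le hD) n
  · exact tendsto_pow_atTop_nhds_zero_of_lt_one hdD0 hdD

private lemma eq_zero_of_norm_le {A : Type*} [NormedRing A] (y : A) (v : ℕ → A)
    (hv : Tendsto (fun n : ℕ => ‖v n‖ ^ ((1:ℝ)/n)) atTop (nhds 0))
    {C D : ℝ} (hD : 0 ≤ D)
    (hb : ∀ᶠ n in atTop, ‖y‖ ≤ ‖v n‖ * D ^ n * C) : y = 0 := by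
  have h1 : Tendsto (fun n : ℕ => ‖v n‖ * D ^ n * C) atTop (nhds 0) := by
    have := (aux_tendsto_mul_pow (fun n => norm_nonneg (v n)) hv hD).mul_const C
    simpa using this
  exact norm_le_zero_iff.mp (ge_of_tendsto h1 hb)

theorem mgrgi_polar_cor {A : Type*} [NormedRing A] [NormedAlgebra ℂ A] [CompleteSpace A]
    [StarRing A] (a d x : A) (m : ℕ) (hm : 1 ≤ m)
    (hd : IsGRD a d) (hx : IsMGRGI m a d x) :
    ∃ p : A, p ^ 2 = p ∧ (∃ u, (a + p) * u = 1) ∧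
      star (star (a ^ m) * a ^ m * p) = star (a ^ m) * a ^ m * p ∧
      p * a = p * a * p ∧ Quasinilpotent (p * a) := by
  obtain ⟨hx1, hx2, hx3⟩ := hx
  obtain ⟨hd1, hd2, hd3⟩ := hd
  -- powers of x
  have xk : ∀ k : ℕ, x ^ (k+1) = a * x ^ (k+2) := by
    intro k
    induction k with
    | zero => simpa [pow_one] using hx1
    | succ k ih =>
        calc x ^ (k+2) = x ^ (k+1) * x := pow_succ x (k+1)
          _ = (a * x ^ (k+2)) * x := by rw [← ih]
          _ = a * x ^ (k+3) := by rw [mul_assoc, ← pow_succ]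
  have xn : ∀ n : ℕ, x = a ^ n * x ^ (n+1) := by
    intro n
    induction n with
    | zero => simp
    | succ n ih =>
        calc x = a ^ n * x ^ (n+1) := ih
          _ = a ^ n * (a * x ^ (n+2)) := by rw [← xk n]
          _ = a ^ (n+1) * x ^ (n+2) := by rw [← mul_assoc, ← pow_succ]
  set D : ℝ := ‖x‖ + ‖d‖ + 1 with hDdef
  have hD1 : (1:ℝ) ≤ D := by
    have h1 := norm_nonneg x; have h2 := norm_nonneg d; rw [hDdef]; linarith
  have hD0 : (0:ℝ) ≤ D := by linarith
  have hxD : ‖x‖ ≤ D := by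
    have h2 := norm_nonneg d; rw [hDdef]; linarith
  have hdD : ‖d‖ ≤ D := by
    have h1 := norm_nonneg x; rw [hDdef]; linarith
  have hxpow : ∀ n : ℕ, 1 ≤ n → ‖x ^ n‖ ≤ D ^ n := fun n hn =>
    (norm_pow_le' x hn).trans (pow_le_pow_left₀ (norm_nonneg x) hxD n)
  -- the key annihilation fact
  have P : ∀ k : ℕ, (1 - a*x) * (a ^ k * x) = 0 := by
    intro k
    apply eq_zero_of_norm_le _ (fun n => a ^ n - a * x * a ^ n) hx3 hD0 (C := D)
    filter_upwards [eventually_ge_atTop (k+1)] with m hm'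
    set n : ℕ := m - k with hns
    have hmk : k + n = m := by omega
    have hid : a ^ k * x = a ^ m * x ^ (n+1) := by
      calc a ^ k * x = a ^ k * (a ^ n * x ^ (n+1)) := by rw [← xn n]
        _ = a ^ m * x ^ (n+1) := by rw [← mul_assoc, ← pow_add, hmk]
    have hy : (1 - a*x) * (a ^ k * x) = (a ^ m - a * x * a ^ m) * x ^ (n+1) := by
      rw [hid, ← mul_assoc]
      congr 1
      rw [sub_mul, one_mul]
    rw [hy]
    calc ‖(a ^ m - a * x * a ^ m) * x ^ (n+1)‖
        ≤ ‖a ^ m - a * x * a ^ m‖ * ‖x ^ (n+1)‖ := norm_mul_le _ _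
      _ ≤ ‖a ^ m - a * x * a ^ m‖ * (D ^ m * D) := by
          apply mul_le_mul_of_nonneg_left _ (norm_nonneg _)
          calc ‖x ^ (n+1)‖ ≤ D ^ (n+1) := hxpow _ (by omega)
            _ ≤ D ^ (m+1) := pow_le_pow_right₀ hD1 (by omega)
            _ = D ^ m * D := pow_succ D m
      _ = ‖a ^ m - a * x * a ^ m‖ * D ^ m * D := (mul_assoc _ _ _).symm
  have Pe : ∀ k : ℕ, (1 - a*x) * (a ^ k * (a*x)) = 0 := by
    intro k
    have h := P (k+1)
    rw [pow_succ, mul_assoc] at h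
    exact h
  have ex : (1 - a*x) * x = 0 := by
    have h := P 0; rwa [pow_zero, one_mul] at h
  have ee : (a*x) * (a*x) = a*x := by
    have h := P 1
    rw [pow_one, sub_mul, one_mul, sub_eq_zero] at h
    exact h.symm
  -- facts about q = a*d
  have hqa : (a*d) * a = a * (a*d) := by
    calc (a*d) * a = a ^ 2 * d := hd2.symm
      _ = a * (a * d) := by rw [pow_two, mul_assoc]
  have hqq : (a*d) * (a*d) = a*d := by
    calc (a*d) * (a*d) = ((a*d) * a) * d := (mul_assoc _ _ _).symm
      _ = (a ^ 2 * d) * d := by rw [hd2]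
      _ = a * (a * d ^ 2) := by rw [pow_two, mul_assoc, mul_assoc, ← pow_two]
      _ = a * d := by rw [hd1]
  have hqan : ∀ n : ℕ, (a*d) * a ^ n = a ^ n * (a*d) := by
    intro n
    induction n with
    | zero => simp
    | succ n ih => rw [pow_succ, ← mul_assoc, ih, mul_assoc, hqa, ← mul_assoc]
  have dk : ∀ k : ℕ, d ^ (k+1) = a * d ^ (k+2) := by
    intro k
    induction k with
    | zero => simpa [pow_one] using hd1.symm
    | succ k ih =>
        calc d ^ (k+2) = d ^ (k+1) * d := pow_succ d (k+1)
          _ = (a * d ^ (k+2)) * d := by rw [← ih]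
          _ = a * d ^ (k+3) := by rw [mul_assoc, ← pow_succ]
  have dn : ∀ n : ℕ, d = a ^ n * d ^ (n+1) := by
    intro n
    induction n with
    | zero => simp
    | succ n ih =>
        calc d = a ^ n * d ^ (n+1) := ih
          _ = a ^ n * (a * d ^ (n+2)) := by rw [← dk n]
          _ = a ^ (n+1) * d ^ (n+2) := by rw [← mul_assoc, ← pow_succ]
  -- powers of the quasinilpotent part of a
  have hwq : ∀ n : ℕ, 1 ≤ n → (a - a*d*a) ^ n = a ^ n - (a*d) * a ^ n := by
    intro n hn
    induction n, hn using Nat.le_induction with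
    | base => rw [pow_one, pow_one]
    | succ n hn ih =>
        have t1 : a ^ n * ((a*d) * a) = (a*d) * (a ^ n * a) := by
          rw [← mul_assoc, ← hqan, mul_assoc]
        have t3 : ((a*d) * a ^ n) * a = (a*d) * (a ^ n * a) := mul_assoc _ _ _
        have t2 : ((a*d) * a ^ n) * ((a*d) * a) = (a*d) * (a ^ n * a) := by
          rw [mul_assoc, t1, ← mul_assoc, hqq]
        have expand : (a ^ n - (a*d) * a ^ n) * (a - (a*d) * a)
            = (a ^ n * a - a ^ n * ((a*d) * a))
              - (((a*d) * a ^ n) * a - ((a*d) * a ^ n) * ((a*d) * a)) := by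
          noncomm_ring
        have hq_a : a - a*d*a = a - (a*d)*a := by rw [mul_assoc]
        calc (a - a*d*a) ^ (n+1) = (a - a*d*a) ^ n * (a - a*d*a) := pow_succ _ n
          _ = (a ^ n - (a*d) * a ^ n) * (a - (a*d)*a) := by rw [ih, hq_a]
          _ = (a ^ n * a - (a*d) * (a ^ n * a))
              - ((a*d) * (a ^ n * a) - (a*d) * (a ^ n * a)) := by
                rw [expand, t1, t2, t3]
          _ = a ^ (n+1) - (a*d) * a ^ (n+1) := by rw [pow_succ]; abel
  -- (a*d) absorbs a*x on the left
  have hqe' : (a*d) * (a*x) = a*x := by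
    have h0 : (1 - a*d) * (a * x) = 0 := by
      apply eq_zero_of_norm_le _ (fun n => (a - a*d*a) ^ n) hd3 hD0 (C := D)
      filter_upwards [eventually_ge_atTop 1] with n hn
      obtain ⟨k, rfl⟩ : ∃ k, n = k + 1 := ⟨n - 1, by omega⟩
      have hid : a * x = a ^ (k+1) * x ^ (k+1) := by
        calc a * x = a * (a ^ k * x ^ (k+1)) := by rw [← xn k]
          _ = a ^ (k+1) * x ^ (k+1) := by rw [← mul_assoc, ← pow_succ']
      have hy : (1 - a*d) * (a * x) = (a - a*d*a) ^ (k+1) * x ^ (k+1) := by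
        rw [hid, hwq (k+1) (by omega), ← mul_assoc]
        congr 1
        rw [sub_mul, one_mul]
      rw [hy]
      calc ‖(a - a*d*a) ^ (k+1) * x ^ (k+1)‖
          ≤ ‖(a - a*d*a) ^ (k+1)‖ * ‖x ^ (k+1)‖ := norm_mul_le _ _
        _ ≤ ‖(a - a*d*a) ^ (k+1)‖ * (D ^ (k+1) * D) := by
            apply mul_le_mul_of_nonneg_left _ (norm_nonneg _)
            have := hxpow (k+1) (by omega)
            have hDD : D ^ (k+1) ≤ D ^ (k+1) * D :=
              le_mul_of_one_le_right (pow_nonneg hD0 _) hD1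
            linarith
        _ = ‖(a - a*d*a) ^ (k+1)‖ * D ^ (k+1) * D := (mul_assoc _ _ _).symm
    rw [sub_mul, one_mul, sub_eq_zero] at h0
    exact h0.symm
  -- star condition
  have hqX : (a*d) * (a ^ m * (a*x)) = a ^ m * (a*x) := by
    rw [← mul_assoc, hqan m, mul_assoc, hqe']
  have H' : star (a*d) * (a ^ m * (a*x)) = star (a*d) * a ^ m := by
    have h := hx2
    rw [mul_assoc] at h
    rw [show a ^ m * (a*x) = a ^ (m+1) * x from by rw [pow_succ, mul_assoc]]
    exact h
  have hXq : star (a ^ m * (a*x)) * star (a*d) = star (a ^ m * (a*x)) := by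
    have h := congrArg star hqX
    rwa [star_mul] at h
  have hAq : star (a ^ m) * (a*d) = star (a ^ m * (a*x)) * (a*d) := by
    have h1 : star (star (a*d) * a ^ m) = star (a ^ m) * (a*d) := by
      rw [star_mul, star_star]
    have h2 : star (star (a*d) * (a ^ m * (a*x))) = star (a ^ m * (a*x)) * (a*d) := by
      rw [star_mul, star_star]
    rw [← h1, ← h2, H']
  have claim1 : star (a*x) * (star (a ^ m) * a ^ m)
      = star (a ^ m * (a*x)) * (a ^ m * (a*x)) := by
    calc star (a*x) * (star (a ^ m) * a ^ m)
        = (star (a*x) * star (a ^ m)) * a ^ m := (mul_assoc _ _ _).symm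
      _ = star (a ^ m * (a*x)) * a ^ m := by rw [← star_mul]
      _ = (star (a ^ m * (a*x)) * star (a*d)) * a ^ m := by rw [hXq]
      _ = star (a ^ m * (a*x)) * (star (a*d) * a ^ m) := mul_assoc _ _ _
      _ = star (a ^ m * (a*x)) * (star (a*d) * (a ^ m * (a*x))) := by rw [H']
      _ = (star (a ^ m * (a*x)) * star (a*d)) * (a ^ m * (a*x)) := (mul_assoc _ _ _).symm
      _ = star (a ^ m * (a*x)) * (a ^ m * (a*x)) := by rw [hXq]
  have claim2 : (star (a ^ m) * a ^ m) * (a*x)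
      = star (a ^ m * (a*x)) * (a ^ m * (a*x)) := by
    calc (star (a ^ m) * a ^ m) * (a*x)
        = star (a ^ m) * (a ^ m * (a*x)) := mul_assoc _ _ _
      _ = star (a ^ m) * ((a*d) * (a ^ m * (a*x))) := by rw [hqX]
      _ = (star (a ^ m) * (a*d)) * (a ^ m * (a*x)) := (mul_assoc _ _ _).symm
      _ = (star (a ^ m * (a*x)) * (a*d)) * (a ^ m * (a*x)) := by rw [hAq]
      _ = star (a ^ m * (a*x)) * ((a*d) * (a ^ m * (a*x))) := mul_assoc _ _ _
      _ = star (a ^ m * (a*x)) * (a ^ m * (a*x)) := by rw [hqX]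
  have hkey : star (a*x) * (star (a ^ m) * a ^ m) = (star (a ^ m) * a ^ m) * (a*x) :=
    claim1.trans claim2.symm
  have hstar : star (star (a ^ m) * a ^ m * (1 - a*x)) = star (a ^ m) * a ^ m * (1 - a*x) := by
    have hU : star (star (a ^ m) * a ^ m) = star (a ^ m) * a ^ m := by
      rw [star_mul, star_star]
    rw [star_mul, hU, star_sub, star_one, sub_mul, one_mul, mul_sub, mul_one, hkey]
  -- quasinilpotence of p * a
  have pa_pow : ∀ n : ℕ, 1 ≤ n → ((1 - a*x) * a) ^ n = a ^ n - a * x * a ^ n := by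
    intro n hn
    induction n, hn using Nat.le_induction with
    | base => rw [pow_one, pow_one, sub_mul, one_mul]
    | succ n hn ih =>
        have h1 : a ^ n - a*x*a^n = (1 - a*x) * a ^ n := by rw [sub_mul, one_mul]
        have h3 : (1 - a*x) * a ^ n * (1 - a*x) = (1 - a*x) * a ^ n := by
          rw [mul_sub, mul_one, mul_assoc, Pe n, sub_zero]
        calc ((1 - a*x) * a) ^ (n+1) = ((1 - a*x) * a) ^ n * ((1 - a*x) * a) := pow_succ _ n
          _ = ((1 - a*x) * a ^ n) * ((1 - a*x) * a) := by rw [ih, h1]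
          _ = ((1 - a*x) * a ^ n * (1 - a*x)) * a := by
              rw [mul_assoc, mul_assoc, mul_assoc]
          _ = ((1 - a*x) * a ^ n) * a := by rw [h3]
          _ = (1 - a*x) * a ^ (n+1) := by rw [mul_assoc, ← pow_succ]
          _ = a ^ (n+1) - a * x * a ^ (n+1) := by rw [sub_mul, one_mul]
  have hznil : Quasinilpotent ((1 - a*x) * a) := by
    show Tendsto (fun n : ℕ => ‖((1 - a*x) * a) ^ n‖ ^ ((1:ℝ)/n)) atTop (nhds 0)
    apply hx3.congr'
    filter_upwards [eventually_ge_atTop 1] with n hn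
    rw [pa_pow n hn]
  -- 1 + (1-a*x)*a is a unit
  have hsr : spectralRadius ℂ ((1 - a*x) * a) = 0 := by
    have h1 := spectrum.pow_norm_pow_one_div_tendsto_nhds_spectralRadius ((1 - a*x) * a)
    have h2 : Tendsto (fun n : ℕ => ENNReal.ofReal (‖((1 - a*x)*a) ^ n‖ ^ (1/(n:ℝ))))
        atTop (nhds 0) := by
      have h3 := ENNReal.tendsto_ofReal (hznil)
      simpa using h3
    exact tendsto_nhds_unique h1 h2
  have hunit : IsUnit ((1:A) + (1 - a*x) * a) := by
    have hmem : (-1 : ℂ) ∉ spectrum ℂ ((1 - a*x) * a) := by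
      intro hmem
      have hle : (‖(-1 : ℂ)‖₊ : ENNReal) ≤ spectralRadius ℂ ((1 - a*x) * a) :=
        le_iSup₂ (α := ENNReal) (-1 : ℂ) hmem
      rw [hsr] at hle
      simp at hle
    have h := spectrum.notMem_iff.mp hmem
    rw [map_neg, map_one] at h
    have h4 : (-(1:A)) - (1 - a*x) * a = -((1:A) + (1 - a*x) * a) := by noncomm_ring
    rw [h4] at h
    simpa using h.neg
  obtain ⟨v, hv⟩ := hunit
  have hs1 : ((1:A) + (1 - a*x) * a) * (↑v⁻¹ : A) = 1 := by rw [← hv]; exact v.mul_inv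
  have hs2 : (↑v⁻¹ : A) * ((1:A) + (1 - a*x) * a) = 1 := by rw [← hv]; exact v.inv_mul
  have ze : ((1 - a*x) * a) * (a*x) = 0 := by
    have h := Pe 1; rw [pow_one] at h; rw [mul_assoc]; exact h
  have ez : (a*x) * ((1 - a*x) * a) = 0 := by
    rw [← mul_assoc, mul_sub, mul_one, ee, sub_self, zero_mul]
  have es : (a*x) * (↑v⁻¹ : A) = a*x := by
    have h1 : (a*x) * ((1:A) + (1 - a*x) * a) = a*x := by rw [mul_add, mul_one, ez, add_zero]
    calc (a*x) * (↑v⁻¹ : A) = ((a*x) * ((1:A) + (1 - a*x)*a)) * (↑v⁻¹ : A) := by rw [h1]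
      _ = (a*x) * (((1:A) + (1 - a*x)*a) * (↑v⁻¹ : A)) := mul_assoc _ _ _
      _ = a*x := by rw [hs1, mul_one]
  have se : (↑v⁻¹ : A) * (a*x) = a*x := by
    have h1 : ((1:A) + (1 - a*x) * a) * (a*x) = a*x := by rw [add_mul, one_mul, ze, add_zero]
    calc (↑v⁻¹ : A) * (a*x) = (↑v⁻¹ : A) * (((1:A) + (1 - a*x)*a) * (a*x)) := by rw [h1]
      _ = ((↑v⁻¹ : A) * ((1:A) + (1 - a*x)*a)) * (a*x) := (mul_assoc _ _ _).symm
      _ = a*x := by rw [hs2, one_mul]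
  have paq : ((1 - a*x) * a) * (1 - a*x) = (1 - a*x) * a := by
    rw [mul_sub, mul_one, ze, sub_zero]
  have pp : (1 - a*x) * (1 - a*x) = 1 - a*x := by
    rw [mul_sub, mul_one, sub_mul, one_mul, ee, sub_self, sub_zero]
  -- right inverse of a + p
  have hz1 : ((1 - a*x) * a + (1 - a*x)) * (↑v⁻¹ : A) = 1 - a*x := by
    have h : (1 - a*x) * a + (1 - a*x) = ((1:A) + (1 - a*x) * a) - a*x := by noncomm_ring
    rw [h, sub_mul, hs1, es]
  have hz2 : ((1 - a*x) * a) * (↑v⁻¹ : A) + (1 - a*x) * (↑v⁻¹ : A) = 1 - a*x := by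
    rw [← add_mul]; exact hz1
  have hA : (a + (1 - a*x)) * (x + (1 - a*x) * (↑v⁻¹ : A))
      = 1 + (a*x) * (a * ((1 - a*x) * (↑v⁻¹ : A))) := by
    have hsplit : a * ((1 - a*x) * (↑v⁻¹ : A))
        = (a*x) * (a * ((1 - a*x) * (↑v⁻¹ : A))) + ((1 - a*x) * a) * (↑v⁻¹ : A) := by
      have h1 : a * ((1 - a*x) * (↑v⁻¹ : A))
          = (a*x) * (a * ((1 - a*x) * (↑v⁻¹ : A)))
            + ((1 - a*x) * a) * ((1 - a*x) * (↑v⁻¹ : A)) := by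
        noncomm_ring
      have h2 : ((1 - a*x) * a) * ((1 - a*x) * (↑v⁻¹ : A)) = ((1 - a*x) * a) * (↑v⁻¹ : A) := by
        rw [← mul_assoc, paq]
      calc a * ((1 - a*x) * (↑v⁻¹ : A))
          = (a*x) * (a * ((1 - a*x) * (↑v⁻¹ : A)))
            + ((1 - a*x) * a) * ((1 - a*x) * (↑v⁻¹ : A)) := h1
        _ = (a*x) * (a * ((1 - a*x) * (↑v⁻¹ : A))) + ((1 - a*x) * a) * (↑v⁻¹ : A) :=
            congrArg (fun t => (a*x) * (a * ((1 - a*x) * (↑v⁻¹ : A))) + t) h2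
    have E1 : (a + (1 - a*x)) * (x + (1 - a*x) * (↑v⁻¹ : A))
        = a * x + a * ((1 - a*x) * (↑v⁻¹ : A)) + ((1 - a*x) * x
            + ((1 - a*x) * (1 - a*x)) * (↑v⁻¹ : A)) := by
      noncomm_ring
    have E2 := congrArg (fun t => a * x + t + ((1 - a*x) * x
        + ((1 - a*x) * (1 - a*x)) * (↑v⁻¹ : A))) hsplit
    have E3 := congrArg (fun t => a * x + ((a*x) * (a * ((1 - a*x) * (↑v⁻¹ : A)))
        + ((1 - a*x) * a) * (↑v⁻¹ : A)) + (t + ((1 - a*x) * (1 - a*x)) * (↑v⁻¹ : A))) ex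
    have E4 := congrArg (fun t => a * x + ((a*x) * (a * ((1 - a*x) * (↑v⁻¹ : A)))
        + ((1 - a*x) * a) * (↑v⁻¹ : A)) + ((0:A) + t * (↑v⁻¹ : A))) pp
    have E5 : a * x + ((a*x) * (a * ((1 - a*x) * (↑v⁻¹ : A)))
          + ((1 - a*x) * a) * (↑v⁻¹ : A)) + ((0:A) + (1 - a*x) * (↑v⁻¹ : A))
        = (a*x) * (a * ((1 - a*x) * (↑v⁻¹ : A)))
          + (a * x + (((1 - a*x) * a) * (↑v⁻¹ : A) + (1 - a*x) * (↑v⁻¹ : A))) := by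
      abel
    have E6 := congrArg (fun t => (a*x) * (a * ((1 - a*x) * (↑v⁻¹ : A))) + (a * x + t)) hz2
    have E7 : (a*x) * (a * ((1 - a*x) * (↑v⁻¹ : A))) + (a * x + (1 - a*x))
        = 1 + (a*x) * (a * ((1 - a*x) * (↑v⁻¹ : A))) := by
      abel
    exact ((((((E1.trans E2).trans E3).trans E4).trans E5).trans E6).trans E7)
  have h2 : ((1 - a*x) * (↑v⁻¹ : A)) * (a*x) = 0 := by
    rw [mul_assoc, se, sub_mul, one_mul, ee, sub_self]
  have gg : ((a*x) * (a * ((1 - a*x) * (↑v⁻¹ : A)))) * ((a*x) * (a * ((1 - a*x) * (↑v⁻¹ : A)))) = 0 := by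
    have hre : ((a*x) * (a * ((1 - a*x) * (↑v⁻¹ : A)))) * ((a*x) * (a * ((1 - a*x) * (↑v⁻¹ : A))))
        = (a*x) * (a * ((((1 - a*x) * (↑v⁻¹ : A)) * (a*x)) * (a * ((1 - a*x) * (↑v⁻¹ : A))))) := by
      noncomm_ring
    rw [hre, h2, zero_mul, mul_zero, mul_zero]
  refine ⟨1 - a*x, ?_, ⟨(x + (1 - a*x) * (↑v⁻¹ : A))
      * (1 - (a*x) * (a * ((1 - a*x) * (↑v⁻¹ : A)))), ?_⟩, hstar, paq.symm, hznil⟩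
  · rw [pow_two]; exact pp
  · calc (a + (1 - a*x)) * ((x + (1 - a*x) * (↑v⁻¹ : A))
          * (1 - (a*x) * (a * ((1 - a*x) * (↑v⁻¹ : A)))))
        = ((a + (1 - a*x)) * (x + (1 - a*x) * (↑v⁻¹ : A)))
          * (1 - (a*x) * (a * ((1 - a*x) * (↑v⁻¹ : A)))) := (mul_assoc _ _ _).symm
      _ = (1 + (a*x) * (a * ((1 - a*x) * (↑v⁻¹ : A))))
          * (1 - (a*x) * (a * ((1 - a*x) * (↑v⁻¹ : A)))) :=
          congrArg (fun t => t * (1 - (a*x) * (a * ((1 - a*x) * (↑v⁻¹ : A))))) hA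
      _ = 1 - ((a*x) * (a * ((1 - a*x) * (↑v⁻¹ : A))))
            * ((a*x) * (a * ((1 - a*x) * (↑v⁻¹ : A)))) := by noncomm_ring
      _ = 1 := by rw [gg, sub_zero]
end
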